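/- arXiv:1609.03119 — 7 statements merged into one kernel-verified Lean document; each statement's English description precedes it below -/
import Mathlib

section
/- Let (X,d) be a metric space. The Wijsman hyperspace (2^X, T_{W(d)}) is metrizable if and only if the metric space (X,d) is separable. -/
open Metric Filter Set Topology TopologicalSpace

/-- The Wijsman hyperspace: nonempty closed subsets of a metric space. -/
def WijsmanHyperspace (X : Type*) [MetricSpace X] : Type _ :=
  {A : Set X // A.Nonempty ∧ IsClosed A}

/-- The Wijsman topology: induced from the product topology on `X → ℝ`
by the map `A ↦ (x ↦ dist from x to A)`. -/
noncomputable instance wijsmanTopology (X : Type*) [MetricSpace X] :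
    TopologicalSpace (WijsmanHyperspace X) :=
  TopologicalSpace.induced (fun A (x : X) => Metric.infDist x A.1) Pi.topologicalSpace

namespace WijsmanAux

variable {X : Type*} [MetricSpace X]

/-- The defining map of the Wijsman topology. -/
noncomputable def e (A : WijsmanHyperspace X) : X → ℝ := fun x => Metric.infDist x A.1

lemma continuous_e : Continuous (e (X := X)) := continuous_induced_dom

lemma continuous_eval (x : X) :
    Continuous (fun A : WijsmanHyperspace X => Metric.infDist x A.1) :=
  (continuous_apply x).comp continuous_e

lemma injective_restrict {D : Set X} (hD : Dense D) :
    Function.Injective (fun (A : WijsmanHyperspace X) (d : D) => Metric.infDist (d : X) A.1) := by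
  intro A B h
  have hfun : (fun x : X => Metric.infDist x A.1) = fun x : X => Metric.infDist x B.1 := by
    refine (Continuous.ext_on hD (lipschitz_infDist_pt A.1).continuous
      (lipschitz_infDist_pt B.1).continuous ?_)
    intro x hx
    exact congrFun h ⟨x, hx⟩
  have hset : A.1 = B.1 := by
    ext x
    rw [A.2.2.mem_iff_infDist_zero A.2.1, B.2.2.mem_iff_infDist_zero B.2.1, congrFun hfun x]
  exact Subtype.ext hset

/-- If `D` is a countable dense subset, restriction of `e` to coordinates in `D`
is an embedding, hence the Wijsman hyperspace is metrizable. -/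
lemma metrizable_of_separable [SeparableSpace X] :
    MetrizableSpace (WijsmanHyperspace X) := by
  obtain ⟨D, hDc, hDd⟩ := TopologicalSpace.exists_countable_dense X
  haveI : Countable D := hDc.to_subtype
  set f : WijsmanHyperspace X → (D → ℝ) :=
    fun A d => Metric.infDist (d : X) A.1 with hf
  -- f is continuous
  have hfc : Continuous f := by
    refine continuous_pi fun d => ?_
    exact continuous_eval (d : X)
  -- each coordinate of e is continuous for the topology induced by f
  have hcoord : ∀ x : X, Continuous[TopologicalSpace.induced f inferInstance, _]
      (fun A : WijsmanHyperspace X => Metric.infDist x A.1) := by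
    intro x
    letI t' : TopologicalSpace (WijsmanHyperspace X) := TopologicalSpace.induced f inferInstance
    have hchoice : ∀ n : ℕ, ∃ y ∈ D, dist x y < 1 / (n + 1 : ℝ) := by
      intro n
      exact hDd.exists_dist_lt x (by positivity)
    choose u hu hud using hchoice
    have hcontn : ∀ n : ℕ, Continuous[t', _]
        (fun A : WijsmanHyperspace X => Metric.infDist (u n) A.1) := by
      intro n
      have : (fun A : WijsmanHyperspace X => Metric.infDist (u n) A.1)
          = (fun g : D → ℝ => g ⟨u n, hu n⟩) ∘ f := rfl
      rw [this]
      exact (continuous_apply _).comp continuous_induced_dom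
    have huf : TendstoUniformly
        (fun n (A : WijsmanHyperspace X) => Metric.infDist (u n) A.1)
        (fun A : WijsmanHyperspace X => Metric.infDist x A.1) atTop := by
      rw [Metric.tendstoUniformly_iff]
      intro ε hε
      obtain ⟨N, hN⟩ := exists_nat_gt (1 / ε)
      filter_upwards [eventually_ge_atTop N] with n hn A
      have h1 : dist (Metric.infDist x A.1) (Metric.infDist (u n) A.1) ≤ dist x (u n) := by
        simpa using (lipschitz_infDist_pt A.1).dist_le_mul x (u n)
      have h2 : (1 : ℝ) / (n + 1) < ε := by
        rw [div_lt_iff₀ (by positivity)]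
        have hεN : 1 / ε < (N : ℝ) := hN
        have : 1 / ε < (n + 1 : ℝ) := lt_of_lt_of_le hεN (by exact_mod_cast Nat.le_succ_of_le hn)
        calc (1 : ℝ) = ε * (1 / ε) := by field_simp
        _ < ε * (n + 1) := by
            exact mul_lt_mul_of_pos_left this hε
      exact lt_of_le_of_lt h1 (lt_trans (hud n) h2)
    exact huf.continuous (Filter.Eventually.of_forall hcontn).frequently
  have hconte : Continuous[TopologicalSpace.induced f inferInstance, _] (e (X := X)) := by
    letI t' : TopologicalSpace (WijsmanHyperspace X) := TopologicalSpace.induced f inferInstance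
    exact continuous_pi fun x => hcoord x
  have hind : Topology.IsInducing f := by
    constructor
    exact le_antisymm (continuous_iff_le_induced.1 hfc)
      (continuous_iff_le_induced.1 hconte)
  have hemb : Topology.IsEmbedding f := ⟨hind, injective_restrict hDd⟩
  exact hemb.metrizableSpace

lemma separable_of_metrizable [MetrizableSpace (WijsmanHyperspace X)] :
    SeparableSpace X := by
  rcases isEmpty_or_nonempty X with hX | hX
  · exact ⟨⟨∅, Set.countable_empty, fun x => (IsEmpty.false x).elim⟩⟩
  obtain ⟨x₀⟩ := id hX
  haveI : FirstCountableTopology (WijsmanHyperspace X) := inferInstance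
  set A₀ : WijsmanHyperspace X := ⟨Set.univ, Set.univ_nonempty, isClosed_univ⟩ with hA₀
  obtain ⟨b, hb⟩ := (𝓝 A₀).exists_antitone_basis
  -- for each n, extract a finite set F n of coordinates
  have hFn : ∀ n : ℕ, ∃ F : Finset X,
      ∀ B : WijsmanHyperspace X, (∀ a ∈ F, Metric.infDist a B.1 = 0) → B ∈ b n := by
    intro n
    have hbn : b n ∈ 𝓝 A₀ := hb.toHasBasis.mem_of_mem trivial
    have key : (𝓝 A₀ : Filter (WijsmanHyperspace X))
        = Filter.comap (e (X := X)) (𝓝 (e A₀)) := nhds_induced _ _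
    rw [key, Filter.mem_comap] at hbn
    obtain ⟨V, hV, hVsub⟩ := hbn
    rw [_root_.mem_nhds_iff] at hV
    obtain ⟨W, hWV, hWopen, hWmem⟩ := hV
    obtain ⟨I, u, hIu, hpi⟩ := isOpen_pi_iff.1 hWopen _ hWmem
    refine ⟨I, fun B hB => ?_⟩
    apply hVsub
    apply hWV
    apply hpi
    intro a ha
    have h0 : e A₀ a ∈ u a := (hIu a ha).2
    have : e B a = e A₀ a := by
      simp only [e, hA₀]
      rw [hB a ha, Metric.infDist_zero_of_mem (Set.mem_univ a)]
    rw [show e B a = (fun A : WijsmanHyperspace X => e A a) B from rfl] at this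
    simpa [this] using h0
  choose F hF using hFn
  set C : Set X := insert x₀ (⋃ n, (F n : Set X)) with hC
  have hCc : C.Countable := by
    refine (Set.countable_iUnion fun n => (F n).countable_toSet).insert x₀
  refine ⟨⟨C, hCc, fun x => ?_⟩⟩
  by_contra hx
  have hCne : (closure C).Nonempty := ⟨x₀, subset_closure (Set.mem_insert _ _)⟩
  set B : WijsmanHyperspace X := ⟨closure C, hCne, isClosed_closure⟩ with hB
  have hδ : 0 < Metric.infDist x (closure C) := by
    rcases (Metric.infDist_nonneg (s := closure C) (x := x)).lt_or_eq with h | h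
    · exact h
    · exact absurd ((isClosed_closure.mem_iff_infDist_zero hCne).2 h.symm) hx
  set δ : ℝ := Metric.infDist x (closure C) with hδdef
  -- the open set U
  set U : Set (WijsmanHyperspace X) :=
    (fun A : WijsmanHyperspace X => Metric.infDist x A.1) ⁻¹' (Set.Iio δ) with hU
  have hUnhds : U ∈ 𝓝 A₀ := by
    refine IsOpen.mem_nhds ((continuous_eval x).isOpen_preimage _ isOpen_Iio) ?_
    simp only [hU, Set.mem_preimage, Set.mem_Iio, hA₀]
    show Metric.infDist x (Set.univ : Set X) < δ
    rw [Metric.infDist_zero_of_mem (Set.mem_univ x)]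
    exact hδ
  obtain ⟨n, -, hn⟩ := hb.toHasBasis.mem_iff.1 hUnhds
  have hBmem : B ∈ b n := by
    refine hF n B fun a ha => ?_
    refine Metric.infDist_zero_of_mem ?_
    exact subset_closure (Set.mem_insert_of_mem _ (Set.mem_iUnion.2 ⟨n, ha⟩))
  have : Metric.infDist x B.1 < δ := hn hBmem
  simp only [hB] at this
  exact lt_irrefl _ (hδdef ▸ this)

end WijsmanAux

theorem stmt0 (X : Type*) [MetricSpace X] :
    TopologicalSpace.MetrizableSpace (WijsmanHyperspace X) ↔
      TopologicalSpace.SeparableSpace X := by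
  constructor
  · intro h
    exact WijsmanAux.separable_of_metrizable
  · intro h
    exact WijsmanAux.metrizable_of_separable
end

section
/- Let X be a set of cardinality ℵ₁ equipped with the 0–1 metric d (d(x,y) = 1 if x ≠ y and d(x,x) = 0). Then the Wijsman hyperspace (2^X, T_{W(d)}) is not a normal topological space. -/
noncomputable section

namespace WijAux

open Cardinal Metric Topology
open scoped Classical

universe u

/-- The ordinal `ω₁`, as a type (initial segment of the ordinals). -/
abbrev OT : Type (u + 1) := ↥(Set.Iio (Cardinal.aleph 1 : Cardinal.{u}).ord)

variable {X : Type u} [MetricSpace X]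

lemma infDist01 (h01 : ∀ x y : X, x ≠ y → dist x y = 1) {A : Set X} (hA : A.Nonempty)
    (x : X) : Metric.infDist x A = if x ∈ A then 0 else 1 := by
  split_ifs with h
  · exact Metric.infDist_zero_of_mem h
  · refine le_antisymm ?_ ?_
    · obtain ⟨a, ha⟩ := hA
      have hd : dist x a = 1 := h01 x a fun hxa => h (hxa ▸ ha)
      calc Metric.infDist x A ≤ dist x a := Metric.infDist_le_dist_of_mem ha
        _ = 1 := hd
    · by_contra hlt
      push_neg at hlt
      obtain ⟨y, hy, hdy⟩ := (Metric.infDist_lt_iff hA).mp hlt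
      have : dist x y = 1 := h01 x y fun hxy => h (hxy ▸ hy)
      linarith

lemma continuous_iota :
    Continuous (fun (A : WijsmanHyperspace X) (x : X) => Metric.infDist x A.1) :=
  continuous_induced_dom

lemma isOpen_memSet (h01 : ∀ x y : X, x ≠ y → dist x y = 1) (x : X) :
    IsOpen {A : WijsmanHyperspace X | x ∈ A.1} := by
  have h : {A : WijsmanHyperspace X | x ∈ A.1}
      = (fun A : WijsmanHyperspace X => Metric.infDist x A.1) ⁻¹' Set.Iio 1 := by
    ext A
    by_cases hx : x ∈ A.1 <;>
      simp [Set.mem_preimage, infDist01 h01 A.2.1 x, hx]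
  rw [h]
  exact isOpen_Iio.preimage ((continuous_apply x).comp continuous_iota)

lemma isOpen_notMemSet (h01 : ∀ x y : X, x ≠ y → dist x y = 1) (x : X) :
    IsOpen {A : WijsmanHyperspace X | x ∉ A.1} := by
  have h : {A : WijsmanHyperspace X | x ∉ A.1}
      = (fun A : WijsmanHyperspace X => Metric.infDist x A.1) ⁻¹' Set.Ioi 0 := by
    ext A
    by_cases hx : x ∈ A.1 <;>
      simp [Set.mem_preimage, infDist01 h01 A.2.1 x, hx]
  rw [h]
  exact isOpen_Ioi.preimage ((continuous_apply x).comp continuous_iota)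

/-- Basic neighborhoods in the Wijsman topology of a 0-1 metric space are determined by
membership on a finite set. -/
lemma basic_nbhd (h01 : ∀ x y : X, x ≠ y → dist x y = 1) {W : Set (WijsmanHyperspace X)}
    (hW : IsOpen W) {A : WijsmanHyperspace X} (hA : A ∈ W) :
    ∃ F : Finset X, ∀ B : WijsmanHyperspace X,
      (∀ x ∈ F, (x ∈ B.1 ↔ x ∈ A.1)) → B ∈ W := by
  have hW' : @IsOpen _ (TopologicalSpace.induced
      (fun (A : WijsmanHyperspace X) (x : X) => Metric.infDist x A.1) Pi.topologicalSpace) W := hW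
  obtain ⟨t, ht, hteq⟩ := isOpen_induced_iff.mp hW'
  subst hteq
  obtain ⟨I, u, hu, hsub⟩ := isOpen_pi_iff.mp ht _ hA
  refine ⟨I, fun B hB => ?_⟩
  apply hsub
  intro x hx
  have hBA : Metric.infDist x B.1 = Metric.infDist x A.1 := by
    rw [infDist01 h01 B.2.1, infDist01 h01 A.2.1]
    by_cases h : x ∈ A.1
    · simp [h, (hB x hx).mpr h]
    · have hb : x ∉ B.1 := fun hb => h ((hB x hx).mp hb)
      simp [h, hb]
  simpa [hBA] using (hu x hx).2

lemma allOpen (h01 : ∀ x y : X, x ≠ y → dist x y = 1) (A : Set X) : IsOpen A := by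
  rw [Metric.isOpen_iff]
  intro x hx
  refine ⟨1 / 2, by norm_num, fun y hy => ?_⟩
  rw [Metric.mem_ball] at hy
  have : y = x := by
    by_contra hne
    rw [h01 y x hne] at hy
    norm_num at hy
  exact this ▸ hx

lemma allClosed (h01 : ∀ x y : X, x ≠ y → dist x y = 1) (A : Set X) : IsClosed A := by
  have := (allOpen h01 Aᶜ).isClosed_compl
  simpa using this

variable (e : X ≃ OT.{u} ⊕ ℕ)

/-- The final segment `[α, ω₁)` in the first summand. -/
def Aset (α : OT.{u}) : Set X := {x | Sum.elim (fun β => α ≤ β) (fun _ => False) (e x)}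

/-- The final segment `[n, ω)` in the second summand. -/
def Bset (n : ℕ) : Set X := {x | Sum.elim (fun _ => False) (fun m => n ≤ m) (e x)}

variable (h01 : ∀ x y : X, x ≠ y → dist x y = 1)

def SA (α : OT.{u}) : WijsmanHyperspace X :=
  ⟨Aset e α, ⟨⟨e.symm (.inl α), by simp [Aset]⟩, allClosed h01 _⟩⟩

def SB (n : ℕ) : WijsmanHyperspace X :=
  ⟨Bset e n, ⟨⟨e.symm (.inr n), by simp [Bset]⟩, allClosed h01 _⟩⟩

def SAB (α : OT.{u}) (n : ℕ) : WijsmanHyperspace X :=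
  ⟨Aset e α ∪ Bset e n, ⟨⟨e.symm (.inl α), Or.inl (by simp [Aset])⟩, allClosed h01 _⟩⟩

lemma isClosed_CA : IsClosed (Set.range (SA e h01)) := by
  rw [← isOpen_compl_iff, isOpen_iff_forall_mem_open]
  rintro ⟨c, hcne, hccl⟩ hC
  by_cases h1 : ∃ x ∈ c, ∃ m, e x = Sum.inr m
  · obtain ⟨x, hx, m, hm⟩ := h1
    refine ⟨{A : WijsmanHyperspace X | x ∈ A.1}, ?_, isOpen_memSet h01 x, hx⟩
    rintro A hA ⟨α, rfl⟩
    simp only [Set.mem_setOf_eq, SA, Aset, hm, Sum.elim_inr] at hA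
    change Sum.elim (fun β => α ≤ β) (fun _ => False) (e x) at hA
    simp [hm] at hA
  by_cases h2 : ∃ x ∈ c, ∃ β γ, e x = Sum.inl β ∧ β ≤ γ ∧ e.symm (Sum.inl γ) ∉ c
  · obtain ⟨x, hx, β, γ, hxβ, hβγ, hγ⟩ := h2
    refine ⟨{A : WijsmanHyperspace X | x ∈ A.1} ∩
      {A : WijsmanHyperspace X | e.symm (Sum.inl γ) ∉ A.1}, ?_,
      (isOpen_memSet h01 x).inter (isOpen_notMemSet h01 _), hx, hγ⟩
    rintro A ⟨hA1, hA2⟩ ⟨α, rfl⟩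
    simp only [Set.mem_setOf_eq, SA, Aset, hxβ, Sum.elim_inl] at hA1
    change Sum.elim (fun β => α ≤ β) (fun _ => False) (e x) at hA1
    simp only [hxβ, Sum.elim_inl] at hA1
    exact hA2 (by simp [SA, Aset, le_trans hA1 hβγ])
  · exfalso
    apply hC
    push_neg at h1 h2
    obtain ⟨x₀, hx₀⟩ := hcne
    obtain ⟨β₀, hβ₀⟩ : ∃ β₀, e x₀ = Sum.inl β₀ := by
      cases he : e x₀ with
      | inl β => exact ⟨β, rfl⟩
      | inr m => exact absurd he (h1 x₀ hx₀ m)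
    set T : Set Ordinal.{u} := {o | ∃ ho : o ∈ Set.Iio (Cardinal.aleph 1).ord,
      e.symm (Sum.inl ⟨o, ho⟩) ∈ c} with hT
    have hTne : T.Nonempty := by
      refine ⟨β₀.1, β₀.2, ?_⟩
      have : e.symm (Sum.inl β₀) = x₀ := by rw [← hβ₀, Equiv.symm_apply_apply]
      simpa [this] using hx₀
    set α₀ : Ordinal.{u} := Ordinal.lt_wf.min T hTne with hα₀
    obtain ⟨hα₀lt, hα₀mem⟩ := Ordinal.lt_wf.min_mem T hTne
    set αO : OT.{u} := ⟨α₀, hα₀lt⟩ with hαO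
    have hceq : c = Aset e αO := by
      ext x
      constructor
      · intro hx
        cases he : e x with
        | inl β =>
          have hβT : β.1 ∈ T := by
            refine ⟨β.2, ?_⟩
            have : e.symm (Sum.inl β) = x := by rw [← he, Equiv.symm_apply_apply]
            simpa [this] using hx
          have : ¬ β.1 < α₀ := Ordinal.lt_wf.not_lt_min T hβT
          simp only [Aset, Set.mem_setOf_eq, he, Sum.elim_inl]
          exact Subtype.mk_le_mk.mpr (not_lt.mp this)
        | inr m => exact absurd he (h1 x hx m)
      · intro hx
        cases he : e x with
        | inl β =>
          simp only [Aset, Set.mem_setOf_eq, he, Sum.elim_inl] at hx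
          have hmem : e.symm (Sum.inl αO) ∈ c := hα₀mem
          have := h2 _ hmem αO β (by simp) hx
          rwa [← he, Equiv.symm_apply_apply] at this
        | inr m => simp [Aset, he] at hx
    exact ⟨αO, Subtype.ext hceq.symm⟩

lemma isClosed_CB : IsClosed (Set.range (SB e h01)) := by
  rw [← isOpen_compl_iff, isOpen_iff_forall_mem_open]
  rintro ⟨c, hcne, hccl⟩ hC
  by_cases h1 : ∃ x ∈ c, ∃ β, e x = Sum.inl β
  · obtain ⟨x, hx, β, hβ⟩ := h1
    refine ⟨{A : WijsmanHyperspace X | x ∈ A.1}, ?_, isOpen_memSet h01 x, hx⟩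
    rintro A hA ⟨n, rfl⟩
    simp only [Set.mem_setOf_eq, SB, Bset, hβ, Sum.elim_inl] at hA
    change Sum.elim (fun _ => False) (fun m => n ≤ m) (e x) at hA
    simp [hβ] at hA
  by_cases h2 : ∃ x ∈ c, ∃ n m, e x = Sum.inr n ∧ n ≤ m ∧ e.symm (Sum.inr m) ∉ c
  · obtain ⟨x, hx, n, m, hxn, hnm, hm⟩ := h2
    refine ⟨{A : WijsmanHyperspace X | x ∈ A.1} ∩
      {A : WijsmanHyperspace X | e.symm (Sum.inr m) ∉ A.1}, ?_,
      (isOpen_memSet h01 x).inter (isOpen_notMemSet h01 _), hx, hm⟩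
    rintro A ⟨hA1, hA2⟩ ⟨k, rfl⟩
    simp only [Set.mem_setOf_eq, SB, Bset, hxn, Sum.elim_inr] at hA1
    change Sum.elim (fun _ => False) (fun m => k ≤ m) (e x) at hA1
    simp only [hxn, Sum.elim_inr] at hA1
    exact hA2 (by simp [SB, Bset, le_trans hA1 hnm])
  · exfalso
    apply hC
    push_neg at h1 h2
    obtain ⟨x₀, hx₀⟩ := hcne
    obtain ⟨n₀, hn₀⟩ : ∃ n₀, e x₀ = Sum.inr n₀ := by
      cases he : e x₀ with
      | inl β => exact absurd he (h1 x₀ hx₀ β)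
      | inr m => exact ⟨m, rfl⟩
    set T : Set ℕ := {n | e.symm (Sum.inr n) ∈ c} with hT
    have hTne : T.Nonempty := by
      refine ⟨n₀, ?_⟩
      have : e.symm (Sum.inr n₀) = x₀ := by rw [← hn₀, Equiv.symm_apply_apply]
      simpa [T, this] using hx₀
    set m₀ : ℕ := Nat.lt_wfRel.wf.min T hTne with hm₀
    have hm₀mem : m₀ ∈ T := Nat.lt_wfRel.wf.min_mem T hTne
    have hceq : c = Bset e m₀ := by
      ext x
      constructor
      · intro hx
        cases he : e x with
        | inl β => exact absurd he (h1 x hx β)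
        | inr m =>
          have hmT : m ∈ T := by
            have : e.symm (Sum.inr m) = x := by rw [← he, Equiv.symm_apply_apply]
            simpa [T, this] using hx
          have : ¬ m < m₀ := Nat.lt_wfRel.wf.not_lt_min T hmT
          simp only [Bset, Set.mem_setOf_eq, he, Sum.elim_inr]
          omega
      · intro hx
        cases he : e x with
        | inl β => simp [Bset, he] at hx
        | inr m =>
          simp only [Bset, Set.mem_setOf_eq, he, Sum.elim_inr] at hx
          have := h2 _ hm₀mem m₀ m (by simp) hx
          rwa [← he, Equiv.symm_apply_apply] at this
    exact ⟨m₀, Subtype.ext hceq.symm⟩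

lemma disj_CACB : Disjoint (Set.range (SA e h01)) (Set.range (SB e h01)) := by
  rw [Set.disjoint_left]
  rintro A ⟨α, rfl⟩ ⟨n, hn⟩
  have h1 : e.symm (Sum.inl α) ∈ (SA e h01 α).1 := by simp [SA, Aset]
  rw [← hn] at h1
  simp [SB, Bset] at h1

include e h01 in
lemma not_normal : ¬ NormalSpace (WijsmanHyperspace X) := by
  intro hn
  obtain ⟨U, V, hU, hV, hAU, hBV, hUV⟩ :=
    hn.normal _ _ (isClosed_CA e h01) (isClosed_CB e h01) (disj_CACB e h01)
  choose F hF using fun n => basic_nbhd h01 hV (hBV (Set.mem_range_self (f := SB e h01) n))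
  have hlim : Order.IsSuccLimit ((Cardinal.aleph 1 : Cardinal.{u}).ord) :=
    Cardinal.isSuccLimit_ord (aleph0_le_aleph 1)
  set g : ℕ → Ordinal.{u} := fun n =>
    (F n).sup (fun x => Sum.elim (fun β : OT.{u} => Order.succ β.1) (fun _ => 0) (e x)) with hg
  have hglt : ∀ n, g n < (Cardinal.aleph 1 : Cardinal.{u}).ord := by
    intro n
    rw [hg]
    refine Finset.sup_lt_iff (by simpa using hlim.pos) |>.mpr ?_
    intro x hx
    cases he : e x with
    | inl β => simpa [he] using hlim.succ_lt β.2
    | inr m => simpa [he] using hlim.pos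
  have hb : (⨆ n, g n) < (Cardinal.aleph 1 : Cardinal.{u}).ord := by
    refine Cardinal.iSup_lt_ord_lift_of_isRegular Cardinal.isRegular_aleph_one ?_ hglt
    simpa using Cardinal.aleph0_lt_aleph_one
  set γ : OT.{u} := ⟨⨆ n, g n, hb⟩ with hγ
  have key1 : ∀ n, SAB e h01 γ n ∈ V := by
    intro n
    refine hF n _ ?_
    intro x hx
    cases he : e x with
    | inl β =>
      have hlt : β.1 < γ.1 := by
        have h1 : Order.succ β.1 ≤ g n := by
          have h0 := Finset.le_sup (f := fun x =>
            Sum.elim (fun β : OT.{u} => Order.succ β.1) (fun _ => 0) (e x)) hx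
          simp only [he, Sum.elim_inl] at h0
          exact h0
        have h2 : g n ≤ ⨆ n, g n := Ordinal.le_iSup g n
        exact lt_of_lt_of_le (Order.lt_succ _) (h1.trans h2)
      have : ¬ γ ≤ β := fun h => absurd (lt_of_lt_of_le hlt h) (lt_irrefl _)
      simp [SAB, SB, Aset, Bset, he, this]
    | inr m =>
      simp [SAB, SB, Aset, Bset, he]
  obtain ⟨G, hG⟩ := basic_nbhd h01 hU (hAU (Set.mem_range_self (f := SA e h01) γ))
  set N : ℕ := (G.sup (fun x => Sum.elim (fun _ => 0) Nat.succ (e x))) with hN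
  have key2 : SAB e h01 γ N ∈ U := by
    refine hG _ ?_
    intro x hx
    cases he : e x with
    | inl β =>
      simp [SAB, SA, Aset, Bset, he]
    | inr m =>
      have hm : m < N := by
        have h0 := Finset.le_sup (f := fun x => Sum.elim (fun _ => 0) Nat.succ (e x)) hx
        simp only [he, Sum.elim_inr] at h0
        rw [← hN] at h0
        exact h0
      have : ¬ N ≤ m := by omega
      simp [SAB, SA, Aset, Bset, he, this]
  exact Set.disjoint_left.mp hUV key2 (key1 N)

end WijAux

end

/-- If `X` has cardinality `ℵ₁` and carries the 0–1 metric, then the Wijsman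
hyperspace of `X` is not normal. -/
theorem stmt2 (X : Type*) [MetricSpace X]
    (hcard : Cardinal.mk X = Cardinal.aleph 1)
    (h01 : ∀ x y : X, x ≠ y → dist x y = 1) :
    ¬ NormalSpace (WijsmanHyperspace X) := by
  classical
  obtain ⟨e1⟩ : Nonempty (X ≃ ((Cardinal.aleph 1).ord.ToType ⊕ ℕ)) := by
    rw [← Cardinal.eq, hcard, Cardinal.mk_sum, Cardinal.mk_toType, Cardinal.card_ord]
    simp only [Cardinal.lift_uzero, Cardinal.mk_nat, Cardinal.lift_aleph0]
    exact (Cardinal.add_eq_left (Cardinal.aleph0_le_aleph 1)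
      Cardinal.aleph0_lt_aleph_one.le).symm
  have e : X ≃ WijAux.OT ⊕ ℕ :=
    e1.trans (Equiv.sumCongr (Ordinal.ToType.mk).toEquiv.symm (Equiv.refl ℕ))
  exact WijAux.not_normal e h01
end

section
/- Let (X,d) be a metric space such that the subspace nlc(X) is not separable. Then the Wijsman hyperspace (2^X, T_{W(d)}) contains a closed subspace homeomorphic to the product of ℵ₁-many copies of the discrete space ℕ (with the product topology), and consequently (2^X, T_{W(d)}) is not a normal space. -/
/-- The set of points of `X` having no compact neighbourhood. -/
def nlc (X : Type*) [TopologicalSpace X] : Set X :=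
  {x : X | ¬ ∃ K ∈ nhds x, IsCompact K}


namespace WijAux

open Metric Set Topology

/-- A non-separable (pseudo)metric space has, for some `ε > 0`, an uncountable
`ε`-separated subset. -/
lemma exists_separated_uncountable (M : Type*) [MetricSpace M]
    (h : ¬ TopologicalSpace.SeparableSpace M) :
    ∃ ε : ℝ, 0 < ε ∧ ∃ S : Set M,
      (S.Pairwise fun a b => ε ≤ dist a b) ∧ ¬ S.Countable := by
  by_contra hc
  push_neg at hc
  apply h
  have key : ∀ n : ℕ, ∃ S : Set M,
      (∀ x : M, ∃ y ∈ S, dist x y < 1 / (n + 1)) ∧ S.Countable := by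
    intro n
    have hpos : (0:ℝ) < 1 / (n + 1) := by positivity
    have hub : ∀ c ⊆ {S : Set M | S.Pairwise fun a b => 1 / (n + 1) ≤ dist a b},
        IsChain (· ⊆ ·) c → ∃ ub ∈ {S : Set M | S.Pairwise fun a b => 1 / (n + 1) ≤ dist a b},
          ∀ s ∈ c, s ⊆ ub := by
      intro c hcS hchain
      refine ⟨⋃₀ c, ?_, fun s hs => subset_sUnion_of_mem hs⟩
      intro a ha b hb hab
      obtain ⟨s, hs, has⟩ := ha
      obtain ⟨t, ht, hbt⟩ := hb
      rcases hchain.total hs ht with hst | hts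
      · exact hcS ht (hst has) hbt hab
      · exact hcS hs has (hts hbt) hab
    obtain ⟨m, hm⟩ := zorn_subset
        {S : Set M | S.Pairwise fun a b => 1 / (n + 1) ≤ dist a b} hub
    · refine ⟨m, ?_, hc _ hpos m hm.prop⟩
      intro x
      by_cases hx : ∃ y ∈ m, dist x y < 1 / (n + 1)
      · exact hx
      · push_neg at hx
        have hmem : insert x m ∈
            {S : Set M | S.Pairwise fun a b => 1 / (n + 1) ≤ dist a b} := by
          intro a ha b hb hab
          rcases ha with rfl | ha
          · rcases hb with rfl | hb
            · exact absurd rfl hab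
            · exact hx b hb
          · rcases hb with rfl | hb
            · rw [dist_comm]; exact hx a ha
            · exact hm.prop ha hb hab
        have : x ∈ m := by
          have := hm.eq_of_subset hmem (subset_insert x m)
          rw [this]; exact mem_insert x m
        exact ⟨x, this, by simpa using hpos⟩
  choose S hSdense hScount using key
  refine ⟨⟨⋃ n, S n, countable_iUnion hScount, ?_⟩⟩
  rw [Metric.dense_iff]
  intro x r hr
  obtain ⟨n, hn⟩ := exists_nat_one_div_lt hr
  obtain ⟨y, hy, hxy⟩ := hSdense n x
  exact ⟨y, by rw [mem_ball']; exact hxy.trans hn, mem_iUnion.2 ⟨n, hy⟩⟩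


/-- From a noncompact closed subset of a metric space, extract an injective sequence
whose range is "uniformly discrete": it meets some ball around each point of the
space only finitely often. -/
lemma exists_discrete_seq {X : Type*} [MetricSpace X] {B : Set X} (hBc : IsClosed B)
    (hB : ¬ IsCompact B) :
    ∃ y : ℕ → X, Function.Injective y ∧ (∀ n, y n ∈ B) ∧
      ∀ z : X, ∃ r > 0, {n | y n ∈ Metric.ball z r}.Finite := by
  rw [isCompact_iff_isSeqCompact] at hB
  rw [IsSeqCompact] at hB
  push_neg at hB
  obtain ⟨u, huB, hu⟩ := hB
  have locfin : ∀ z : X, ∃ r > 0, {n | u n ∈ Metric.ball z r}.Finite := by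
    intro z
    by_contra hz
    push_neg at hz
    have hinf : ∀ k : ℕ, {n | u n ∈ Metric.ball z (1 / (k + 1))}.Infinite := by
      intro k
      have : (0:ℝ) < 1 / (k + 1) := by positivity
      intro hfin
      exact hz _ this hfin
    have H : ∀ (k m : ℕ), ∃ n, m < n ∧ u n ∈ Metric.ball z (1 / (k + 1)) := by
      intro k m
      obtain ⟨n, hn, hmn⟩ := (hinf k).exists_gt m
      exact ⟨n, hmn, hn⟩
    choose F hF1 hF2 using H
    set φ : ℕ → ℕ := fun k => Nat.rec (motive := fun _ => ℕ) (F 0 0) (fun k ih => F (k + 1) ih) k with hφ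
    have hφs : StrictMono φ := by
      apply strictMono_nat_of_lt_succ
      intro k
      exact hF1 (k + 1) (φ k)
    have hφb : ∀ k : ℕ, u (φ k) ∈ Metric.ball z (1 / ((k:ℝ) + 1)) := by
      intro k
      cases k with
      | zero => exact hF2 0 0
      | succ k => exact hF2 (k + 1) (φ k)
    have htend : Filter.Tendsto (u ∘ φ) Filter.atTop (nhds z) := by
      rw [Metric.tendsto_atTop]
      intro ε hε
      obtain ⟨N, hN⟩ := exists_nat_one_div_lt hε
      refine ⟨N, fun k hk => ?_⟩
      have h1 : dist (u (φ k)) z < 1 / (k + 1) := by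
        simpa [Metric.mem_ball] using hφb k
      refine h1.trans (lt_of_le_of_lt ?_ hN)
      apply div_le_div_of_nonneg_left (by norm_num) (by positivity)
      exact_mod_cast by exact_mod_cast Nat.succ_le_succ hk
    have hzB : z ∈ B := by
      have : ∀ k, (u ∘ φ) k ∈ B := fun k => huB (φ k)
      exact hBc.mem_of_tendsto htend (Filter.Eventually.of_forall this)
    exact hu z hzB φ hφs htend
  -- the range of u is infinite
  have hrange : (Set.range u).Infinite := by
    intro hfin
    have huniv : (Set.univ : Set ℕ).Finite := by
      have : (Set.univ : Set ℕ) ⊆ ⋃ v ∈ Set.range u, {n | u n ∈ Metric.ball v ((locfin v).choose)} := by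
        intro n _
        refine Set.mem_biUnion ⟨n, rfl⟩ ?_
        have : (0:ℝ) < (locfin (u n)).choose := (locfin (u n)).choose_spec.1
        simp [Metric.mem_ball, this]
        exact this
      refine Set.Finite.subset (Set.Finite.biUnion hfin fun v _ => ?_) this
      exact (locfin v).choose_spec.2
    exact Set.infinite_univ huniv
  classical
  set e := hrange.natEmbedding with he
  refine ⟨fun n => (e n : X), ?_, ?_, ?_⟩
  · intro a b hab
    exact e.injective (Subtype.ext hab)
  · intro n
    obtain ⟨m, hm⟩ := (e n).2
    show (e n : X) ∈ B
    rw [← hm]; exact huB m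
  · intro z
    obtain ⟨r, hr, hfin⟩ := locfin z
    refine ⟨r, hr, ?_⟩
    have hsub : {n | (e n : X) ∈ Metric.ball z r} ⊆
        (fun n => (e n : X)) ⁻¹' (Set.range u ∩ Metric.ball z r) := by
      intro n hn
      exact ⟨(e n).2, hn⟩
    have hfin2 : (Set.range u ∩ Metric.ball z r).Finite := by
      have : Set.range u ∩ Metric.ball z r ⊆ u '' {n | u n ∈ Metric.ball z r} := by
        rintro x ⟨⟨n, rfl⟩, hx⟩
        exact ⟨n, hx, rfl⟩
      exact Set.Finite.subset (hfin.image u) this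
    refine Set.Finite.subset (Set.Finite.preimage ?_ hfin2) hsub
    intro a _ b _ hab
    exact e.injective (Subtype.ext hab)

/-- Any image of a subset of indices under such a sequence is closed. -/
lemma isClosed_image_of_locfin {X : Type*} [MetricSpace X] {y : ℕ → X}
    (hy : ∀ z : X, ∃ r > 0, {n | y n ∈ Metric.ball z r}.Finite) (I : Set ℕ) :
    IsClosed (y '' I) := by
  classical
  rw [← isOpen_compl_iff, Metric.isOpen_iff]
  intro z hz
  obtain ⟨r, hr, hfin⟩ := hy z
  set T := hfin.toFinset.filter (fun m => m ∈ I) with hT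
  set V : Finset ℝ := insert r (T.image fun m => dist z (y m)) with hV
  have hVne : V.Nonempty := ⟨r, Finset.mem_insert_self _ _⟩
  refine ⟨V.min' hVne, ?_, ?_⟩
  · rw [gt_iff_lt, Finset.lt_min'_iff]
    intro b hb
    rcases Finset.mem_insert.1 hb with h1 | h2
    · rw [h1]; exact hr
    · obtain ⟨m, hm, hdm⟩ := Finset.mem_image.1 h2
      rw [← hdm]
      have hmI : m ∈ I := (Finset.mem_filter.1 hm).2
      have : y m ≠ z := by
        intro hc
        exact hz ⟨m, hmI, hc⟩
      rw [dist_comm]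
      exact dist_pos.2 this
  · intro w hw
    intro hwmem
    obtain ⟨m, hmI, hmw⟩ := hwmem
    rw [← hmw] at hw
    rw [Metric.mem_ball, dist_comm] at hw
    have hrle : V.min' hVne ≤ r := Finset.min'_le _ _ (Finset.mem_insert_self _ _)
    have hmb : y m ∈ Metric.ball z r := by
      rw [Metric.mem_ball, dist_comm]
      exact hw.trans_le hrle
    have hmT : m ∈ T := by
      rw [hT, Finset.mem_filter]
      exact ⟨hfin.mem_toFinset.2 hmb, hmI⟩
    have : V.min' hVne ≤ dist z (y m) :=
      Finset.min'_le _ _ (Finset.mem_insert_of_mem (Finset.mem_image_of_mem _ hmT))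
    exact absurd hw (not_lt.2 this)

/-- each point of the sequence is uniformly isolated from the others. -/
lemma exists_isolation {X : Type*} [MetricSpace X] {y : ℕ → X}
    (hinj : Function.Injective y)
    (hy : ∀ z : X, ∃ r > 0, {n | y n ∈ Metric.ball z r}.Finite) (n : ℕ) :
    ∃ ρ > 0, ∀ m, m ≠ n → ρ ≤ dist (y n) (y m) := by
  classical
  obtain ⟨r, hr, hfin⟩ := hy (y n)
  set T := hfin.toFinset.erase n with hT
  set V : Finset ℝ := insert r (T.image fun m => dist (y n) (y m)) with hV
  have hVne : V.Nonempty := ⟨r, Finset.mem_insert_self _ _⟩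
  refine ⟨V.min' hVne, ?_, ?_⟩
  · rw [gt_iff_lt, Finset.lt_min'_iff]
    intro b hb
    rcases Finset.mem_insert.1 hb with h1 | h2
    · rw [h1]; exact hr
    · obtain ⟨m, hm, hdm⟩ := Finset.mem_image.1 h2
      rw [← hdm]
      have hmn : m ≠ n := Finset.ne_of_mem_erase hm
      exact dist_pos.2 fun hc => hmn (hinj hc.symm)
  · intro m hmn
    by_cases hmb : y m ∈ Metric.ball (y n) r
    · have hmT : m ∈ T := Finset.mem_erase.2 ⟨hmn, hfin.mem_toFinset.2 hmb⟩
      exact Finset.min'_le _ _ (Finset.mem_insert_of_mem (Finset.mem_image_of_mem _ hmT))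
    · rw [Metric.mem_ball, dist_comm, not_lt] at hmb
      exact le_trans (Finset.min'_le _ _ (Finset.mem_insert_self _ _)) hmb


/-- Stone's theorem: for uncountable `ι`, the product `ℕ^ι` is not normal. -/
theorem not_normal_pi (ι : Type*) (hι : ¬ Countable ι) : ¬ NormalSpace (ι → ℕ) := by
  classical
  intro hN
  set A : ℕ → Set (ι → ℕ) :=
    fun i => {f | ∀ n, n ≠ i → ∀ s t, f s = n → f t = n → s = t} with hA
  have hclosed : ∀ i, IsClosed (A i) := by
    intro i
    have hAeq : A i = ⋂ (n : ℕ), ⋂ (s : ι), ⋂ (t : ι),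
        {f : ι → ℕ | n ≠ i → f s = n → f t = n → s = t} := by
      ext f
      simp only [hA, Set.mem_setOf_eq, Set.mem_iInter]
      exact ⟨fun hf n s t hn => hf n hn s t, fun hf n hn s t => hf n s t hn⟩
    rw [hAeq]
    refine isClosed_iInter fun n => isClosed_iInter fun s => isClosed_iInter fun t => ?_
    by_cases hni : n = i
    · have h1 : {f : ι → ℕ | n ≠ i → f s = n → f t = n → s = t} = Set.univ := by
        ext f; simp [hni]
      rw [h1]; exact isClosed_univ
    by_cases hst : s = t
    · have h1 : {f : ι → ℕ | n ≠ i → f s = n → f t = n → s = t} = Set.univ := by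
        ext f; simp [hst]
      rw [h1]; exact isClosed_univ
    have h1 : {f : ι → ℕ | n ≠ i → f s = n → f t = n → s = t} =
        ((fun f : ι → ℕ => f s) ⁻¹' {n} ∩ (fun f : ι → ℕ => f t) ⁻¹' {n})ᶜ := by
      ext f
      simp only [Set.mem_setOf_eq, Set.mem_compl_iff, Set.mem_inter_iff, Set.mem_preimage,
        Set.mem_singleton_iff]
      constructor
      · intro hf hc
        exact hst (hf hni hc.1 hc.2)
      · intro hf _ h2 h3
        exact absurd ⟨h2, h3⟩ hf
    rw [h1]
    refine IsOpen.isClosed_compl (IsOpen.inter ?_ ?_)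
    · exact (isOpen_discrete _).preimage (continuous_apply s)
    · exact (isOpen_discrete _).preimage (continuous_apply t)
  have hdisj : Disjoint (A 1) (A 2) := by
    rw [Set.disjoint_left]
    intro f h1 h2
    have hinj : Function.Injective f := by
      intro s t hst
      by_cases hf : f s = 1
      · exact h2 1 (by norm_num) s t hf (by rw [← hst]; exact hf)
      · exact h1 (f s) hf s t rfl hst.symm
    exact hι hinj.countable
  obtain ⟨U, V, hU, hV, hAU, hAV, hUV⟩ :=
    hN.normal (A 1) (A 2) (hclosed 1) (hclosed 2) hdisj
  have box_sub : ∀ {W : Set (ι → ℕ)}, IsOpen W → ∀ {f : ι → ℕ}, f ∈ W →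
      ∃ E : Finset ι, {h : ι → ℕ | ∀ s ∈ E, h s = f s} ⊆ W := by
    intro W hW f hf
    obtain ⟨I, u, hu, hsub⟩ := isOpen_pi_iff.1 hW f hf
    refine ⟨I, fun g hg => hsub fun a ha => ?_⟩
    have ha' : a ∈ I := ha
    rw [hg a ha']
    exact (hu a ha').2
  have hDfun : ∀ fc : ι → ℕ, fc ∈ U →
      ∃ E : Finset ι, {h : ι → ℕ | ∀ s ∈ E, h s = fc s} ⊆ U := fun fc h => box_sub hU h
  set step : ℕ → (Finset ι × (ι → ℕ)) → (Finset ι × (ι → ℕ)) := fun k p =>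
    (p.1 ∪ (if h : p.2 ∈ U then (hDfun p.2 h).choose else ∅),
     fun s => if s ∈ p.1 then p.2 s else
       if s ∈ p.1 ∪ (if h : p.2 ∈ U then (hDfun p.2 h).choose else ∅)
       then 3 + Nat.pair k
         (((p.1 ∪ (if h : p.2 ∈ U then (hDfun p.2 h).choose else ∅)) \ p.1).toList.idxOf s)
       else 1) with hstep
  set seq : ℕ → (Finset ι × (ι → ℕ)) := fun k =>
    Nat.rec (motive := fun _ => Finset ι × (ι → ℕ)) (∅, fun _ => 1) (fun k ih => step k ih) k
    with hseq
  have hseqS : ∀ k, seq (k + 1) = step k (seq k) := fun k => rfl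
  -- basic step properties
  have P1 : ∀ k, (seq k).1 ⊆ (seq (k + 1)).1 := by
    intro k
    rw [hseqS k, hstep]
    exact Finset.subset_union_left
  have P2 : ∀ k, ∀ s ∈ (seq k).1, (seq (k + 1)).2 s = (seq k).2 s := by
    intro k s hs
    rw [hseqS k, hstep]
    simp only
    rw [if_pos hs]
  have P3 : ∀ k, ∀ s, s ∉ (seq (k + 1)).1 → (seq (k + 1)).2 s = 1 := by
    intro k s hs
    have hs' : s ∉ (seq k).1 := fun h => hs (P1 k h)
    rw [hseqS k, hstep] at hs ⊢
    simp only
    rw [if_neg hs', if_neg hs]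
  have P4 : ∀ k, ∀ s ∈ (seq (k + 1)).1, s ∉ (seq k).1 →
      (seq (k + 1)).2 s = 3 + Nat.pair k
        (((seq (k + 1)).1 \ (seq k).1).toList.idxOf s) := by
    intro k s hs hs'
    rw [hseqS k, hstep] at hs ⊢
    simp only
    rw [if_neg hs', if_pos hs]
  have P5 : ∀ k, {h : ι → ℕ | ∀ s ∈ (seq (k + 1)).1, h s = (seq k).2 s} ⊆ U ∨
      (seq k).2 ∉ U := by
    intro k
    by_cases hk : (seq k).2 ∈ U
    · left
      intro h hh
      refine (hDfun _ hk).choose_spec ?_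
      intro s hs
      apply hh
      rw [hseqS k, hstep]
      exact Finset.mem_union_right _ (by rw [dif_pos hk]; exact hs)
    · right; exact hk
  -- invariants
  have hInv : ∀ k, (∀ s ∈ (seq k).1, ∃ j i, j < k ∧ (seq k).2 s = 3 + Nat.pair j i)
      ∧ Set.InjOn (seq k).2 ↑(seq k).1 := by
    intro k
    induction k with
    | zero =>
      constructor
      · intro s hs; simp [hseq] at hs
      · intro s hs; simp [hseq] at hs
    | succ k ih =>
      obtain ⟨ih2, ih3⟩ := ih
      have hnewval : ∀ s ∈ (seq (k + 1)).1, ∃ j i, j < k + 1 ∧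
          (seq (k + 1)).2 s = 3 + Nat.pair j i := by
        intro s hs
        by_cases hsk : s ∈ (seq k).1
        · obtain ⟨j, i, hj, hv⟩ := ih2 s hsk
          exact ⟨j, i, hj.trans (Nat.lt_succ_self k), by rw [P2 k s hsk]; exact hv⟩
        · exact ⟨k, _, Nat.lt_succ_self k, P4 k s hs hsk⟩
      refine ⟨hnewval, ?_⟩
      intro s hs t ht hval
      have hs : s ∈ (seq (k + 1)).1 := hs
      have ht : t ∈ (seq (k + 1)).1 := ht
      by_cases hsk : s ∈ (seq k).1 <;> by_cases htk : t ∈ (seq k).1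
      · refine ih3 hsk htk ?_
        rw [← P2 k s hsk, ← P2 k t htk]; exact hval
      · obtain ⟨j, i, hj, hv⟩ := ih2 s hsk
        rw [P2 k s hsk, hv, P4 k t ht htk] at hval
        have hpe : Nat.pair j i =
            Nat.pair k (((seq (k + 1)).1 \ (seq k).1).toList.idxOf t) := by omega
        have := (Nat.pair_eq_pair.1 hpe).1
        omega
      · obtain ⟨j, i, hj, hv⟩ := ih2 t htk
        rw [P2 k t htk, hv, P4 k s hs hsk] at hval
        have hpe : Nat.pair k (((seq (k + 1)).1 \ (seq k).1).toList.idxOf s) =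
            Nat.pair j i := by omega
        have := (Nat.pair_eq_pair.1 hpe).1
        omega
      · rw [P4 k s hs hsk, P4 k t ht htk] at hval
        have hidx : ((seq (k + 1)).1 \ (seq k).1).toList.idxOf s =
            ((seq (k + 1)).1 \ (seq k).1).toList.idxOf t := by
          have hpe : Nat.pair k (((seq (k + 1)).1 \ (seq k).1).toList.idxOf s) =
              Nat.pair k (((seq (k + 1)).1 \ (seq k).1).toList.idxOf t) := by omega
          exact (Nat.pair_eq_pair.1 hpe).2
        have hsl : s ∈ ((seq (k + 1)).1 \ (seq k).1).toList :=
          Finset.mem_toList.2 (Finset.mem_sdiff.2 ⟨hs, hsk⟩)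
        have htl : t ∈ ((seq (k + 1)).1 \ (seq k).1).toList :=
          Finset.mem_toList.2 (Finset.mem_sdiff.2 ⟨ht, htk⟩)
        exact (List.idxOf_inj hsl).1 hidx
  have hval3 : ∀ k, ∀ s ∈ (seq k).1, 3 ≤ (seq k).2 s := by
    intro k s hs
    obtain ⟨j, i, _, hv⟩ := (hInv k).1 s hs
    omega
  have hoff : ∀ k, ∀ s, s ∉ (seq k).1 → (seq k).2 s = 1 := by
    intro k
    cases k with
    | zero => intro s _; rfl
    | succ k => exact P3 k
  have hA1 : ∀ k, (seq k).2 ∈ A 1 := by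
    intro k n hn s t hs ht
    have hsE : s ∈ (seq k).1 := by
      by_contra hc
      rw [hoff k s hc] at hs
      exact hn hs.symm
    have htE : t ∈ (seq k).1 := by
      by_contra hc
      rw [hoff k t hc] at ht
      exact hn ht.symm
    exact (hInv k).2 hsE htE (hs.trans ht.symm)
  have hbox : ∀ k, {h : ι → ℕ | ∀ s ∈ (seq (k + 1)).1, h s = (seq k).2 s} ⊆ U := by
    intro k
    rcases P5 k with h | h
    · exact h
    · exact absurd (hAU (hA1 k)) h
  have hE_le : ∀ a b, a ≤ b → (seq a).1 ⊆ (seq b).1 := by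
    intro a b hab
    induction b, hab using Nat.le_induction with
    | base => exact subset_refl _
    | succ b hab ih => exact ih.trans (P1 b)
  have hf_stab : ∀ a b, a ≤ b → ∀ s ∈ (seq a).1, (seq b).2 s = (seq a).2 s := by
    intro a b hab
    induction b, hab using Nat.le_induction with
    | base => intro s _; rfl
    | succ b hab ih =>
      intro s hs
      rw [P2 b s (hE_le a b hab hs)]
      exact ih s hs
  set g : ι → ℕ := fun s => if h : ∃ k, s ∈ (seq k).1 then (seq (Nat.find h)).2 s else 2
    with hg
  have hg_stab : ∀ k, ∀ s ∈ (seq k).1, g s = (seq k).2 s := by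
    intro k s hs
    have hex : ∃ k', s ∈ (seq k').1 := ⟨k, hs⟩
    rw [hg]
    simp only
    rw [dif_pos hex]
    exact (hf_stab (Nat.find hex) k (Nat.find_min' hex hs) s (Nat.find_spec hex)).symm
  have hg2 : g ∈ A 2 := by
    intro n hn s t hs ht
    have hsex : ∃ k, s ∈ (seq k).1 := by
      by_contra hc
      rw [hg] at hs
      simp only at hs
      rw [dif_neg hc] at hs
      exact hn hs.symm
    have htex : ∃ k, t ∈ (seq k).1 := by
      by_contra hc
      rw [hg] at ht
      simp only at ht
      rw [dif_neg hc] at ht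
      exact hn ht.symm
    obtain ⟨a, ha⟩ := hsex
    obtain ⟨b, hb⟩ := htex
    have hsk : s ∈ (seq (max a b)).1 := hE_le a _ (le_max_left a b) ha
    have htk : t ∈ (seq (max a b)).1 := hE_le b _ (le_max_right a b) hb
    refine (hInv (max a b)).2 hsk htk ?_
    rw [← hg_stab _ s hsk, ← hg_stab _ t htk]
    exact hs.trans ht.symm
  have hgV : g ∈ V := hAV hg2
  obtain ⟨D', hD'⟩ := box_sub hV hgV
  set kst : ℕ := D'.sup (fun s => if h : ∃ k, s ∈ (seq k).1 then Nat.find h else 0) with hkst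
  have hkmem : ∀ s ∈ D', ∀ h : ∃ k, s ∈ (seq k).1, s ∈ (seq kst).1 := by
    intro s hs h
    have h1 : Nat.find h ≤ kst := by
      rw [hkst]
      refine le_trans ?_ (Finset.le_sup hs)
      rw [dif_pos h]
    exact hE_le _ _ h1 (Nat.find_spec h)
  set hh : ι → ℕ := fun s => if s ∈ (seq (kst + 1)).1 then (seq kst).2 s
    else if s ∈ D' then g s else 1 with hhh
  have hhU : hh ∈ U := by
    apply hbox kst
    intro s hs
    rw [hhh]
    simp only
    rw [if_pos hs]
  have hhV : hh ∈ V := by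
    apply hD'
    intro s hs
    rw [hhh]
    simp only
    by_cases hsE : s ∈ (seq (kst + 1)).1
    · rw [if_pos hsE]
      have hex : ∃ k, s ∈ (seq k).1 := ⟨kst + 1, hsE⟩
      have hsk : s ∈ (seq kst).1 := hkmem s hs hex
      rw [hg_stab kst s hsk]
    · rw [if_neg hsE, if_pos hs]
  exact Set.disjoint_left.1 hUV hhU hhV


/-- The main construction: an `ε`-separated family of points of `nlc X` indexed by `ι`
yields a closed embedding of `ℕ^ι` into the Wijsman hyperspace. -/
theorem main_construction {X : Type*} [MetricSpace X] {ι : Type*} [Nonempty ι] (ε : ℝ)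
    (hε : 0 < ε) (c : ι → X) (hsep : ∀ α β, α ≠ β → ε ≤ dist (c α) (c β))
    (hnlc : ∀ α, c α ∈ nlc X) :
    ∃ f : (ι → ℕ) → WijsmanHyperspace X, Topology.IsClosedEmbedding f := by
  classical
  have hseq : ∀ α : ι, ∃ y : ℕ → X, Function.Injective y ∧
      (∀ n, y n ∈ closedBall (c α) (ε / 32)) ∧
      ∀ z : X, ∃ r > 0, {n | y n ∈ ball z r}.Finite := by
    intro α
    have hB : ¬ IsCompact (closedBall (c α) (ε / 32)) := by
      intro hcpt
      exact hnlc α ⟨_, closedBall_mem_nhds _ (by positivity), hcpt⟩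
    exact exists_discrete_seq isClosed_closedBall hB
  choose y hyinj hymem hyfin using hseq
  choose ρ hρpos hρ using fun α n => exists_isolation (hyinj α) (hyfin α) n
  have hyc : ∀ α n, dist (y α n) (c α) ≤ ε / 32 := fun α n => mem_closedBall.1 (hymem α n)
  set Yset : Set X := {z | ∀ α, ε / 8 ≤ dist z (c α)} with hYdef
  set T : ι → ℕ → Set X := fun α n => y α '' Set.Ici n with hTdef
  set Aset : (ι → ℕ) → Set X := fun g => Yset ∪ ⋃ α, T α (g α) with hAdef
  have hmemT : ∀ α n m, n ≤ m → y α m ∈ T α n := by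
    intro α n m hnm
    exact ⟨m, hnm, rfl⟩
  have hmemA : ∀ g α, y α (g α) ∈ Aset g :=
    fun g α => Or.inr (mem_iUnion.2 ⟨α, hmemT α (g α) (g α) le_rfl⟩)
  -- elementary distance estimates
  have hfar : ∀ (z : X) (α₀ : ι), dist z (c α₀) < ε / 8 →
      ∀ β, β ≠ α₀ → ∀ m, 27 * ε / 32 ≤ dist z (y β m) := by
    intro z α₀ hz β hβ m
    have h1 : dist (c β) (c α₀) ≤ dist (c β) (y β m) + dist (y β m) z + dist z (c α₀) :=
      dist_triangle4 _ _ _ _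
    have h2 : ε ≤ dist (c β) (c α₀) := hsep β α₀ hβ
    have h3 : dist (c β) (y β m) ≤ ε / 32 := by rw [dist_comm]; exact hyc β m
    have h4 : dist (y β m) z = dist z (y β m) := dist_comm _ _
    linarith
  have hYdist : ∀ w, w ∈ Yset → ∀ α n, 3 * ε / 32 ≤ dist (y α n) w := by
    intro w hw α n
    have h1 : ε / 8 ≤ dist w (c α) := hw α
    have h2 : dist w (c α) ≤ dist w (y α n) + dist (y α n) (c α) := dist_triangle _ _ _
    have h3 : dist (y α n) (c α) ≤ ε / 32 := hyc α n
    have h4 : dist w (y α n) = dist (y α n) w := dist_comm _ _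
    linarith
  have hyy : ∀ α β, β ≠ α → ∀ n m, 15 * ε / 16 ≤ dist (y α n) (y β m) := by
    intro α β hβ n m
    have h1 : dist (c α) (c β) ≤ dist (c α) (y α n) + dist (y α n) (y β m) + dist (y β m) (c β) :=
      dist_triangle4 _ _ _ _
    have h2 : ε ≤ dist (c α) (c β) := hsep α β fun h => hβ h.symm
    have h3 : dist (c α) (y α n) ≤ ε / 32 := by rw [dist_comm]; exact hyc α n
    have h4 : dist (y β m) (c β) ≤ ε / 32 := hyc β m
    linarith
  have hAne : ∀ g, (Aset g).Nonempty := by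
    intro g
    obtain ⟨α⟩ := ‹Nonempty ι›
    exact ⟨y α (g α), hmemA g α⟩
  have hTclosed : ∀ α n, IsClosed (T α n) := fun α n => isClosed_image_of_locfin (hyfin α) _
  have hYclosed : IsClosed Yset := by
    have h1 : Yset = ⋂ α, (fun z => dist z (c α)) ⁻¹' Set.Ici (ε / 8) := by
      ext z; simp [hYdef, Set.mem_iInter]
    rw [h1]
    exact isClosed_iInter fun α =>
      IsClosed.preimage (Continuous.dist continuous_id continuous_const) isClosed_Ici
  have hAclosed : ∀ g, IsClosed (Aset g) := by
    intro g
    rw [← isOpen_compl_iff, Metric.isOpen_iff]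
    intro z hz
    have hzY : z ∉ Yset := fun h => hz (Or.inl h)
    have hzα : ∃ α₀, dist z (c α₀) < ε / 8 := by
      by_contra hcon
      push_neg at hcon
      exact hzY fun α => hcon α
    obtain ⟨α₀, hα₀⟩ := hzα
    have hzT : z ∉ T α₀ (g α₀) := fun h => hz (Or.inr (mem_iUnion.2 ⟨α₀, h⟩))
    obtain ⟨rY, hrY, hbY⟩ := Metric.isOpen_iff.1 hYclosed.isOpen_compl z hzY
    obtain ⟨rT, hrT, hbT⟩ := Metric.isOpen_iff.1 (hTclosed α₀ (g α₀)).isOpen_compl z hzT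
    refine ⟨min (min rY rT) (ε / 2), by positivity, ?_⟩
    intro w hw
    rw [mem_ball] at hw
    intro hwA
    rcases hwA with hwY | hwT
    · refine hbY (mem_ball.2 (lt_of_lt_of_le hw ?_)) hwY
      exact le_trans (min_le_left _ _) (min_le_left _ _)
    · obtain ⟨β, hβ⟩ := mem_iUnion.1 hwT
      by_cases hβα : β = α₀
      · subst hβα
        refine hbT (mem_ball.2 (lt_of_lt_of_le hw ?_)) hβ
        exact le_trans (min_le_left _ _) (min_le_right _ _)
      · obtain ⟨m, _, rfl⟩ := hβ
        have h1 := hfar z α₀ hα₀ β hβα m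
        rw [dist_comm] at hw
        have h2 : dist z (y β m) < ε / 2 := lt_of_lt_of_le hw (min_le_right _ _)
        linarith
  -- localization of the distance functional
  have hC1 : ∀ (g : ι → ℕ) (z : X) (α₀ : ι), dist z (c α₀) < ε / 8 →
      infDist z (Aset g) = infDist z (Yset ∪ T α₀ (g α₀)) := by
    intro g z α₀ hz
    have hsub : Yset ∪ T α₀ (g α₀) ⊆ Aset g :=
      Set.union_subset_union_right _ (Set.subset_iUnion (fun α => T α (g α)) α₀)
    have hne : (Yset ∪ T α₀ (g α₀)).Nonempty :=
      ⟨y α₀ (g α₀), Or.inr (hmemT α₀ (g α₀) (g α₀) le_rfl)⟩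
    refine le_antisymm (infDist_le_infDist_of_subset hsub hne) ?_
    refine le_of_not_gt fun hlt => ?_
    obtain ⟨a, haA, hda⟩ := (infDist_lt_iff (hAne g)).1 hlt
    have hub : infDist z (Yset ∪ T α₀ (g α₀)) ≤ 5 * ε / 32 := by
      refine le_trans (infDist_le_dist_of_mem (Or.inr (hmemT α₀ (g α₀) (g α₀) le_rfl))) ?_
      have h1 : dist z (y α₀ (g α₀)) ≤ dist z (c α₀) + dist (c α₀) (y α₀ (g α₀)) :=
        dist_triangle _ _ _
      have h2 : dist (c α₀) (y α₀ (g α₀)) ≤ ε / 32 := by rw [dist_comm]; exact hyc α₀ _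
      linarith
    rcases haA with haY | haT
    · exact absurd hda (not_lt.2 (infDist_le_dist_of_mem (Or.inl haY)))
    · obtain ⟨β, hβ⟩ := mem_iUnion.1 haT
      by_cases hβα : β = α₀
      · subst hβα
        exact absurd hda (not_lt.2 (infDist_le_dist_of_mem (Or.inr hβ)))
      · obtain ⟨m, _, rfl⟩ := hβ
        have h1 := hfar z α₀ hz β hβα m
        linarith
  -- reading off the coordinates
  have hR1 : ∀ (g : ι → ℕ) α n, g α ≤ n → infDist (y α n) (Aset g) = 0 := by
    intro g α n hgn
    exact infDist_zero_of_mem (Or.inr (mem_iUnion.2 ⟨α, hmemT α (g α) n hgn⟩))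
  have hcpos : ∀ α n, 0 < min (3 * ε / 32) (ρ α n) := fun α n =>
    lt_min (by positivity) (hρpos α n)
  have hR2 : ∀ (g : ι → ℕ) α n, n < g α →
      min (3 * ε / 32) (ρ α n) ≤ infDist (y α n) (Aset g) := by
    intro g α n hgn
    refine le_of_not_gt fun hlt => ?_
    obtain ⟨a, haA, hda⟩ := (infDist_lt_iff (hAne g)).1 hlt
    rcases haA with haY | haT
    · have h1 := hYdist a haY α n
      have h2 : min (3 * ε / 32) (ρ α n) ≤ 3 * ε / 32 := min_le_left _ _
      linarith
    · obtain ⟨β, hβ⟩ := mem_iUnion.1 haT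
      obtain ⟨m, hm, rfl⟩ := hβ
      by_cases hβα : β = α
      · subst hβα
        have hmge : g β ≤ m := hm
        have hmn : m ≠ n := by omega
        have h1 := hρ β n m hmn
        have h2 : min (3 * ε / 32) (ρ β n) ≤ ρ β n := min_le_right _ _
        linarith
      · have h1 := hyy α β hβα n m
        have h2 : min (3 * ε / 32) (ρ α n) ≤ 3 * ε / 32 := min_le_left _ _
        linarith
  -- the map
  set f : (ι → ℕ) → WijsmanHyperspace X := fun g => ⟨Aset g, hAne g, hAclosed g⟩ with hfdef
  have hf1 : ∀ g, (f g).1 = Aset g := fun _ => rfl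
  -- continuity of the distance functionals on the hyperspace
  have htoPi : Continuous (fun A : WijsmanHyperspace X => (fun x : X => infDist x A.1)) :=
    continuous_induced_dom
  have hfunc : ∀ z : X, Continuous (fun A : WijsmanHyperspace X => infDist z A.1) :=
    fun z => (continuous_apply z).comp htoPi
  -- continuity of f
  have hcont : Continuous f := by
    refine continuous_induced_rng.2 ?_
    rw [continuous_pi_iff]
    intro z
    by_cases hz : ∃ α₀, dist z (c α₀) < ε / 8
    · obtain ⟨α₀, hα₀⟩ := hz
      have heq : (fun g : ι → ℕ => infDist z (Aset g)) =
          (fun n : ℕ => infDist z (Yset ∪ T α₀ n)) ∘ (fun g : ι → ℕ => g α₀) :=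
        funext fun g => hC1 g z α₀ hα₀
      show Continuous fun g : ι → ℕ => infDist z (Aset g)
      rw [heq]
      exact continuous_of_discreteTopology.comp (continuous_apply α₀)
    · push_neg at hz
      have hzY : z ∈ Yset := fun α => hz α
      have heq : (fun g : ι → ℕ => infDist z (Aset g)) = fun _ => 0 :=
        funext fun g => infDist_zero_of_mem (Or.inl hzY)
      show Continuous fun g : ι → ℕ => infDist z (Aset g)
      rw [heq]
      exact continuous_const
  -- injectivity
  have hinj : Function.Injective f := by
    intro g g' hgg'
    funext α
    by_contra hne
    rcases Nat.lt_or_ge (g α) (g' α) with hlt | hge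
    · have hmem1 : y α (g α) ∈ Aset g := hmemA g α
      have hmem2 : y α (g α) ∉ Aset g' := by
        intro hmem2
        rcases hmem2 with hY | hT
        · have h1 := hYdist _ hY α (g α)
          simp at h1
          linarith
        · obtain ⟨β, hβ⟩ := mem_iUnion.1 hT
          obtain ⟨m, hm, hym⟩ := hβ
          by_cases hβα : β = α
          · rw [hβα] at hym hm
            have hmeq : m = g α := hyinj α hym
            have hle : g' α ≤ m := hm
            omega
          · have h1 := hyy α β hβα (g α) m
            rw [← hym] at h1
            simp at h1
            linarith
      have : Aset g = Aset g' := congrArg Subtype.val hgg'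
      rw [this] at hmem1
      exact hmem2 hmem1
    · rcases Nat.lt_or_ge (g' α) (g α) with hlt' | hge'
      · have hmem1 : y α (g' α) ∈ Aset g' := hmemA g' α
        have hmem2 : y α (g' α) ∉ Aset g := by
          intro hmem2
          rcases hmem2 with hY | hT
          · have h1 := hYdist _ hY α (g' α)
            simp at h1
            linarith
          · obtain ⟨β, hβ⟩ := mem_iUnion.1 hT
            obtain ⟨m, hm, hym⟩ := hβ
            by_cases hβα : β = α
            · rw [hβα] at hym hm
              have hmeq : m = g' α := hyinj α hym
              have hle : g α ≤ m := hm
              omega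
            · have h1 := hyy α β hβα (g' α) m
              rw [← hym] at h1
              simp at h1
              linarith
        have : Aset g = Aset g' := congrArg Subtype.val hgg'
        rw [← this] at hmem1
        exact hmem2 hmem1
      · omega
  -- inducing
  have hind : Topology.IsInducing f := by
    constructor
    refine le_antisymm (continuous_iff_le_induced.1 hcont) ?_
    refine le_iInf fun α => ?_
    refine continuous_iff_le_induced.1 ?_
    letI tI : TopologicalSpace (ι → ℕ) := TopologicalSpace.induced f (wijsmanTopology X)
    refine continuous_discrete_rng.2 fun n => ?_
    rw [isOpen_induced_iff]
    cases n with
    | zero =>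
      refine ⟨{B : WijsmanHyperspace X | infDist (y α 0) B.1 < min (3 * ε / 32) (ρ α 0)},
        IsOpen.preimage (hfunc (y α 0)) isOpen_Iio, ?_⟩
      ext g
      simp only [Set.mem_preimage, Set.mem_setOf_eq, Set.mem_singleton_iff]
      constructor
      · intro hlt
        by_contra hne
        have : 0 < g α := Nat.pos_of_ne_zero fun h => hne h
        exact absurd (hR2 g α 0 this) (not_le.2 hlt)
      · intro h0
        rw [hR1 g α 0 (le_of_eq h0)]
        exact hcpos α 0
    | succ n =>
      refine ⟨{B : WijsmanHyperspace X |
          infDist (y α (n + 1)) B.1 < min (3 * ε / 32) (ρ α (n + 1))} ∩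
          {B : WijsmanHyperspace X | 0 < infDist (y α n) B.1},
        IsOpen.inter (IsOpen.preimage (hfunc (y α (n + 1))) isOpen_Iio)
          (IsOpen.preimage (hfunc (y α n)) isOpen_Ioi), ?_⟩
      ext g
      simp only [Set.mem_preimage, Set.mem_inter_iff, Set.mem_setOf_eq, Set.mem_singleton_iff]
      constructor
      · rintro ⟨h1, h2⟩
        have hle : g α ≤ n + 1 := by
          by_contra hgt
          exact absurd (hR2 g α (n + 1) (by omega)) (not_le.2 h1)
        have hgt : ¬ g α ≤ n := by
          intro hle'
          rw [hR1 g α n hle'] at h2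
          exact lt_irrefl 0 h2
        omega
      · intro hgn
        constructor
        · rw [hR1 g α (n + 1) (le_of_eq hgn)]
          exact hcpos α (n + 1)
        · have := hR2 g α n (by omega)
          exact lt_of_lt_of_le (hcpos α n) this
  -- closed range
  have hclosedrange : IsClosed (Set.range f) := by
    refine isClosed_of_closure_subset ?_
    intro A hA
    have key : ∀ t : Finset X, ∀ δ : ℝ, 0 < δ →
        ∃ g : ι → ℕ, ∀ z ∈ t, |infDist z A.1 - infDist z (Aset g)| < δ := by
      intro t δ hδ
      have hopen : IsOpen {B : WijsmanHyperspace X |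
          ∀ z ∈ t, |infDist z B.1 - infDist z A.1| < δ} := by
        have heq : {B : WijsmanHyperspace X | ∀ z ∈ t, |infDist z B.1 - infDist z A.1| < δ} =
            ⋂ z ∈ t, (fun B : WijsmanHyperspace X => infDist z B.1) ⁻¹'
              (Metric.ball (infDist z A.1) δ) := by
          ext B
          simp [Real.dist_eq]
        rw [heq]
        exact isOpen_biInter_finset fun z _ => IsOpen.preimage (hfunc z) isOpen_ball
      have hmem : A ∈ {B : WijsmanHyperspace X |
          ∀ z ∈ t, |infDist z B.1 - infDist z A.1| < δ} := by
        intro z _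
        simpa using hδ
      obtain ⟨B, hB1, hB2⟩ := mem_closure_iff_nhds.1 hA _ (hopen.mem_nhds hmem)
      obtain ⟨g, rfl⟩ := hB2
      refine ⟨g, fun z hz => ?_⟩
      have := hB1 z hz
      rw [abs_sub_comm]
      exact this
    have hS1 : Yset ⊆ A.1 := by
      intro z hzY
      have h0 : infDist z A.1 = 0 := by
        by_contra hne
        have hpos : 0 < infDist z A.1 := lt_of_le_of_ne infDist_nonneg (Ne.symm hne)
        obtain ⟨g, hg⟩ := key {z} _ hpos
        have h1 := hg z (Finset.mem_singleton_self z)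
        have hz0 : infDist z (Aset g) = 0 := infDist_zero_of_mem (Or.inl hzY)
        rw [hz0, sub_zero, abs_of_pos hpos] at h1
        exact lt_irrefl _ h1
      exact (A.2.2.mem_iff_infDist_zero A.2.1).2 h0
    have hS2 : A.1 ⊆ Yset ∪ ⋃ α, Set.range (y α) := by
      intro z hzA
      by_contra hzout
      have hzY : z ∉ Yset := fun h => hzout (Or.inl h)
      have hzS : z ∉ ⋃ α, Set.range (y α) := fun h => hzout (Or.inr h)
      have hzα : ∃ α₀, dist z (c α₀) < ε / 8 := by
        by_contra hcon
        push_neg at hcon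
        exact hzY fun α => hcon α
      obtain ⟨α₀, hα₀⟩ := hzα
      obtain ⟨rY, hrY, hbY⟩ := Metric.isOpen_iff.1 hYclosed.isOpen_compl z hzY
      have hzS0 : z ∉ y α₀ '' Set.univ := by
        intro h
        refine hzS (mem_iUnion.2 ⟨α₀, ?_⟩)
        rwa [Set.image_univ] at h
      obtain ⟨rS, hrS, hbS⟩ :=
        Metric.isOpen_iff.1 (isClosed_image_of_locfin (hyfin α₀) Set.univ).isOpen_compl z hzS0
      set ρ₀ : ℝ := min (min rY rS) (ε / 2) with hρ₀
      have hρ₀pos : 0 < ρ₀ := by positivity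
      obtain ⟨g, hg⟩ := key {z} ρ₀ hρ₀pos
      have h1 := hg z (Finset.mem_singleton_self z)
      rw [infDist_zero_of_mem hzA, abs_sub_comm, sub_zero,
        abs_of_nonneg infDist_nonneg] at h1
      -- but infDist z (Aset g) ≥ ρ₀
      have h2 : ρ₀ ≤ infDist z (Aset g) := by
        refine le_of_not_gt fun hlt => ?_
        obtain ⟨a, haA, hda⟩ := (infDist_lt_iff (hAne g)).1 hlt
        rcases haA with haY | haT
        · have : a ∉ ball z rY → True := fun _ => trivial
          have hge : rY ≤ dist z a := by
            by_contra hlt'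
            exact hbY (mem_ball.2 (by rwa [dist_comm, not_le] at hlt')) haY
          have : ρ₀ ≤ rY := le_trans (min_le_left _ _) (min_le_left _ _)
          linarith
        · obtain ⟨β, hβ⟩ := mem_iUnion.1 haT
          obtain ⟨m, _, rfl⟩ := hβ
          by_cases hβα : β = α₀
          · subst hβα
            have hge : rS ≤ dist z (y β m) := by
              by_contra hlt'
              refine hbS (mem_ball.2 (by rwa [dist_comm, not_le] at hlt')) ?_
              exact ⟨m, Set.mem_univ m, rfl⟩
            have : ρ₀ ≤ rS := le_trans (min_le_left _ _) (min_le_right _ _)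
            linarith
          · have hge := hfar z α₀ hα₀ β hβα m
            have : ρ₀ ≤ ε / 2 := min_le_right _ _
            linarith
      linarith
    -- the trace indices
    have hup : ∀ α m m', y α m ∈ A.1 → m ≤ m' → y α m' ∈ A.1 := by
      intro α m m' hm hmm'
      have h0 : infDist (y α m') A.1 = 0 := by
        by_contra hne
        have hpos : 0 < infDist (y α m') A.1 := lt_of_le_of_ne infDist_nonneg (Ne.symm hne)
        set δ := min (min (3 * ε / 32) (ρ α m)) (infDist (y α m') A.1) with hδdef
        have hδpos : 0 < δ := lt_min (hcpos α m) hpos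
        obtain ⟨g, hg⟩ := key {y α m, y α m'} δ hδpos
        have h1 := hg (y α m) (Finset.mem_insert_self _ _)
        have h2 := hg (y α m') (Finset.mem_insert_of_mem (Finset.mem_singleton_self _))
        rw [infDist_zero_of_mem hm, abs_sub_comm, sub_zero,
          abs_of_nonneg infDist_nonneg] at h1
        have hgle : g α ≤ m := by
          by_contra hgt
          have h3 := hR2 g α m (by omega)
          have h4 : δ ≤ min (3 * ε / 32) (ρ α m) := min_le_left _ _
          linarith
        have h5 : infDist (y α m') (Aset g) = 0 := hR1 g α m' (hgle.trans hmm')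
        rw [h5, sub_zero, abs_of_pos hpos] at h2
        have h6 : δ ≤ infDist (y α m') A.1 := min_le_right _ _
        linarith
      exact (A.2.2.mem_iff_infDist_zero A.2.1).2 h0
    have hEne : ∀ α, ∃ m, y α m ∈ A.1 := by
      intro α
      obtain ⟨g, hg⟩ := key {c α} (ε / 32) (by positivity)
      have h1 := hg (c α) (Finset.mem_singleton_self _)
      have h2 : infDist (c α) (Aset g) ≤ ε / 32 := by
        refine le_trans (infDist_le_dist_of_mem (hmemA g α)) ?_
        rw [dist_comm]
        exact hyc α (g α)
      have h3 : infDist (c α) A.1 < ε / 8 := by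
        have := abs_sub_lt_iff.1 h1
        linarith [this.1]
      obtain ⟨a, haA, hda⟩ := (infDist_lt_iff A.2.1).1 h3
      rcases hS2 haA with haY | haS
      · have := haY α
        rw [dist_comm] at hda
        linarith
      · obtain ⟨β, hβ⟩ := mem_iUnion.1 haS
        obtain ⟨m, rfl⟩ := hβ
        by_cases hβα : β = α
        · subst hβα
          exact ⟨m, haA⟩
        · have h4 : dist (c α) (c β) ≤ dist (c α) (y β m) + dist (y β m) (c β) :=
            dist_triangle _ _ _
          have h5 : ε ≤ dist (c α) (c β) := hsep α β fun h => hβα h.symm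
          have h6 := hyc β m
          linarith
    set gstar : ι → ℕ := fun α => Nat.find (hEne α) with hgstar
    have hAeq : A = f gstar := by
      refine Subtype.ext ?_
      show A.1 = Aset gstar
      ext z
      constructor
      · intro hzA
        rcases hS2 hzA with hzY | hzS
        · exact Or.inl hzY
        · obtain ⟨α, hα⟩ := mem_iUnion.1 hzS
          obtain ⟨m, rfl⟩ := hα
          rw [hgstar]
          have hm : y α m ∈ A.1 := hzA
          exact Or.inr (mem_iUnion.2 ⟨α, hmemT α _ m (Nat.find_min' (hEne α) hm)⟩)
      · intro hzA
        rcases hzA with hzY | hzT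
        · exact hS1 hzY
        · obtain ⟨α, hα⟩ := mem_iUnion.1 hzT
          obtain ⟨m, hm, rfl⟩ := hα
          exact hup α (gstar α) m (Nat.find_spec (hEne α)) hm
    exact ⟨gstar, hAeq.symm⟩
  exact ⟨f, ⟨⟨hind, hinj⟩, hclosedrange⟩⟩


end WijAux

/-- If `nlc X` is a non-separable subspace of the metric space `(X,d)`, then the
Wijsman hyperspace contains a closed copy of `ℕ^{ℵ₁}` (the product of `ℵ₁`-many
copies of the discrete space `ℕ`) and is consequently not normal. -/
theorem stmt4 (X : Type*) [MetricSpace X]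
    (h : ¬ TopologicalSpace.SeparableSpace (nlc X)) :
    (∀ (ι : Type) (_ : Cardinal.mk ι = Cardinal.aleph 1),
      ∃ f : (ι → ℕ) → WijsmanHyperspace X, Topology.IsClosedEmbedding f) ∧
    ¬ NormalSpace (WijsmanHyperspace X) := by
  classical
  obtain ⟨ε, hε, S, hSsep, hSunc⟩ := WijAux.exists_separated_uncountable (↥(nlc X)) h
  have hcard : Cardinal.aleph 1 ≤ Cardinal.mk ↥S :=
    le_of_not_gt fun hlt => hSunc ((Cardinal.countable_iff_lt_aleph_one S).2 hlt)
  have main : ∀ (ι : Type) (_ : Cardinal.mk ι = Cardinal.aleph 1),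
      ∃ f : (ι → ℕ) → WijsmanHyperspace X, Topology.IsClosedEmbedding f := by
    intro ι hι
    haveI hne : Nonempty ι := Cardinal.mk_ne_zero_iff.1
      (by rw [hι]; exact (Cardinal.aleph_pos 1).ne')
    have hemb : Nonempty (ι ↪ ↥S) := by
      rw [← Cardinal.lift_mk_le']
      rw [hι, Cardinal.lift_aleph, Ordinal.lift_one, Cardinal.lift_uzero]
      exact hcard
    obtain ⟨e⟩ := hemb
    set c : ι → X := fun α => ((e α : ↥(nlc X)) : X) with hc
    have hsepc : ∀ α β, α ≠ β → ε ≤ dist (c α) (c β) := by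
      intro α β hαβ
      have h1 : ((e α : ↥S) : ↥(nlc X)) ≠ ((e β : ↥S) : ↥(nlc X)) :=
        fun hcc => hαβ (e.injective (Subtype.ext hcc))
      have h2 : ε ≤ dist ((e α : ↥S) : ↥(nlc X)) ((e β : ↥S) : ↥(nlc X)) :=
        hSsep (e α).2 (e β).2 h1
      rwa [Subtype.dist_eq] at h2
    have hnlcc : ∀ α, c α ∈ nlc X := fun α => ((e α : ↥S) : ↥(nlc X)).2
    exact WijAux.main_construction ε hε c hsepc hnlcc
  refine ⟨main, ?_⟩
  intro hN
  have hι : Cardinal.mk (Cardinal.aleph 1 : Cardinal.{0}).out = Cardinal.aleph 1 :=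
    Cardinal.mk_out _
  have huncount : ¬ Countable (Cardinal.aleph 1 : Cardinal.{0}).out := by
    intro hcnt
    have h1 : Cardinal.mk (Cardinal.aleph 1 : Cardinal.{0}).out ≤ Cardinal.aleph0 :=
      Cardinal.mk_le_aleph0_iff.2 hcnt
    rw [hι] at h1
    exact absurd h1 (not_le.2 Cardinal.aleph0_lt_aleph_one)
  obtain ⟨f, hf⟩ := main _ hι
  exact WijAux.not_normal_pi _ huncount hf.normalSpace
end

section
/- Let (X,d) be a non-separable metric space. Then the subspace 2^X \ {X} of the Wijsman hyperspace (2^X, T_{W(d)}) contains a closed (in 2^X \ {X}) subspace homeomorphic to the product space ω₁ × (ω₁ + 1), where ω₁ is the space of all countable ordinals with the order topology and ω₁ + 1 is the space of all ordinals ≤ ω₁ with the order topology. -/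
/-- The first uncountable ordinal. -/
noncomputable def omega1 : Ordinal.{0} := (Cardinal.aleph 1).ord

namespace CJaux

open Set Metric Filter Topology Cardinal


variable {X : Type*} [MetricSpace X]

lemma exists_maximal_separated (ε : ℝ) :
    ∃ s : Set X, Maximal (· ∈ {s : Set X | s.Pairwise fun a b => ε ≤ dist a b}) s := by
  apply zorn_subset
  intro c hc hchain
  refine ⟨⋃₀ c, ?_, fun s hs => subset_sUnion_of_mem hs⟩
  intro a ha b hb hab
  obtain ⟨s, hs, has⟩ := ha
  obtain ⟨t, ht, hbt⟩ := hb
  rcases hchain.total hs ht with hst | hst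
  · exact hc ht (hst has) hbt hab
  · exact hc hs has (hst hbt) hab

lemma exists_uncountable_separated (h : ¬ TopologicalSpace.SeparableSpace X) :
    ∃ ε : ℝ, 0 < ε ∧ ∃ s : Set X,
      (s.Pairwise fun a b => ε ≤ dist a b) ∧ ¬s.Countable := by
  by_contra hcon
  push_neg at hcon
  choose S hS using fun n : ℕ => exists_maximal_separated (X := X) (1 / (n + 1))
  apply h
  refine ⟨⟨⋃ n, S n, ?_, ?_⟩⟩
  · exact countable_iUnion fun n => hcon _ (by positivity) _ (hS n).prop
  · rw [Metric.dense_iff]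
    intro x r hr
    obtain ⟨n, hn⟩ := exists_nat_one_div_lt hr
    by_cases hx : ∀ y ∈ S n, 1 / (n + 1 : ℝ) ≤ dist x y
    · have hins : insert x (S n) ∈ {s : Set X | s.Pairwise fun a b => 1/(n+1:ℝ) ≤ dist a b} := by
        refine (hS n).prop.insert fun y hy hxy => ?_
        exact ⟨hx y hy, by rw [dist_comm]; exact hx y hy⟩
      have hxe : x ∈ S n := (hS n).2 hins (subset_insert x (S n)) (mem_insert x (S n))
      exact ⟨x, mem_ball_self hr, mem_iUnion.2 ⟨n, hxe⟩⟩
    · push_neg at hx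
      obtain ⟨y, hy, hdy⟩ := hx
      exact ⟨y, by rw [mem_ball, dist_comm]; exact hdy.trans hn, mem_iUnion.2 ⟨n, hy⟩⟩



universe u

lemma aleph_one_eq_succ : Cardinal.aleph.{u} 1 = Order.succ ℵ₀ := by
  rw [← Cardinal.aleph_zero, ← Cardinal.aleph_succ, Ordinal.succ_zero]

lemma mk_Iic_omega1 : #(Set.Iic omega1) = Cardinal.lift.{1,0} (Cardinal.aleph.{0} 1) := by
  have h1 : (Set.Iic omega1) = Set.Iio (Order.succ omega1) := by
    ext x; simp [Order.lt_succ_iff]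
  rw [h1, Ordinal.mk_Iio_ordinal]
  congr 1
  rw [Ordinal.card_succ, omega1, Cardinal.card_ord]
  exact Cardinal.add_one_of_aleph0_le (Cardinal.aleph0_le_aleph 1)

lemma exists_inj_of_uncountable {X : Type u} {s : Set X} (hs : ¬s.Countable) :
    ∃ j : (↥(Set.Iic omega1) × ↥(Set.Iic omega1)) → X,
      Function.Injective j ∧ ∀ c, j c ∈ s := by
  have h1 : Cardinal.aleph.{u} 1 ≤ #s := by
    rw [← Set.countable_coe_iff] at hs
    have h0 : ℵ₀ < #s := lt_of_not_ge (fun hle => hs (Cardinal.mk_le_aleph0_iff.1 hle))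
    rw [aleph_one_eq_succ]
    exact Order.succ_le_of_lt h0
  have h2 : #(↥(Set.Iic omega1) × ↥(Set.Iic omega1))
      = Cardinal.lift.{1,0} (Cardinal.aleph.{0} 1) := by
    rw [Cardinal.mk_prod, mk_Iic_omega1, Cardinal.lift_id, ← Cardinal.lift_mul,
      Cardinal.mul_eq_self (Cardinal.aleph0_le_aleph 1)]
  have h3 : Cardinal.lift.{u} #(↥(Set.Iic omega1) × ↥(Set.Iic omega1))
      ≤ Cardinal.lift.{1} #(↥s) := by
    rw [h2, Cardinal.lift_lift]
    calc Cardinal.lift.{max u 1, 0} (Cardinal.aleph.{0} 1)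
        = Cardinal.lift.{1,u} (Cardinal.aleph.{u} 1) := by
          rw [Cardinal.lift_aleph, Cardinal.lift_aleph, Ordinal.lift_one, Ordinal.lift_one]
      _ ≤ Cardinal.lift.{1,u} #(↥s) := Cardinal.lift_le.2 h1
  obtain ⟨e⟩ := Cardinal.lift_mk_le'.mp h3
  exact ⟨fun c => (e c).1, fun a b hab => e.injective (Subtype.ext hab), fun c => (e c).2⟩







/-- nice lower endpoints: 0 or successor -/
def NiceLow (x v : Ordinal) : Prop := x = 0 ∨ ∃ y, y < v ∧ x = Order.succ y

lemma NiceLow.le {x v : Ordinal} (h : NiceLow x v) : x ≤ v := by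
  rcases h with rfl | ⟨y, hy, rfl⟩
  · exact zero_le (a := v)
  · exact Order.succ_le_of_lt hy

lemma isOpen_band {t : Set Ordinal.{0}} {x v : Ordinal} (hx : NiceLow x v) :
    IsOpen {γ : ↥t | x ≤ γ.1 ∧ γ.1 ≤ v} := by
  have he : {γ : ↥t | x ≤ γ.1 ∧ γ.1 ≤ v}
      = Subtype.val ⁻¹' (Set.Ici x ∩ Set.Iio (Order.succ v)) := by
    ext γ; simp [Order.lt_succ_iff]
  rw [he]
  refine (IsOpen.inter ?_ isOpen_Iio).preimage continuous_subtype_val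
  rcases hx with rfl | ⟨y, _, rfl⟩
  · have : Set.Ici (0:Ordinal) = Set.univ := by ext γ; simp [zero_le]
    rw [this]; exact isOpen_univ
  · have : Set.Ici (Order.succ y) = Set.Ioi y := by
      ext γ; simp [Order.succ_le_iff]
    rw [this]; exact isOpen_Ioi

lemma band_mem_nhds {t : Set Ordinal.{0}} {x : Ordinal} {γ₀ : ↥t} (hx : NiceLow x γ₀.1) :
    {γ : ↥t | x ≤ γ.1 ∧ γ.1 ≤ γ₀.1} ∈ 𝓝 γ₀ :=
  (isOpen_band hx).mem_nhds ⟨hx.le, le_rfl⟩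

/-- Basis lemma: every neighbourhood of `γ₀` in an ordinal subtype contains a band. -/
lemma nhds_basis_band {t : Set Ordinal.{0}} (γ₀ : ↥t) {U : Set ↥t} (hU : U ∈ 𝓝 γ₀) :
    ∃ x : Ordinal, NiceLow x γ₀.1 ∧ {γ : ↥t | x ≤ γ.1 ∧ γ.1 ≤ γ₀.1} ⊆ U := by
  have hγU : γ₀ ∈ U := mem_of_mem_nhds hU
  rw [nhds_subtype_eq_comap, Filter.mem_comap] at hU
  obtain ⟨t', ht', hsub⟩ := hU
  rw [_root_.mem_nhds_iff] at ht'
  obtain ⟨W, hWt, hWopen, hWmem⟩ := ht'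
  rcases Ordinal.zero_or_succ_or_isSuccLimit γ₀.1 with h0 | ⟨y, hy⟩ | hlim
  · refine ⟨0, Or.inl rfl, fun γ hγ => ?_⟩
    have : γ = γ₀ := Subtype.ext (le_antisymm (h0 ▸ hγ.2) (h0 ▸ zero_le))
    exact this ▸ hγU
  · refine ⟨γ₀.1, Or.inr ⟨y, hy ▸ Order.lt_succ y, hy.symm⟩, fun γ hγ => ?_⟩
    have : γ = γ₀ := Subtype.ext (le_antisymm hγ.2 hγ.1)
    exact this ▸ hγU
  · obtain ⟨a, ha, haI⟩ := Ordinal.isOpen_iff.1 hWopen γ₀.1 hWmem hlim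
    refine ⟨Order.succ a, Or.inr ⟨a, ha, rfl⟩, fun γ hγ => ?_⟩
    apply hsub
    rcases eq_or_lt_of_le hγ.2 with heq | hlt
    · show γ.1 ∈ t'; rw [heq]; exact hWt hWmem
    · exact hWt (haI ⟨Order.succ_le_iff.1 hγ.1, hlt⟩)


abbrev Pt := ↥(Set.Iio omega1) × ↥(Set.Iic omega1)
abbrev Qt := ↥(Set.Iic omega1) × ↥(Set.Iic omega1)

/-- block `c` is active at `pt` -/
def actv (pt c : Pt) : Prop := pt.1.1 ≤ c.1.1 ∧ pt.2.1 ≤ c.2.1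

lemma actv_refl (pt : Pt) : actv pt pt := ⟨le_rfl, le_rfl⟩

def toQ : Pt → Qt := fun c => (⟨c.1.1, Set.mem_Iic.2 (le_of_lt (Set.mem_Iio.1 c.1.2))⟩, c.2)

lemma toQ_injective : Function.Injective toQ := by
  rintro ⟨⟨a, ha⟩, b⟩ ⟨⟨a', ha'⟩, b'⟩ h
  simp only [toQ, Prod.mk.injEq, Subtype.mk.injEq] at h
  simp [Prod.ext_iff, Subtype.ext_iff, h.1, h.2]


/-- Abstract pattern-decoding: a finitely realizable activation pattern which activates
some block with second coordinate `omega1` is the pattern of an actual point. -/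
lemma exists_min_witness (σ : Pt → Prop)
    (hreal : ∀ T : Finset Pt, ∃ pt : Pt, ∀ c ∈ T, (σ c ↔ actv pt c))
    (hex : ∃ a : ↥(Set.Iio omega1), σ (a, ⟨omega1, Set.mem_Iic.2 le_rfl⟩)) :
    ∃ pts : Pt, ∀ c : Pt, σ c ↔ actv pts c := by
  classical
  have hSa : {o : Ordinal | ∃ h : o ∈ Set.Iio omega1,
      σ (⟨o, h⟩, ⟨omega1, Set.mem_Iic.2 le_rfl⟩)}.Nonempty := by
    obtain ⟨a, ha⟩ := hex; exact ⟨a.1, a.2, ha⟩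
  obtain ⟨hαlt, hσα⟩ := csInf_mem hSa
  set αs : Ordinal := sInf {o : Ordinal | ∃ h : o ∈ Set.Iio omega1,
      σ (⟨o, h⟩, ⟨omega1, Set.mem_Iic.2 le_rfl⟩)} with hαdef
  have hmina : ∀ (o : Ordinal) (h : o ∈ Set.Iio omega1),
      σ (⟨o, h⟩, ⟨omega1, Set.mem_Iic.2 le_rfl⟩) → αs ≤ o := by
    intro o h hσ
    rw [hαdef]
    exact csInf_le' ⟨h, hσ⟩
  have hSb : {o : Ordinal | ∃ h : o ∈ Set.Iic omega1,
      σ (⟨αs, hαlt⟩, ⟨o, h⟩)}.Nonempty := ⟨omega1, Set.mem_Iic.2 le_rfl, hσα⟩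
  obtain ⟨hβle, hσβ⟩ := csInf_mem hSb
  set βs : Ordinal := sInf {o : Ordinal | ∃ h : o ∈ Set.Iic omega1,
      σ (⟨αs, hαlt⟩, ⟨o, h⟩)} with hβdef
  have hminb : ∀ (o : Ordinal) (h : o ∈ Set.Iic omega1),
      σ (⟨αs, hαlt⟩, ⟨o, h⟩) → βs ≤ o := by
    intro o h hσ
    rw [hβdef]
    exact csInf_le' ⟨h, hσ⟩
  refine ⟨(⟨αs, hαlt⟩, ⟨βs, hβle⟩), fun c => ⟨?_, ?_⟩⟩
  · intro hσc
    have hα : αs ≤ c.1.1 := by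
      obtain ⟨pt, hpt⟩ := hreal {c, (c.1, ⟨omega1, Set.mem_Iic.2 le_rfl⟩)}
      have h1 := (hpt c (by simp)).1 hσc
      have h3 : σ (c.1, ⟨omega1, Set.mem_Iic.2 le_rfl⟩) :=
        (hpt (c.1, ⟨omega1, Set.mem_Iic.2 le_rfl⟩) (by simp)).2 ⟨h1.1, Set.mem_Iic.1 pt.2.2⟩
      exact hmina c.1.1 c.1.2 h3
    have hβ : βs ≤ c.2.1 := by
      obtain ⟨pt, hpt⟩ := hreal {c, (⟨αs, hαlt⟩, c.2), (⟨αs, hαlt⟩, ⟨βs, hβle⟩)}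
      have k1 := (hpt c (by simp)).1 hσc
      have k2 := (hpt (⟨αs, hαlt⟩, ⟨βs, hβle⟩) (by simp)).1 hσβ
      have k3 : σ (⟨αs, hαlt⟩, c.2) :=
        (hpt (⟨αs, hαlt⟩, c.2) (by simp)).2 ⟨k2.1, k1.2⟩
      exact hminb c.2.1 c.2.2 k3
    exact ⟨hα, hβ⟩
  · intro hact
    obtain ⟨pt, hpt⟩ := hreal {c, (⟨αs, hαlt⟩, ⟨βs, hβle⟩)}
    have h2 := (hpt (⟨αs, hαlt⟩, ⟨βs, hβle⟩) (by simp)).1 hσβ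
    exact (hpt c (by simp)).2 ⟨h2.1.trans hact.1, h2.2.trans hact.2⟩

section Main

variable {X : Type u} [MetricSpace X]
variable (j : Qt → X) (ε : ℝ)

def xc : Pt → X := fun c => j (toQ c)

noncomputable def wpt : X := j (⟨omega1, Set.mem_Iic.2 le_rfl⟩, ⟨omega1, Set.mem_Iic.2 le_rfl⟩)

def UU (pt : Pt) : Set X := ⋃ (c : Pt) (_ : actv pt c), Metric.ball (xc j c) (ε/3)

def AA (pt : Pt) : Set X := (UU j ε pt)ᶜ

variable {j ε}
variable (hj : Function.Injective j) (hsep : ∀ q q' : Qt, q ≠ q' → ε ≤ dist (j q) (j q'))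
  (hε : 0 < ε)

section
include hsep

lemma xc_sep {c c' : Pt} (h : c ≠ c') : ε ≤ dist (xc j c) (xc j c') :=
  hsep _ _ (fun he => h (toQ_injective he))

lemma w_sep (c : Pt) : ε ≤ dist (wpt j) (xc j c) := by
  refine hsep _ _ (fun he => ?_)
  have h2 := congrArg (fun q : Qt => (q.1 : Ordinal)) he
  simp only [toQ] at h2
  have h3 : (c.1 : Ordinal) < omega1 := Set.mem_Iio.1 c.1.2
  rw [← h2] at h3
  exact lt_irrefl _ h3

include hε

lemma ball_unique {p : X} {c c' : Pt} (h : p ∈ ball (xc j c) (ε/3))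
    (h' : p ∈ ball (xc j c') (ε/3)) : c = c' := by
  by_contra hne
  have h1 : dist (xc j c) (xc j c') ≤ dist (xc j c) p + dist p (xc j c') := dist_triangle _ _ _
  rw [mem_ball] at h h'
  have h2 : dist (xc j c) p = dist p (xc j c) := dist_comm _ _
  have := xc_sep hsep hne
  linarith [h, h']

lemma w_mem_A (pt : Pt) : wpt j ∈ AA j ε pt := by
  intro hw
  simp only [UU, mem_iUnion] at hw
  obtain ⟨c, _, hc⟩ := hw
  rw [mem_ball] at hc
  have h2 : dist (wpt j) (xc j c) = dist (xc j c) (wpt j) := dist_comm _ _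
  linarith [w_sep hsep c, hc]

lemma A_nonempty (pt : Pt) : (AA j ε pt).Nonempty := ⟨wpt j, w_mem_A hsep hε pt⟩

lemma ball_mem_A {p : X} {c : Pt} {pt : Pt} (hp : p ∈ ball (xc j c) (ε/3))
    (hc : ¬ actv pt c) : p ∈ AA j ε pt := by
  intro hmem
  simp only [UU, mem_iUnion] at hmem
  obtain ⟨c', hact, hc'⟩ := hmem
  exact hc ((ball_unique hsep hε hp hc') ▸ hact)

lemma xc_mem_A {c pt : Pt} (hc : ¬ actv pt c) : xc j c ∈ AA j ε pt :=
  ball_mem_A hsep hε (mem_ball_self (by linarith)) hc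

omit hsep in
lemma xc_not_mem_A (pt : Pt) : xc j pt ∉ AA j ε pt := by
  intro hmem
  exact hmem (mem_iUnion.2 ⟨pt, mem_iUnion.2 ⟨actv_refl pt, mem_ball_self (by linarith)⟩⟩)

lemma infDist_lower {c pt : Pt} (hc : actv pt c) :
    ε/3 ≤ infDist (xc j c) (AA j ε pt) := by
  by_contra hlt
  rw [not_le, infDist_lt_iff (A_nonempty hsep hε pt)] at hlt
  obtain ⟨y, hy, hd⟩ := hlt
  refine hy (mem_iUnion.2 ⟨c, mem_iUnion.2 ⟨hc, ?_⟩⟩)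
  rw [mem_ball, dist_comm]; exact hd

end

lemma isClosed_A (pt : Pt) : IsClosed (AA j ε pt) := by
  rw [AA, isClosed_compl_iff, UU]
  exact isOpen_iUnion fun c => isOpen_iUnion fun _ => isOpen_ball

lemma A_ne_univ (hsep : ∀ q q' : Qt, q ≠ q' → ε ≤ dist (j q) (j q')) (hε : 0 < ε) (pt : Pt) :
    AA j ε pt ≠ Set.univ := by
  intro h
  exact xc_not_mem_A hε pt (h ▸ mem_univ _)

lemma A_mono {pt pt' : Pt} (h1 : pt.1.1 ≤ pt'.1.1) (h2 : pt.2.1 ≤ pt'.2.1) :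
    AA j ε pt ⊆ AA j ε pt' := by
  refine compl_subset_compl.2 (fun p hp => ?_)
  simp only [UU, mem_iUnion] at hp ⊢
  obtain ⟨c, hact, hc⟩ := hp
  exact ⟨c, ⟨h1.trans hact.1, h2.trans hact.2⟩, hc⟩


variable (j ε) in
noncomputable def phi (p : X) (pt : Pt) : ℝ := infDist p (AA j ε pt)

section
include hsep hε

lemma phi_mono {p : X} {pt pt' : Pt} (h1 : pt.1.1 ≤ pt'.1.1) (h2 : pt.2.1 ≤ pt'.2.1) :
    phi j ε p pt' ≤ phi j ε p pt :=
  infDist_le_infDist_of_subset (A_mono h1 h2) (A_nonempty hsep hε pt)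

/-- Key localization lemma: around any point of `Pt` there is a "band" on which
`phi p` stays within `δ` above its value at the point. -/
lemma phi_band (p : X) {δ : ℝ} (hδ : 0 < δ) (pt₀ : Pt) :
    ∃ x₁ x₂ : Ordinal, NiceLow x₁ pt₀.1.1 ∧ NiceLow x₂ pt₀.2.1 ∧
      ∀ pt : Pt, x₁ ≤ pt.1.1 → pt.1.1 ≤ pt₀.1.1 → x₂ ≤ pt.2.1 → pt.2.1 ≤ pt₀.2.1 →
        phi j ε p pt₀ ≤ phi j ε p pt ∧ phi j ε p pt ≤ phi j ε p pt₀ + δ := by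
  have hlt : infDist p (AA j ε pt₀) < phi j ε p pt₀ + δ := by
    simp only [phi]; linarith
  obtain ⟨q, hqA, hqd⟩ := (infDist_lt_iff (A_nonempty hsep hε pt₀)).1 hlt
  have upper : ∀ pt : Pt, q ∈ AA j ε pt → phi j ε p pt ≤ phi j ε p pt₀ + δ :=
    fun pt hq => le_of_lt (lt_of_le_of_lt (infDist_le_dist_of_mem hq) hqd)
  by_cases hq : ∃ c : Pt, q ∈ ball (xc j c) (ε/3)
  · obtain ⟨c, hqc⟩ := hq
    have hnact : ¬ actv pt₀ c := by
      intro hact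
      exact hqA (mem_iUnion.2 ⟨c, mem_iUnion.2 ⟨hact, hqc⟩⟩)
    rw [actv, not_and_or] at hnact
    rcases hnact with hn | hn
    · rw [not_le] at hn
      refine ⟨Order.succ c.1.1, 0, Or.inr ⟨c.1.1, hn, rfl⟩, Or.inl rfl, ?_⟩
      intro pt hx1 hle1 _ hle2
      refine ⟨phi_mono hsep hε hle1 hle2, upper pt (ball_mem_A hsep hε hqc ?_)⟩
      intro hact
      exact absurd (le_trans hx1 hact.1) (by simp [Order.succ_le_iff])
    · rw [not_le] at hn
      refine ⟨0, Order.succ c.2.1, Or.inl rfl, Or.inr ⟨c.2.1, hn, rfl⟩, ?_⟩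
      intro pt _ hle1 hx2 hle2
      refine ⟨phi_mono hsep hε hle1 hle2, upper pt (ball_mem_A hsep hε hqc ?_)⟩
      intro hact
      exact absurd (le_trans hx2 hact.2) (by simp [Order.succ_le_iff])
  · push_neg at hq
    refine ⟨0, 0, Or.inl rfl, Or.inl rfl, ?_⟩
    intro pt _ hle1 _ hle2
    refine ⟨phi_mono hsep hε hle1 hle2, upper pt ?_⟩
    intro hmem
    simp only [UU, mem_iUnion] at hmem
    obtain ⟨c, _, hc⟩ := hmem
    exact hq c hc

lemma continuous_phi (p : X) : Continuous (phi j ε p) := by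
  rw [continuous_iff_continuousAt]
  intro pt₀
  rw [ContinuousAt, Metric.tendsto_nhds]
  intro δ hδ
  obtain ⟨x₁, x₂, h1, h2, hband⟩ := phi_band hsep hε p (half_pos hδ) pt₀
  have hmem : ({γ : ↥(Set.Iio omega1) | x₁ ≤ γ.1 ∧ γ.1 ≤ pt₀.1.1} ×ˢ
      {γ : ↥(Set.Iic omega1) | x₂ ≤ γ.1 ∧ γ.1 ≤ pt₀.2.1}) ∈ 𝓝 pt₀ := by
    rw [nhds_prod_eq]
    exact Filter.prod_mem_prod (band_mem_nhds h1) (band_mem_nhds h2)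
  filter_upwards [hmem] with pt hpt
  obtain ⟨hb, hub⟩ := hband pt hpt.1.1 hpt.1.2 hpt.2.1 hpt.2.2
  rw [Real.dist_eq, abs_lt]
  constructor <;> linarith

end


noncomputable def ev (p : X) (A : {A : WijsmanHyperspace X // A.1 ≠ Set.univ}) : ℝ :=
  infDist p A.1.1

lemma continuous_ev (p : X) : Continuous (ev (X := X) p) := by
  have h1 : Continuous (fun A : WijsmanHyperspace X => (fun x => infDist x A.1)) :=
    continuous_induced_dom
  exact ((continuous_apply p).comp h1).comp continuous_subtype_val

variable (j ε)

noncomputable def FF (hsep' : ∀ q q' : Qt, q ≠ q' → ε ≤ dist (j q) (j q')) (hε' : 0 < ε) :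
    Pt → {A : WijsmanHyperspace X // A.1 ≠ Set.univ} := fun pt =>
  ⟨⟨AA j ε pt, A_nonempty hsep' hε' pt, isClosed_A pt⟩, A_ne_univ hsep' hε' pt⟩

variable {j ε}

lemma ev_FF (p : X) (pt : Pt) : ev p (FF j ε hsep hε pt) = phi j ε p pt := rfl

section
include hsep hε

lemma continuous_FF : Continuous (FF j ε hsep hε) := by
  refine Continuous.subtype_mk ?_ _
  refine continuous_induced_rng.2 ?_
  exact continuous_pi fun p => continuous_phi hsep hε p

lemma ev_active {c pt : Pt} (h : actv pt c) :
    ε/3 ≤ ev (xc j c) (FF j ε hsep hε pt) := infDist_lower hsep hε h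

lemma ev_inactive {c pt : Pt} (h : ¬ actv pt c) :
    ev (xc j c) (FF j ε hsep hε pt) = 0 := infDist_zero_of_mem (xc_mem_A hsep hε h)

lemma actv_of_ev {c pt : Pt} (h : ε/6 < ev (xc j c) (FF j ε hsep hε pt)) : actv pt c := by
  by_contra hn
  rw [ev_inactive hsep hε hn] at h
  linarith

lemma inactv_of_ev {c pt : Pt} (h : ev (xc j c) (FF j ε hsep hε pt) < ε/6) : ¬ actv pt c := by
  intro ha
  linarith [ev_active hsep hε ha]

lemma injective_FF : Function.Injective (FF j ε hsep hε) := by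
  intro pt pt' h
  have hA : AA j ε pt = AA j ε pt' := congrArg (fun A => A.1.1) h
  have key : ∀ c : Pt, actv pt c ↔ actv pt' c := by
    intro c
    constructor <;> intro hact <;> by_contra hn
    · exact (hA ▸ xc_mem_A hsep hε hn)
        (mem_iUnion.2 ⟨c, mem_iUnion.2 ⟨hact, mem_ball_self (by linarith)⟩⟩)
    · exact (hA ▸ xc_mem_A hsep hε hn)
        (mem_iUnion.2 ⟨c, mem_iUnion.2 ⟨hact, mem_ball_self (by linarith)⟩⟩)
  have h1 := (key pt).1 (actv_refl pt)
  have h2 := (key pt').2 (actv_refl pt')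
  have e1 : pt.1.1 = pt'.1.1 := le_antisymm h2.1 h1.1
  have e2 : pt.2.1 = pt'.2.1 := le_antisymm h2.2 h1.2
  exact Prod.ext (Subtype.ext e1) (Subtype.ext e2)

/-- first-coordinate lower pin -/
lemma pin_lower1 {pt : Pt} {x₁ : Ordinal} (h : NiceLow x₁ pt.1.1) :
    ∃ W : Set {A : WijsmanHyperspace X // A.1 ≠ Set.univ}, IsOpen W ∧ FF j ε hsep hε pt ∈ W ∧
      ∀ pt' : Pt, FF j ε hsep hε pt' ∈ W → pt'.2.1 ≤ pt.2.1 → x₁ ≤ pt'.1.1 := by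
  rcases h with rfl | ⟨y, hy, rfl⟩
  · exact ⟨univ, isOpen_univ, mem_univ _, fun pt' _ _ => zero_le⟩
  · refine ⟨(ev (xc j (⟨y, lt_trans hy pt.1.2⟩, pt.2)))⁻¹' (Set.Iio (ε/6)),
      (continuous_ev _).isOpen_preimage _ isOpen_Iio, ?_, ?_⟩
    · have : ¬ actv pt (⟨y, lt_trans hy pt.1.2⟩, pt.2) := by
        intro hact
        exact absurd hact.1 (not_le.2 hy)
      simp only [mem_preimage, mem_Iio, ev_inactive hsep hε this]
      linarith
    · intro pt' hW h2
      have hne : ¬ actv pt' (⟨y, lt_trans hy pt.1.2⟩, pt.2) :=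
        inactv_of_ev hsep hε (by simpa using hW)
      rw [actv, not_and_or] at hne
      rcases hne with hn | hn
      · exact Order.succ_le_of_lt (not_le.1 hn)
      · exact absurd h2 hn

/-- second-coordinate lower pin -/
lemma pin_lower2 {pt : Pt} {x₂ : Ordinal} (h : NiceLow x₂ pt.2.1) :
    ∃ W : Set {A : WijsmanHyperspace X // A.1 ≠ Set.univ}, IsOpen W ∧ FF j ε hsep hε pt ∈ W ∧
      ∀ pt' : Pt, FF j ε hsep hε pt' ∈ W → pt'.1.1 ≤ pt.1.1 → x₂ ≤ pt'.2.1 := by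
  rcases h with rfl | ⟨y, hy, rfl⟩
  · exact ⟨univ, isOpen_univ, mem_univ _, fun pt' _ _ => zero_le⟩
  · refine ⟨(ev (xc j (pt.1, ⟨y, le_of_lt (lt_of_lt_of_le hy pt.2.2)⟩)))⁻¹' (Set.Iio (ε/6)),
      (continuous_ev _).isOpen_preimage _ isOpen_Iio, ?_, ?_⟩
    · have : ¬ actv pt (pt.1, ⟨y, le_of_lt (lt_of_lt_of_le hy pt.2.2)⟩) := by
        intro hact
        exact absurd hact.2 (not_le.2 hy)
      simp only [mem_preimage, mem_Iio, ev_inactive hsep hε this]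
      linarith
    · intro pt' hW h1
      have hne : ¬ actv pt' (pt.1, ⟨y, le_of_lt (lt_of_lt_of_le hy pt.2.2)⟩) :=
        inactv_of_ev hsep hε (by simpa using hW)
      rw [actv, not_and_or] at hne
      rcases hne with hn | hn
      · exact absurd h1 hn
      · exact Order.succ_le_of_lt (not_le.1 hn)

/-- the pin forcing `pt' ≤ pt` -/
lemma pin_le (pt : Pt) :
    ∃ W : Set {A : WijsmanHyperspace X // A.1 ≠ Set.univ}, IsOpen W ∧ FF j ε hsep hε pt ∈ W ∧
      ∀ pt' : Pt, FF j ε hsep hε pt' ∈ W → pt'.1.1 ≤ pt.1.1 ∧ pt'.2.1 ≤ pt.2.1 := by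
  refine ⟨(ev (xc j pt))⁻¹' (Set.Ioi (ε/6)),
    (continuous_ev _).isOpen_preimage _ isOpen_Ioi, ?_, ?_⟩
  · simp only [mem_preimage, mem_Ioi]
    have := ev_active hsep hε (actv_refl pt)
    linarith
  · intro pt' hW
    exact actv_of_ev hsep hε (by simpa using hW)

lemma inducing_FF : IsInducing (FF j ε hsep hε) := by
  rw [isInducing_iff_nhds]
  intro pt
  refine le_antisymm ((continuous_FF hsep hε).tendsto pt).le_comap ?_
  intro U hU
  rw [nhds_prod_eq, Filter.mem_prod_iff] at hU
  obtain ⟨U₁, hU₁, U₂, hU₂, hprod⟩ := hU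
  obtain ⟨x₁, hx₁, hb₁⟩ := nhds_basis_band pt.1 hU₁
  obtain ⟨x₂, hx₂, hb₂⟩ := nhds_basis_band pt.2 hU₂
  obtain ⟨W₀, hW₀o, hW₀m, hW₀⟩ := pin_le hsep hε pt
  obtain ⟨W₁, hW₁o, hW₁m, hW₁⟩ := pin_lower1 hsep hε hx₁
  obtain ⟨W₂, hW₂o, hW₂m, hW₂⟩ := pin_lower2 hsep hε hx₂
  rw [Filter.mem_comap]
  refine ⟨W₀ ∩ W₁ ∩ W₂, ((hW₀o.inter hW₁o).inter hW₂o).mem_nhds ⟨⟨hW₀m, hW₁m⟩, hW₂m⟩, ?_⟩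
  intro pt' hpt'
  obtain ⟨⟨h0, h1⟩, h2⟩ := hpt'
  obtain ⟨hle1, hle2⟩ := hW₀ pt' h0
  refine hprod ⟨hb₁ ⟨hW₁ pt' h1 hle2, hle1⟩, hb₂ ⟨hW₂ pt' h2 hle1, hle2⟩⟩

end


section
include hsep hε

lemma isClosedRange_FF : IsClosed (Set.range (FF j ε hsep hε)) := by
  classical
  refine isClosed_of_closure_subset (fun B hB => ?_)
  rw [_root_.mem_closure_iff] at hB
  have hBne : B.1.1.Nonempty := B.1.2.1
  have hBcl : IsClosed B.1.1 := B.1.2.2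
  -- dichotomy for the distance of each centre to B
  have hdich : ∀ c : Pt, infDist (xc j c) B.1.1 = 0 ∨ ε/3 ≤ infDist (xc j c) B.1.1 := by
    intro c
    by_contra hcon
    push_neg at hcon
    obtain ⟨h0, h3⟩ := hcon
    have hpos : 0 < infDist (xc j c) B.1.1 := lt_of_le_of_ne infDist_nonneg (Ne.symm h0)
    obtain ⟨B', hB'O, pt, rfl⟩ := hB ((ev (xc j c))⁻¹'
        (Metric.ball (infDist (xc j c) B.1.1) (min (infDist (xc j c) B.1.1) (ε/3 - infDist (xc j c) B.1.1))))
      ((continuous_ev _).isOpen_preimage _ isOpen_ball)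
      (by simp only [mem_preimage, Metric.mem_ball, ev, dist_self]; exact lt_min hpos (by linarith))
    rw [mem_preimage, Metric.mem_ball, Real.dist_eq] at hB'O
    have hB'O' := abs_lt.1 hB'O
    have hmin1 : min (infDist (xc j c) B.1.1) (ε/3 - infDist (xc j c) B.1.1)
        ≤ infDist (xc j c) B.1.1 := min_le_left _ _
    have hmin2 : min (infDist (xc j c) B.1.1) (ε/3 - infDist (xc j c) B.1.1)
        ≤ ε/3 - infDist (xc j c) B.1.1 := min_le_right _ _
    by_cases hact : actv pt c
    · have := ev_active hsep hε hact
      linarith [hB'O'.2]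
    · have := ev_inactive hsep hε hact
      rw [this] at hB'O'
      linarith [hB'O'.1]
  have hσ0 : ∀ c : Pt, ¬ (ε/3 ≤ infDist (xc j c) B.1.1) → infDist (xc j c) B.1.1 = 0 :=
    fun c hc => (hdich c).resolve_right hc
  -- finite realizability of the activation pattern
  have hreal : ∀ T : Finset Pt, ∃ pt : Pt,
      ∀ c ∈ T, ((ε/3 ≤ infDist (xc j c) B.1.1) ↔ actv pt c) := by
    intro T
    have hOopen : IsOpen (⋂ c ∈ T, (if (ε/3 ≤ infDist (xc j c) B.1.1)
        then (ev (xc j c))⁻¹' (Set.Ioi (ε/6)) else (ev (xc j c))⁻¹' (Set.Iio (ε/6)))) := by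
      refine isOpen_biInter_finset (fun c _ => ?_)
      split_ifs
      · exact (continuous_ev _).isOpen_preimage _ isOpen_Ioi
      · exact (continuous_ev _).isOpen_preimage _ isOpen_Iio
    have hBO : B ∈ (⋂ c ∈ T, (if (ε/3 ≤ infDist (xc j c) B.1.1)
        then (ev (xc j c))⁻¹' (Set.Ioi (ε/6)) else (ev (xc j c))⁻¹' (Set.Iio (ε/6)))) := by
      refine mem_iInter₂.2 (fun c _ => ?_)
      by_cases hσc : ε/3 ≤ infDist (xc j c) B.1.1
      · rw [if_pos hσc]
        simp only [mem_preimage, mem_Ioi, ev]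
        linarith
      · rw [if_neg hσc]
        simp only [mem_preimage, mem_Iio, ev, hσ0 c hσc]
        linarith
    obtain ⟨B', hB'O, pt, rfl⟩ := hB _ hOopen hBO
    refine ⟨pt, fun c hc => ?_⟩
    have hm := mem_iInter₂.1 hB'O c hc
    by_cases hσc : ε/3 ≤ infDist (xc j c) B.1.1
    · rw [if_pos hσc] at hm
      exact ⟨fun _ => actv_of_ev hsep hε (by simpa using hm), fun _ => hσc⟩
    · rw [if_neg hσc] at hm
      exact ⟨fun h => absurd h hσc, fun h => absurd h (inactv_of_ev hsep hε (by simpa using hm))⟩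
  by_cases hex : ∃ a : ↥(Set.Iio omega1),
      ε/3 ≤ infDist (xc j (a, ⟨omega1, Set.mem_Iic.2 le_rfl⟩)) B.1.1
  · -- main case : decode the pattern
    obtain ⟨pts, hpat⟩ := exists_min_witness
      (fun c => ε/3 ≤ infDist (xc j c) B.1.1) hreal hex
    have hσpts : ε/3 ≤ infDist (xc j pts) B.1.1 := (hpat pts).2 (actv_refl pts)
    have hval : ∀ p : X, infDist p B.1.1 = phi j ε p pts := by
      intro p
      have key : ∀ δ : ℝ, 0 < δ → |infDist p B.1.1 - phi j ε p pts| < 2*δ := by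
        intro δ hδ
        obtain ⟨x₁, x₂, hx₁, hx₂, hband⟩ := phi_band hsep hε p hδ pts
        have pin1 : ∃ W : Set {A : WijsmanHyperspace X // A.1 ≠ Set.univ}, IsOpen W ∧ B ∈ W ∧
            ∀ pt' : Pt, FF j ε hsep hε pt' ∈ W → pt'.2.1 ≤ pts.2.1 → x₁ ≤ pt'.1.1 := by
          rcases hx₁ with rfl | ⟨y, hy, rfl⟩
          · exact ⟨univ, isOpen_univ, mem_univ _, fun pt' _ _ => zero_le⟩
          · have hyo : y ∈ Set.Iio omega1 := lt_trans hy pts.1.2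
            have hσc : ¬ (ε/3 ≤ infDist (xc j ((⟨y, hyo⟩, pts.2) : Pt)) B.1.1) := by
              rw [hpat]
              intro hact
              exact absurd hact.1 (not_le.2 hy)
            refine ⟨(ev (xc j ((⟨y, hyo⟩, pts.2) : Pt)))⁻¹' (Set.Iio (ε/6)),
              (continuous_ev _).isOpen_preimage _ isOpen_Iio, ?_, ?_⟩
            · simp only [mem_preimage, mem_Iio, ev, hσ0 _ hσc]
              linarith
            · intro pt' hW h2
              have hne := inactv_of_ev hsep hε (by simpa using hW)
              rw [actv, not_and_or] at hne
              rcases hne with hn | hn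
              · exact Order.succ_le_of_lt (not_le.1 hn)
              · exact absurd h2 hn
        have pin2 : ∃ W : Set {A : WijsmanHyperspace X // A.1 ≠ Set.univ}, IsOpen W ∧ B ∈ W ∧
            ∀ pt' : Pt, FF j ε hsep hε pt' ∈ W → pt'.1.1 ≤ pts.1.1 → x₂ ≤ pt'.2.1 := by
          rcases hx₂ with rfl | ⟨y, hy, rfl⟩
          · exact ⟨univ, isOpen_univ, mem_univ _, fun pt' _ _ => zero_le⟩
          · have hyo : y ∈ Set.Iic omega1 := le_of_lt (lt_of_lt_of_le hy pts.2.2)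
            have hσc : ¬ (ε/3 ≤ infDist (xc j ((pts.1, ⟨y, hyo⟩) : Pt)) B.1.1) := by
              rw [hpat]
              intro hact
              exact absurd hact.2 (not_le.2 hy)
            refine ⟨(ev (xc j ((pts.1, ⟨y, hyo⟩) : Pt)))⁻¹' (Set.Iio (ε/6)),
              (continuous_ev _).isOpen_preimage _ isOpen_Iio, ?_, ?_⟩
            · simp only [mem_preimage, mem_Iio, ev, hσ0 _ hσc]
              linarith
            · intro pt' hW h1
              have hne := inactv_of_ev hsep hε (by simpa using hW)
              rw [actv, not_and_or] at hne
              rcases hne with hn | hn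
              · exact absurd h1 hn
              · exact Order.succ_le_of_lt (not_le.1 hn)
        obtain ⟨W₁, hW₁o, hW₁b, hW₁⟩ := pin1
        obtain ⟨W₂, hW₂o, hW₂b, hW₂⟩ := pin2
        obtain ⟨B', hB'O, pt, rfl⟩ := hB
          ((ev p)⁻¹' (Metric.ball (infDist p B.1.1) δ) ∩
            ((ev (xc j pts))⁻¹' (Set.Ioi (ε/6)) ∩ (W₁ ∩ W₂)))
          (((continuous_ev _).isOpen_preimage _ isOpen_ball).inter
            (((continuous_ev _).isOpen_preimage _ isOpen_Ioi).inter (hW₁o.inter hW₂o)))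
          (⟨by simp only [mem_preimage, Metric.mem_ball, ev, dist_self]; exact hδ,
            by simp only [mem_preimage, mem_Ioi, ev]; linarith,
            hW₁b, hW₂b⟩)
        obtain ⟨hO1, hO2, hO3, hO4⟩ := hB'O
        have hle : actv pt pts := actv_of_ev hsep hε (by simpa using hO2)
        have hx1le := hW₁ pt hO3 hle.2
        have hx2le := hW₂ pt hO4 hle.1
        obtain ⟨hlow, hup⟩ := hband pt hx1le hle.1 hx2le hle.2
        rw [mem_preimage, Metric.mem_ball, ev_FF hsep hε, Real.dist_eq] at hO1
        have hO1' := abs_lt.1 hO1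
        rw [abs_lt]
        constructor <;> linarith [hO1'.1, hO1'.2]
      by_contra hne
      have habs : 0 < |infDist p B.1.1 - phi j ε p pts| := abs_pos.2 (sub_ne_zero.2 hne)
      have hk := key (|infDist p B.1.1 - phi j ε p pts|/2) (by linarith)
      linarith
    have hseteq : B.1.1 = AA j ε pts := by
      ext q
      rw [hBcl.mem_iff_infDist_zero hBne,
        (isClosed_A pts).mem_iff_infDist_zero (A_nonempty hsep hε pts), hval q]
      exact Iff.rfl
    exact ⟨pts, Subtype.ext (Subtype.ext hseteq.symm)⟩
  · -- degenerate case : B would have to be the whole space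
    exfalso
    have hall : ∀ c : Pt, ¬ (ε/3 ≤ infDist (xc j c) B.1.1) := by
      intro c hσc
      obtain ⟨pt, hpt⟩ := hreal {c, (c.1, ⟨omega1, Set.mem_Iic.2 le_rfl⟩)}
      have h1 := (hpt c (by simp)).1 hσc
      have h2 : actv pt (c.1, ⟨omega1, Set.mem_Iic.2 le_rfl⟩) :=
        ⟨h1.1, Set.mem_Iic.1 pt.2.2⟩
      exact hex ⟨c.1, (hpt _ (by simp)).2 h2⟩
    apply B.2
    rw [Set.eq_univ_iff_forall]
    intro p
    rw [hBcl.mem_iff_infDist_zero hBne]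
    have key : ∀ δ : ℝ, 0 < δ → infDist p B.1.1 < δ := by
      intro δ hδ
      by_cases hp : ∃ c : Pt, p ∈ ball (xc j c) (ε/3)
      · obtain ⟨c, hpc⟩ := hp
        obtain ⟨B', hB'O, pt, rfl⟩ := hB
          ((ev p)⁻¹' (Metric.ball (infDist p B.1.1) δ) ∩ (ev (xc j c))⁻¹' (Set.Iio (ε/6)))
          (((continuous_ev _).isOpen_preimage _ isOpen_ball).inter
            ((continuous_ev _).isOpen_preimage _ isOpen_Iio))
          (⟨by simp only [mem_preimage, Metric.mem_ball, ev, dist_self]; exact hδ,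
            by simp only [mem_preimage, mem_Iio, ev, hσ0 c (hall c)]; linarith⟩)
        obtain ⟨hO1, hO2⟩ := hB'O
        have hnact := inactv_of_ev hsep hε (by simpa using hO2)
        have hphi : phi j ε p pt = 0 := infDist_zero_of_mem (ball_mem_A hsep hε hpc hnact)
        rw [mem_preimage, Metric.mem_ball] at hO1
        have : ev p (FF j ε hsep hε pt) = 0 := hphi
        rw [this, Real.dist_eq, abs_sub_comm, sub_zero, abs_of_nonneg infDist_nonneg] at hO1
        exact hO1
      · obtain ⟨B', hB'O, pt, rfl⟩ := hB
          ((ev p)⁻¹' (Metric.ball (infDist p B.1.1) δ))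
          ((continuous_ev _).isOpen_preimage _ isOpen_ball)
          (by simp only [mem_preimage, Metric.mem_ball, ev, dist_self]; exact hδ)
        push_neg at hp
        have hpA : p ∈ AA j ε pt := by
          intro hmem
          simp only [UU, mem_iUnion] at hmem
          obtain ⟨c, _, hc⟩ := hmem
          exact absurd hc (hp c)
        have hphi : ev p (FF j ε hsep hε pt) = 0 := infDist_zero_of_mem hpA
        rw [mem_preimage, Metric.mem_ball, hphi, Real.dist_eq, abs_sub_comm, sub_zero,
          abs_of_nonneg infDist_nonneg] at hB'O
        exact hB'O
    rcases eq_or_lt_of_le (infDist_nonneg (x := p) (s := B.1.1)) with h | h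
    · exact h.symm
    · exact absurd (key _ h) (lt_irrefl _)


lemma isClosedEmbedding_FF : Topology.IsClosedEmbedding (FF j ε hsep hε) :=
  ⟨⟨inducing_FF hsep hε, injective_FF hsep hε⟩, isClosedRange_FF hsep hε⟩

end

end Main

end CJaux

/-- Cao–Junnila: if `(X,d)` is a non-separable metric space, then the subspace
`2^X \ {X}` of the Wijsman hyperspace contains a closed copy of
`ω₁ × (ω₁ + 1)`.  Here `ω₁` is modelled as the set of ordinals `< ω₁` and
`ω₁ + 1` as the set of ordinals `≤ ω₁` (their subspace topologies coincide with
the respective order topologies). -/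
theorem stmt7 (X : Type*) [MetricSpace X]
    (h : ¬ TopologicalSpace.SeparableSpace X) :
    ∃ f : ↥(Set.Iio omega1) × ↥(Set.Iic omega1) →
        {A : WijsmanHyperspace X // A.1 ≠ Set.univ},
      Topology.IsClosedEmbedding f := by
  obtain ⟨ε, hε, s, hpair, hunc⟩ := CJaux.exists_uncountable_separated h
  obtain ⟨j, hjinj, hjs⟩ := CJaux.exists_inj_of_uncountable hunc
  have hsep : ∀ q q' : CJaux.Qt, q ≠ q' → ε ≤ dist (j q) (j q') :=
    fun q q' hne => hpair (hjs q) (hjs q') (fun he => hne (hjinj he))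
  exact ⟨CJaux.FF j ε hsep hε, CJaux.isClosedEmbedding_FF hsep hε⟩
end

section
/- Let (X,d) be a metric space. The following are equivalent: (1) the Wijsman hyperspace (2^X, T_{W(d)}) is metrizable; (2) (2^X, T_{W(d)}) is hereditarily normal; (3) the subspace 2^X \ {X} of (2^X, T_{W(d)}) is a normal space. -/
open Metric Set TopologicalSpace Topology Filter

namespace WijsmanProof

variable {X : Type*} [MetricSpace X]

/-- The hyperspace minus the point `X` itself. -/
abbrev Sub (X : Type*) [MetricSpace X] : Type _ :=
  {A : WijsmanHyperspace X // A.1 ≠ Set.univ}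

lemma continuous_fx (x : X) :
    Continuous (fun C : Sub X => Metric.infDist x C.1.1) := by
  have h1 : Continuous (fun A : WijsmanHyperspace X => (fun y : X => Metric.infDist y A.1)) :=
    continuous_induced_dom
  exact ((continuous_apply x).comp h1).comp continuous_subtype_val

lemma exists_infDist_ne {s t : Set X} (hs : s.Nonempty) (ht : t.Nonempty)
    (hsc : IsClosed s) (htc : IsClosed t) (hne : s ≠ t) :
    ∃ x : X, Metric.infDist x s ≠ Metric.infDist x t := by
  by_contra h
  push_neg at h
  apply hne
  have key : ∀ (u v : Set X), u.Nonempty → v.Nonempty → IsClosed u → IsClosed v →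
      (∀ x, Metric.infDist x u = Metric.infDist x v) → u ⊆ v := by
    intro u v hu hv huc hvc heq x hx
    by_contra hxv
    have hpos := (hvc.notMem_iff_infDist_pos hv).mp hxv
    rw [← heq x, Metric.infDist_zero_of_mem hx] at hpos
    exact lt_irrefl 0 hpos
  exact subset_antisymm (key _ _ hs ht hsc htc h) (key _ _ ht hs htc hsc fun x => (h x).symm)

lemma tSub_eq :
    (instTopologicalSpaceSubtype : TopologicalSpace (Sub X)) =
      TopologicalSpace.induced (fun C : Sub X => fun x : X => Metric.infDist x C.1.1)
        Pi.topologicalSpace :=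
  induced_compose

/-- Basic neighborhoods in the Wijsman subspace. -/
lemma exists_finset_nhds {B : Sub X} {U : Set (Sub X)} (hU : U ∈ 𝓝 B) :
    ∃ (I : Finset X) (δ : ℝ), 0 < δ ∧
      ∀ C : Sub X, (∀ x ∈ I, |Metric.infDist x C.1.1 - Metric.infDist x B.1.1| < δ) → C ∈ U := by
  set Φ : Sub X → (X → ℝ) := fun C x => Metric.infDist x C.1.1 with hΦ
  have hnh : 𝓝 B = Filter.comap Φ (𝓝 (Φ B)) := by
    rw [tSub_eq (X := X)]
    exact nhds_induced Φ B
  rw [hnh] at hU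
  obtain ⟨s, hs, hsubs⟩ := Filter.mem_comap.mp hU
  obtain ⟨V, hVs, hVopen, hBV⟩ := mem_nhds_iff.mp hs
  obtain ⟨I, u, hu, hpi⟩ := isOpen_pi_iff.mp hVopen (Φ B) hBV
  have hball : ∀ x : X, ∃ δ : ℝ, 0 < δ ∧ (x ∈ I → Metric.ball (Φ B x) δ ⊆ u x) := by
    intro x
    by_cases hx : x ∈ I
    · obtain ⟨δ, hδ, hsub⟩ := Metric.isOpen_iff.mp (hu x hx).1 _ (hu x hx).2
      exact ⟨δ, hδ, fun _ => hsub⟩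
    · exact ⟨1, one_pos, fun h => absurd h hx⟩
  choose δf hδf hsubf using hball
  rcases I.eq_empty_or_nonempty with hI | hI
  · refine ⟨∅, 1, one_pos, fun C _ => ?_⟩
    apply hsubs
    apply hVs
    apply hpi
    intro x hx
    rw [hI] at hx
    simp at hx
  · refine ⟨I, I.inf' hI δf, ?_, ?_⟩
    · exact (Finset.lt_inf'_iff hI).mpr fun i _ => hδf i
    · intro C hC
      apply hsubs
      apply hVs
      apply hpi
      intro x hxI
      have hxI' : x ∈ I := hxI
      apply hsubf x hxI'
      rw [Metric.mem_ball, Real.dist_eq]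
      calc |Φ C x - Φ B x| < I.inf' hI δf := hC x hxI'
        _ ≤ δf x := Finset.inf'_le _ hxI'

/-- The family of complements of small balls centered at a uniformly separated set is
closed in the Wijsman subspace. -/
lemma isClosed_family {ε : ℝ} (hε : 0 < ε) {W : Set X}
    (hW : W.Pairwise fun a b => ε ≤ dist a b) :
    IsClosed {C : Sub X | ∃ y ∈ W, C.1.1 = (Metric.ball y (ε / 3))ᶜ} := by
  rw [← isOpen_compl_iff, isOpen_iff_mem_nhds]
  intro B hB
  rw [mem_compl_iff, mem_setOf_eq] at hB
  push_neg at hB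
  obtain ⟨x₀, hx₀⟩ := (Set.ne_univ_iff_exists_notMem _).mp B.2
  have hc : 0 < Metric.infDist x₀ B.1.1 := (B.1.2.2.notMem_iff_infDist_pos B.1.2.1).mp hx₀
  set c := Metric.infDist x₀ B.1.1 with hcdef
  have key : ∀ y ∈ W, ∀ C : Sub X, C.1.1 = (Metric.ball y (ε / 3))ᶜ →
      c / 2 < Metric.infDist x₀ C.1.1 → x₀ ∈ Metric.ball y (ε / 3) := by
    intro y hy C hCy hlt
    by_contra hx
    have hmem : x₀ ∈ C.1.1 := by rw [hCy]; exact hx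
    rw [Metric.infDist_zero_of_mem hmem] at hlt
    linarith
  have uniq : ∀ y ∈ W, ∀ y' ∈ W, x₀ ∈ Metric.ball y (ε / 3) →
      x₀ ∈ Metric.ball y' (ε / 3) → y = y' := by
    intro y hy y' hy' h1 h2
    by_contra hne
    rw [Metric.mem_ball] at h1 h2
    have htri : dist y y' ≤ dist y x₀ + dist x₀ y' := dist_triangle _ _ _
    rw [dist_comm y x₀] at htri
    have := hW hy hy' hne
    linarith
  set V₁ : Set (Sub X) := (fun C : Sub X => Metric.infDist x₀ C.1.1) ⁻¹' Set.Ioi (c / 2)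
    with hV₁
  have hV₁o : IsOpen V₁ := (continuous_fx x₀).isOpen_preimage _ isOpen_Ioi
  have hBV₁ : B ∈ V₁ := by
    simp only [hV₁, mem_preimage, mem_Ioi, ← hcdef]
    linarith
  by_cases hex : ∃ y₀ ∈ W, x₀ ∈ Metric.ball y₀ (ε / 3) ∧
      ((Metric.ball y₀ (ε / 3))ᶜ : Set X).Nonempty
  · obtain ⟨y₀, hy₀W, hxy₀, hy₀ne⟩ := hex
    have hBne : ((Metric.ball y₀ (ε / 3))ᶜ : Set X) ≠ B.1.1 := fun h => hB y₀ hy₀W h.symm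
    obtain ⟨x₁, hx₁⟩ := exists_infDist_ne hy₀ne B.1.2.1
      Metric.isOpen_ball.isClosed_compl B.1.2.2 hBne
    set c₁ := |Metric.infDist x₁ B.1.1 - Metric.infDist x₁ ((Metric.ball y₀ (ε / 3))ᶜ)|
      with hc₁
    have hc₁pos : 0 < c₁ := by
      rw [hc₁, abs_pos, sub_ne_zero]
      exact fun h => hx₁ (h.symm)
    set V₂ : Set (Sub X) := V₁ ∩ (fun C : Sub X => Metric.infDist x₁ C.1.1) ⁻¹'
      Metric.ball (Metric.infDist x₁ B.1.1) c₁ with hV₂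
    have hV₂o : IsOpen V₂ :=
      hV₁o.inter ((continuous_fx x₁).isOpen_preimage _ Metric.isOpen_ball)
    have hBV₂ : B ∈ V₂ := by
      refine ⟨hBV₁, ?_⟩
      simp [Metric.mem_ball]
      exact hc₁pos
    refine Filter.mem_of_superset (hV₂o.mem_nhds hBV₂) ?_
    rintro C ⟨hC1, hC2⟩ hCfam
    obtain ⟨y, hyW, hCy⟩ := hCfam
    have hx₀y : x₀ ∈ Metric.ball y (ε / 3) := key y hyW C hCy hC1
    have hyy₀ : y = y₀ := uniq y hyW y₀ hy₀W hx₀y hxy₀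
    subst hyy₀
    rw [mem_preimage, Metric.mem_ball, Real.dist_eq, hCy, abs_sub_comm] at hC2
    rw [hc₁] at hC2
    exact lt_irrefl _ hC2
  · refine Filter.mem_of_superset (hV₁o.mem_nhds hBV₁) ?_
    rintro C hC hCfam
    obtain ⟨y, hyW, hCy⟩ := hCfam
    have hx₀y : x₀ ∈ Metric.ball y (ε / 3) := key y hyW C hCy hC
    refine hex ⟨y, hyW, hx₀y, ?_⟩
    rw [← hCy]
    exact C.1.2.1

/-- If the Wijsman subspace `2^X \ {X}` is normal, then `X` is separable. -/
theorem separable_of_normalSub (hn : NormalSpace (Sub X)) : SeparableSpace X := by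
  by_contra hsep
  -- Step A: get an uncountable uniformly separated set.
  obtain ⟨ε, hε, Y, hYunc, hYsep⟩ :
      ∃ ε : ℝ, 0 < ε ∧ ∃ Y : Set X, ¬Y.Countable ∧ Y.Pairwise fun a b => ε ≤ dist a b := by
    by_contra h
    push_neg at h
    apply hsep
    have hmax : ∀ n : ℕ, ∃ D : Set X,
        (D.Pairwise fun a b => (1 : ℝ) / (n + 1) ≤ dist a b) ∧
        ∀ E : Set X, (E.Pairwise fun a b => (1 : ℝ) / (n + 1) ≤ dist a b) → D ⊆ E → E ⊆ D := by
      intro n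
      have hchainub : ∀ c ⊆ {E : Set X | E.Pairwise fun a b => (1 : ℝ) / (n + 1) ≤ dist a b},
          IsChain (· ⊆ ·) c →
          ∃ ub ∈ {E : Set X | E.Pairwise fun a b => (1 : ℝ) / (n + 1) ≤ dist a b},
            ∀ s ∈ c, s ⊆ ub := by
        intro c hc hchain
        refine ⟨⋃₀ c, ?_, fun s hs => subset_sUnion_of_mem hs⟩
        intro a ha b hb hab
        obtain ⟨s, hsc, has⟩ := ha
        obtain ⟨t, htc, hbt⟩ := hb
        rcases hchain.total hsc htc with hst | hts
        · exact hc htc (hst has) hbt hab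
        · exact hc hsc has (hts hbt) hab
      obtain ⟨D, hD⟩ := zorn_subset
        {E : Set X | E.Pairwise fun a b => (1 : ℝ) / (n + 1) ≤ dist a b} hchainub
      exact ⟨D, hD.1, fun E hE hDE => hD.2 hE hDE⟩
    choose D hDsep hDmax using hmax
    have hDcount : ∀ n, (D n).Countable := by
      intro n
      by_contra hc
      exact h ((1 : ℝ) / (n + 1)) (by positivity) (D n) hc (hDsep n)
    refine ⟨⟨⋃ n, D n, countable_iUnion hDcount, ?_⟩⟩
    rw [Metric.dense_iff]
    intro x r hr
    obtain ⟨n, hn⟩ := exists_nat_one_div_lt hr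
    by_cases hx : x ∈ D n
    · exact ⟨x, Metric.mem_ball_self hr, mem_iUnion.mpr ⟨n, hx⟩⟩
    · have : ∃ y ∈ D n, dist x y < 1 / (n + 1) := by
        by_contra hno
        push_neg at hno
        have hsymm : Symmetric fun a b : X => (1 : ℝ) / (n + 1) ≤ dist a b := by
          intro a b hab
          show (1 : ℝ) / (n + 1) ≤ dist b a
          rw [dist_comm]
          exact hab
        have hins : (insert x (D n)).Pairwise fun a b => (1 : ℝ) / (n + 1) ≤ dist a b := by
          haveI : Std.Symm (fun a b : X => (1 : ℝ) / (n + 1) ≤ dist a b) := ⟨fun a b h => hsymm h⟩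
          rw [Set.pairwise_insert_of_symm]
          exact ⟨hDsep n, fun b hb _ => hno b hb⟩
        have := hDmax n _ hins (subset_insert _ _)
        exact hx (this (mem_insert _ _))
      obtain ⟨y, hyD, hyd⟩ := this
      refine ⟨y, ?_, mem_iUnion.mpr ⟨n, hyD⟩⟩
      rw [Metric.mem_ball, dist_comm]
      linarith
  -- Step B: set up the two closed families.
  have hYinf : Y.Infinite := fun hfin => hYunc hfin.countable
  set e := hYinf.natEmbedding with he
  set u : ℕ → X := fun n => (e n : X) with hu
  have hu_mem : ∀ n, u n ∈ Y := fun n => (e n).2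
  have hu_inj : Function.Injective u := fun m n hmn => e.injective (Subtype.ext hmn)
  set S : Set X := Set.range u with hS
  set T : Set X := Y \ S with hT
  have hS_sub : S ⊆ Y := range_subset_iff.mpr hu_mem
  have hT_sub : T ⊆ Y := diff_subset
  have hTunc : ¬T.Countable := by
    intro hTc
    apply hYunc
    have hsub : Y ⊆ T ∪ S := by
      intro y hy
      by_cases hyS : y ∈ S
      · exact Or.inr hyS
      · exact Or.inl ⟨hy, hyS⟩
    exact (hTc.union (countable_range u)).mono hsub
  have hε3 : (0 : ℝ) < ε / 3 := by linarith
  -- complements of balls at points of Y are nonempty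
  have hne_c : ∀ y ∈ Y, ((Metric.ball y (ε / 3))ᶜ : Set X).Nonempty := by
    intro y hy
    obtain ⟨z, hz⟩ := (hYinf.diff (Set.finite_singleton y)).nonempty
    refine ⟨z, ?_⟩
    simp only [mem_compl_iff, Metric.mem_ball, not_lt]
    have := hYsep hz.1 hy (by simpa using hz.2)
    linarith
  -- constructor for the elements
  have mkel : ∀ y ∈ Y, ∀ z ∈ Y, y ≠ z →
      ∃ C : Sub X, C.1.1 = (Metric.ball y (ε / 3) ∪ Metric.ball z (ε / 3))ᶜ := by
    intro y hy z hz hyz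
    have hne2 : ((Metric.ball y (ε / 3) ∪ Metric.ball z (ε / 3))ᶜ : Set X).Nonempty := by
      obtain ⟨w, hw⟩ := (hYinf.diff ((Set.finite_singleton y).insert z)).nonempty
      have hwY : w ∈ Y := hw.1
      have hwy : w ≠ y := by
        intro hwy; apply hw.2; rw [hwy]; simp
      have hwz : w ≠ z := by
        intro hwz; apply hw.2; rw [hwz]; simp
      refine ⟨w, ?_⟩
      simp only [mem_compl_iff, mem_union, Metric.mem_ball, not_or, not_lt]
      constructor
      · have := hYsep hwY hy hwy; linarith
      · have := hYsep hwY hz hwz; linarith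
    refine ⟨⟨⟨_, hne2, (Metric.isOpen_ball.union Metric.isOpen_ball).isClosed_compl⟩, ?_⟩, rfl⟩
    intro hcon
    exact (Set.eq_univ_iff_forall.mp hcon y) (Or.inl (Metric.mem_ball_self hε3))
  have mkel1 : ∀ y ∈ Y, ∃ C : Sub X, C.1.1 = (Metric.ball y (ε / 3))ᶜ := by
    intro y hy
    refine ⟨⟨⟨_, hne_c y hy, Metric.isOpen_ball.isClosed_compl⟩, ?_⟩, rfl⟩
    intro hcon
    exact (Set.eq_univ_iff_forall.mp hcon y) (Metric.mem_ball_self hε3)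
  -- the two closed disjoint families
  set 𝒜 : Set (Sub X) := {C : Sub X | ∃ y ∈ S, C.1.1 = (Metric.ball y (ε / 3))ᶜ} with h𝒜
  set ℬ : Set (Sub X) := {C : Sub X | ∃ y ∈ T, C.1.1 = (Metric.ball y (ε / 3))ᶜ} with hℬ
  have h𝒜c : IsClosed 𝒜 := isClosed_family hε (hYsep.mono hS_sub)
  have hℬc : IsClosed ℬ := isClosed_family hε (hYsep.mono hT_sub)
  have hdisj : Disjoint 𝒜 ℬ := by
    rw [Set.disjoint_left]
    rintro C ⟨y, hyS, h1⟩ ⟨y', hy'T, h2⟩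
    have hyy' : y ≠ y' := by
      intro h; rw [h] at hyS; exact hy'T.2 hyS
    have hballs : Metric.ball y (ε / 3) = Metric.ball y' (ε / 3) :=
      compl_injective (h1.symm.trans h2)
    have : y ∈ Metric.ball y' (ε / 3) := hballs ▸ Metric.mem_ball_self hε3
    rw [Metric.mem_ball] at this
    have := hYsep (hS_sub hyS) (hT_sub hy'T) hyy'
    linarith
  obtain ⟨U, V, hUo, hVo, hAU, hBV, hUV⟩ := hn.normal 𝒜 ℬ h𝒜c hℬc hdisj
  -- choice of basic neighborhoods around each 𝒜-element
  choose Amem hAmem using fun n => mkel1 (u n) (hu_mem n)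
  have hAn𝒜 : ∀ n, Amem n ∈ 𝒜 := fun n => ⟨u n, ⟨n, rfl⟩, hAmem n⟩
  have hexU : ∀ n : ℕ, ∃ (I : Finset X) (δ : ℝ), 0 < δ ∧
      ∀ C : Sub X, (∀ x ∈ I,
        |Metric.infDist x C.1.1 - Metric.infDist x ((Metric.ball (u n) (ε / 3))ᶜ)| < δ) →
        C ∈ U := by
    intro n
    obtain ⟨I, δ, hδ, hcrit⟩ := exists_finset_nhds (hUo.mem_nhds (hAU (hAn𝒜 n)))
    exact ⟨I, δ, hδ, fun C hC => hcrit C (by rw [hAmem n]; exact hC)⟩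
  choose I δ hδ hcrit using hexU
  -- witnesses
  have hwit : ∀ n : ℕ, ∀ x : X, ∃ a : X, a ∈ ((Metric.ball (u n) (ε / 3))ᶜ : Set X) ∧
      dist x a < Metric.infDist x ((Metric.ball (u n) (ε / 3))ᶜ) + δ n := by
    intro n x
    have hne := hne_c (u n) (hu_mem n)
    have hlt : Metric.infDist x ((Metric.ball (u n) (ε / 3))ᶜ) <
        Metric.infDist x ((Metric.ball (u n) (ε / 3))ᶜ) + δ n :=
      lt_add_of_pos_right _ (hδ n)
    obtain ⟨a, ha, hd⟩ := (Metric.infDist_lt_iff hne).mp hlt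
    exact ⟨a, ha, hd⟩
  choose w hw_mem hw_dist using hwit
  -- bad sets
  set Bad : ℕ → Set X := fun n => {y | y ∈ T ∧ ∃ x ∈ I n, w n x ∈ Metric.ball y (ε / 3)}
    with hBad
  have hBadfin : ∀ n, (Bad n).Finite := by
    intro n
    have hsub : Bad n ⊆ ⋃ x ∈ (I n : Set X), {y | y ∈ T ∧ dist (w n x) y < ε / 3} := by
      rintro y ⟨hyT, x, hxI, hxb⟩
      refine mem_iUnion₂.mpr ⟨x, hxI, hyT, ?_⟩
      rwa [Metric.mem_ball] at hxb
    refine Set.Finite.subset (Set.Finite.biUnion (I n).finite_toSet fun x _ => ?_) hsub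
    apply Set.Subsingleton.finite
    rintro y₁ ⟨hy₁T, hy₁⟩ y₂ ⟨hy₂T, hy₂⟩
    by_contra hne12
    have htri : dist y₁ y₂ ≤ dist y₁ (w n x) + dist (w n x) y₂ := dist_triangle _ _ _
    rw [dist_comm y₁ (w n x)] at htri
    have := hYsep (hT_sub hy₁T) (hT_sub hy₂T) hne12
    linarith
  -- pick β ∈ T avoiding all bad sets
  have hnotsub : ¬(T ⊆ ⋃ n, Bad n) := fun hsub =>
    hTunc ((countable_iUnion fun n => (hBadfin n).countable).mono hsub)
  obtain ⟨β, hβT, hβBad⟩ := not_subset.mp hnotsub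
  -- data for β
  obtain ⟨Bβ, hBβ⟩ := mkel1 β (hT_sub hβT)
  have hBβℬ : Bβ ∈ ℬ := ⟨β, hβT, hBβ⟩
  obtain ⟨I', δ', hδ', hcrit'⟩ := exists_finset_nhds (hVo.mem_nhds (hBV hBβℬ))
  rw [hBβ] at hcrit'
  have hwit' : ∀ x : X, ∃ a : X, a ∈ ((Metric.ball β (ε / 3))ᶜ : Set X) ∧
      dist x a < Metric.infDist x ((Metric.ball β (ε / 3))ᶜ) + δ' := by
    intro x
    have hne := hne_c β (hT_sub hβT)
    obtain ⟨a, ha, hd⟩ := (Metric.infDist_lt_iff hne).mp (lt_add_of_pos_right _ hδ')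
    exact ⟨a, ha, hd⟩
  choose w' hw'_mem hw'_dist using hwit'
  -- bad set of indices for β
  set Bad' : Set ℕ := {n | ∃ x ∈ I', w' x ∈ Metric.ball (u n) (ε / 3)} with hBad'
  have hBad'fin : Bad'.Finite := by
    have hsub : Bad' ⊆ ⋃ x ∈ (I' : Set X), {n | dist (w' x) (u n) < ε / 3} := by
      rintro n ⟨x, hxI, hxb⟩
      refine mem_iUnion₂.mpr ⟨x, hxI, ?_⟩
      rwa [Metric.mem_ball] at hxb
    refine Set.Finite.subset (Set.Finite.biUnion I'.finite_toSet fun x _ => ?_) hsub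
    apply Set.Subsingleton.finite
    intro n₁ hn₁ n₂ hn₂
    by_contra hne12
    have hune : u n₁ ≠ u n₂ := fun h => hne12 (hu_inj h)
    have htri : dist (u n₁) (u n₂) ≤ dist (u n₁) (w' x) + dist (w' x) (u n₂) :=
      dist_triangle _ _ _
    rw [dist_comm (u n₁) (w' x)] at htri
    have := hYsep (hu_mem n₁) (hu_mem n₂) hune
    simp only [mem_setOf_eq] at hn₁ hn₂
    linarith
  obtain ⟨n₀, hn₀⟩ := (hBad'fin.infinite_compl).nonempty
  -- u n₀ ≠ β
  have hαβ : u n₀ ≠ β := by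
    intro h
    have : β ∈ S := ⟨n₀, h⟩
    exact hβT.2 this
  -- the crossing element
  obtain ⟨CC, hCC⟩ := mkel (u n₀) (hu_mem n₀) β (hT_sub hβT) hαβ
  -- CC ∈ U
  have hsubα : CC.1.1 ⊆ ((Metric.ball (u n₀) (ε / 3))ᶜ : Set X) := by
    rw [hCC]; exact compl_subset_compl.mpr subset_union_left
  have hsubβ : CC.1.1 ⊆ ((Metric.ball β (ε / 3))ᶜ : Set X) := by
    rw [hCC]; exact compl_subset_compl.mpr subset_union_right
  have hCCU : CC ∈ U := by
    apply hcrit n₀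
    intro x hxI
    have hlow : Metric.infDist x ((Metric.ball (u n₀) (ε / 3))ᶜ) ≤
        Metric.infDist x CC.1.1 :=
      Metric.infDist_le_infDist_of_subset hsubα CC.1.2.1
    have hwα : w n₀ x ∈ CC.1.1 := by
      rw [hCC]
      intro hmem
      rcases hmem with hmem | hmem
      · exact hw_mem n₀ x hmem
      · -- w n₀ x ∈ ball β would make β bad
        apply hβBad
        exact mem_iUnion.mpr ⟨n₀, hβT, x, hxI, hmem⟩
    have hup : Metric.infDist x CC.1.1 ≤ dist x (w n₀ x) :=
      Metric.infDist_le_dist_of_mem hwα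
    have := hw_dist n₀ x
    rw [abs_lt]
    constructor <;> linarith
  -- CC ∈ V
  have hCCV : CC ∈ V := by
    apply hcrit'
    intro x hxI
    have hlow : Metric.infDist x ((Metric.ball β (ε / 3))ᶜ) ≤ Metric.infDist x CC.1.1 :=
      Metric.infDist_le_infDist_of_subset hsubβ CC.1.2.1
    have hwβ : w' x ∈ CC.1.1 := by
      rw [hCC]
      intro hmem
      rcases hmem with hmem | hmem
      · -- w' x ∈ ball (u n₀) would make n₀ bad
        exact hn₀ ⟨x, hxI, hmem⟩
      · exact hw'_mem x hmem
    have hup : Metric.infDist x CC.1.1 ≤ dist x (w' x) :=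
      Metric.infDist_le_dist_of_mem hwβ
    have := hw'_dist x
    rw [abs_lt]
    constructor <;> linarith
  exact Set.disjoint_left.mp hUV hCCU hCCV

/-- If `X` is separable, the Wijsman hyperspace is metrizable. -/
theorem metrizable_of_separable [SeparableSpace X] :
    MetrizableSpace (WijsmanHyperspace X) := by
  obtain ⟨D, hDc, hDd⟩ := TopologicalSpace.exists_countable_dense X
  haveI : Countable D := hDc.to_subtype
  set g : WijsmanHyperspace X → (D → ℝ) := fun A p => Metric.infDist p.1 A.1 with hg
  have hg_inj : Function.Injective g := by
    intro A B hAB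
    have hfun : ∀ x : X, Metric.infDist x A.1 = Metric.infDist x B.1 := by
      have hc1 : Continuous fun x : X => Metric.infDist x A.1 := Metric.continuous_infDist_pt _
      have hc2 : Continuous fun x : X => Metric.infDist x B.1 := Metric.continuous_infDist_pt _
      have heq : Set.EqOn (fun x : X => Metric.infDist x A.1)
          (fun x : X => Metric.infDist x B.1) D := fun p hp => congrFun hAB ⟨p, hp⟩
      exact fun x => congrFun (Continuous.ext_on hDd hc1 hc2 heq) x
    apply Subtype.ext
    by_contra hne
    obtain ⟨x, hx⟩ := exists_infDist_ne A.2.1 B.2.1 A.2.2 B.2.2 hne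
    exact hx (hfun x)
  have hres : (Pi.topologicalSpace : TopologicalSpace (X → ℝ)) ≤
      TopologicalSpace.induced (fun f : X → ℝ => fun p : D => f p.1) Pi.topologicalSpace :=
    continuous_iff_le_induced.mp (continuous_pi fun p => continuous_apply p.1)
  have hA : wijsmanTopology X ≤ TopologicalSpace.induced g Pi.topologicalSpace := by
    have h1 : wijsmanTopology X ≤
        TopologicalSpace.induced (fun A : WijsmanHyperspace X => fun x : X => Metric.infDist x A.1)
          (TopologicalSpace.induced (fun f : X → ℝ => fun p : D => f p.1) Pi.topologicalSpace) :=
      le_trans (le_of_eq rfl) (induced_mono hres)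
    exact le_trans h1 (le_of_eq induced_compose)
  have hB : TopologicalSpace.induced g Pi.topologicalSpace ≤ wijsmanTopology X := by
    letI tD : TopologicalSpace (WijsmanHyperspace X) :=
      TopologicalSpace.induced g Pi.topologicalSpace
    have hphi : @Continuous _ _ tD _
        (fun A : WijsmanHyperspace X => fun x : X => Metric.infDist x A.1) := by
      apply continuous_pi
      intro x
      obtain ⟨seq, hseqD, hseqlim⟩ : ∃ seq : ℕ → X, (∀ n, seq n ∈ D) ∧
          Filter.Tendsto seq Filter.atTop (𝓝 x) :=
        mem_closure_iff_seq_limit.mp (hDd x)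
      have htu : TendstoUniformly
          (fun (n : ℕ) (A : WijsmanHyperspace X) => Metric.infDist (seq n) A.1)
          (fun A : WijsmanHyperspace X => Metric.infDist x A.1) Filter.atTop := by
        rw [Metric.tendstoUniformly_iff]
        intro ε' hε'
        have hev : ∀ᶠ n in Filter.atTop, dist (seq n) x < ε' :=
          (Metric.tendsto_nhds.mp hseqlim) ε' hε'
        filter_upwards [hev] with n hn A
        have hb : dist (Metric.infDist x A.1) (Metric.infDist (seq n) A.1) ≤
            1 * dist x (seq n) :=
          (Metric.lipschitz_infDist_pt A.1).dist_le_mul x (seq n)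
        rw [one_mul, dist_comm x (seq n)] at hb
        exact lt_of_le_of_lt hb hn
      apply htu.continuous
      refine (Filter.Eventually.of_forall fun n => ?_).frequently
      have hg' : @Continuous _ _ tD _ g := @continuous_induced_dom _ _ g Pi.topologicalSpace
      have hcn : @Continuous _ _ tD _ fun A : WijsmanHyperspace X => g A ⟨seq n, hseqD n⟩ :=
        (continuous_apply (⟨seq n, hseqD n⟩ : D)).comp hg'
      exact hcn
    exact continuous_iff_le_induced.mp hphi
  have htop : wijsmanTopology X = TopologicalSpace.induced g Pi.topologicalSpace :=
    le_antisymm hA hB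
  letI : Encodable D := Encodable.ofCountable _
  letI mD : MetricSpace (D → ℝ) := PiCountable.metricSpace
  haveI : MetrizableSpace (D → ℝ) := inferInstance
  have hemb : Topology.IsEmbedding g := ⟨⟨htop⟩, hg_inj⟩
  exact hemb.metrizableSpace

end WijsmanProof

/-- Cao–Junnila: for a metric space `(X,d)` the following are equivalent:
(1) the Wijsman hyperspace is metrizable; (2) it is hereditarily normal;
(3) the subspace `2^X \ {X}` is normal. -/
theorem stmt8 (X : Type*) [MetricSpace X] :
    (TopologicalSpace.MetrizableSpace (WijsmanHyperspace X) ↔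
      ∀ s : Set (WijsmanHyperspace X), NormalSpace s) ∧
    (TopologicalSpace.MetrizableSpace (WijsmanHyperspace X) ↔
      NormalSpace {A : WijsmanHyperspace X // A.1 ≠ Set.univ}) := by
  have main : NormalSpace {A : WijsmanHyperspace X // A.1 ≠ Set.univ} →
      TopologicalSpace.MetrizableSpace (WijsmanHyperspace X) := fun h => by
    haveI := WijsmanProof.separable_of_normalSub h
    exact WijsmanProof.metrizable_of_separable
  constructor
  · constructor
    · intro hm s
      haveI := hm
      letI : MetricSpace (WijsmanHyperspace X) :=
        TopologicalSpace.metrizableSpaceMetric (WijsmanHyperspace X)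
      infer_instance
    · intro h
      exact main (h {A | A.1 ≠ Set.univ})
  · constructor
    · intro hm
      haveI := hm
      letI : MetricSpace (WijsmanHyperspace X) :=
        TopologicalSpace.metrizableSpaceMetric (WijsmanHyperspace X)
      infer_instance
    · exact main
end

section
/- Let (X,d) be a separable complete metric space. Then the Wijsman hyperspace (2^X, T_{W(d)}) is a Polish space (separable and completely metrizable). -/
open Set Topology Metric Filter

open Set Topology Metric Filter

section Aux

/-- A Gδ subset of a Polish space is Polish. -/
theorem myGdeltaPolish {α : Type*} [TopologicalSpace α] [PolishSpace α] {s : Set α}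
    (hs : IsGδ s) : PolishSpace s := by
  letI := TopologicalSpace.upgradeIsCompletelyMetrizable α
  obtain ⟨U, hUo, rfl⟩ := hs.eq_iInter_nat
  haveI : ∀ n, PolishSpace (U n) := fun n => (hUo n).polishSpace
  have hmem : ∀ (x : (⋂ n, U n : Set α)) (n : ℕ), (x : α) ∈ U n := fun x n =>
    (mem_iInter.1 x.2) n
  let g : (⋂ n, U n : Set α) → (∀ n : ℕ, U n) := fun x n => ⟨(x : α), hmem x n⟩
  have hg_cont : Continuous g := by
    apply continuous_pi
    intro n
    exact Continuous.subtype_mk continuous_subtype_val _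
  have hval : (fun (y : ∀ n : ℕ, U n) => ((y 0 : α))) ∘ g = Subtype.val := rfl
  have hind : Topology.IsInducing g := by
    refine Topology.IsInducing.of_comp (g := fun (y : ∀ n : ℕ, U n) => ((y 0 : α))) hg_cont
      (continuous_subtype_val.comp (continuous_apply 0)) ?_
    rw [hval]
    exact Topology.IsInducing.subtypeVal
  have hinj : Function.Injective g := by
    intro a b hab
    have := congrArg (fun y => ((y 0 : α))) hab
    exact Subtype.ext this
  have hrange : IsClosed (Set.range g) := by
    have : Set.range g = ⋂ n, {y : ∀ n : ℕ, U n | ((y n : α)) = ((y 0 : α))} := by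
      ext y
      simp only [mem_range, mem_iInter, mem_setOf_eq]
      constructor
      · rintro ⟨x, rfl⟩ n; rfl
      · intro h
        have hy0 : (y 0 : α) ∈ ⋂ n, U n := mem_iInter.2 fun n => h n ▸ (y n).2
        exact ⟨⟨(y 0 : α), hy0⟩, funext fun n => Subtype.ext (h n).symm⟩
    rw [this]
    exact isClosed_iInter fun n => isClosed_eq
      (continuous_subtype_val.comp (continuous_apply n))
      (continuous_subtype_val.comp (continuous_apply 0))
  exact (Topology.IsClosedEmbedding.mk ⟨hind, hinj⟩ hrange).polishSpace

variable {X : Type*} [MetricSpace X] (u : ℕ → X)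

/-- The Lipschitz extension of `t` relative to the sequence `u`. -/
noncomputable def gW (t : ℕ → ℝ) (x : X) : ℝ := ⨅ n, (t n + dist x (u n))

/-- The candidate image set in `ℕ → ℝ`. -/
def SW : Set (ℕ → ℝ) :=
  {t | (∀ n, 0 ≤ t n) ∧ (∀ n m, t n ≤ t m + dist (u n) (u m)) ∧
    ∀ n, ∀ ε : ℝ, 0 < ε → ∃ m, dist (u n) (u m) < t n + ε ∧ t m < ε}

lemma gW_bddBelow {t : ℕ → ℝ} (ht0 : ∀ n, 0 ≤ t n) (x : X) :
    BddBelow (Set.range fun n => t n + dist x (u n)) := by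
  refine ⟨0, ?_⟩
  rintro y ⟨n, rfl⟩
  exact add_nonneg (ht0 n) dist_nonneg

lemma gW_le {t : ℕ → ℝ} (ht0 : ∀ n, 0 ≤ t n) (x : X) (n : ℕ) :
    gW u t x ≤ t n + dist x (u n) :=
  ciInf_le (gW_bddBelow u ht0 x) n

lemma gW_lipschitz {t : ℕ → ℝ} (ht0 : ∀ n, 0 ≤ t n) (x y : X) :
    gW u t x ≤ gW u t y + dist x y := by
  rw [← sub_le_iff_le_add]
  refine le_ciInf fun n => ?_
  have h1 := gW_le u ht0 x n
  have h2 := dist_triangle x y (u n)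
  simp only [sub_le_iff_le_add]
  calc gW u t x ≤ t n + dist x (u n) := h1
    _ ≤ t n + (dist x y + dist y (u n)) := by linarith
    _ = t n + dist y (u n) + dist x y := by ring

lemma gW_continuous {t : ℕ → ℝ} (ht0 : ∀ n, 0 ≤ t n) : Continuous (gW u t) :=
  (LipschitzWith.of_le_add fun x y => gW_lipschitz u ht0 x y).continuous

/-- Key approximation lemma: starting from `u n`, one can find a point of
`{x | gW u t x ≤ 0}` at distance at most `t n + 2ε`. -/
lemma gW_key [CompleteSpace X] {t : ℕ → ℝ} (ht : t ∈ SW u) (n : ℕ) {ε : ℝ} (hε : 0 < ε) :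
    ∃ a : X, gW u t a ≤ 0 ∧ dist (u n) a ≤ t n + 2 * ε := by
  obtain ⟨ht0, htL, htA⟩ := ht
  let c : ℕ → ℕ := fun k => Nat.rec n (fun k ih => (htA ih (ε / 2 ^ (k + 2)) (by positivity)).choose) k
  have hspec : ∀ k, dist (u (c k)) (u (c (k + 1))) < t (c k) + ε / 2 ^ (k + 2) ∧
      t (c (k + 1)) < ε / 2 ^ (k + 2) := fun k =>
    (htA (c k) (ε / 2 ^ (k + 2)) (by positivity)).choose_spec
  set v : ℕ → X := fun k => u (c (k + 1)) with hv
  have hbound : ∀ k, dist (v k) (v (k + 1)) ≤ ε / 2 * (1 / 2) ^ k := by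
    intro k
    have h1 := (hspec (k + 1)).1
    have h2 := (hspec k).2
    have e1 : ε / 2 ^ (k + 1 + 2) = (ε / 2 ^ k) / 8 := by rw [pow_add]; ring
    have e2 : ε / 2 ^ (k + 2) = (ε / 2 ^ k) / 4 := by rw [pow_add]; ring
    have h2k : (0:ℝ) < 2 ^ k := by positivity
    have e3 : ε / 2 * (1 / 2) ^ k = (ε / 2 ^ k) / 2 := by
      field_simp
      rw [← mul_pow]; norm_num
    rw [e3]
    calc dist (v k) (v (k + 1)) ≤ t (c (k + 1)) + ε / 2 ^ (k + 1 + 2) := h1.le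
      _ ≤ ε / 2 ^ (k + 2) + ε / 2 ^ (k + 1 + 2) := by linarith
      _ = (ε / 2 ^ k) / 4 + (ε / 2 ^ k) / 8 := by rw [e1, e2]
      _ ≤ (ε / 2 ^ k) / 2 := by
          have : 0 ≤ ε / 2 ^ k := by positivity
          linarith
  have hcauchy : CauchySeq v := cauchySeq_of_le_geometric (1 / 2) (ε / 2) (by norm_num) hbound
  obtain ⟨a, ha⟩ := cauchySeq_tendsto_of_complete hcauchy
  have hdva : dist (v 0) a ≤ ε := by
    have := dist_le_of_le_geometric_of_tendsto₀ (1 / 2) (ε / 2) (by norm_num) hbound ha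
    calc dist (v 0) a ≤ ε / 2 / (1 - 1 / 2) := this
      _ = ε := by
          rw [div_eq_iff (by norm_num : (1:ℝ) - 1/2 ≠ 0)]
          ring
  refine ⟨a, ?_, ?_⟩
  · -- gW u t a ≤ 0
    have hd0 : Tendsto (fun k => dist a (v k)) atTop (𝓝 0) := by
      have : Tendsto (fun k => dist a (v k)) atTop (𝓝 (dist a a)) :=
        tendsto_const_nhds.dist ha
      rwa [dist_self] at this
    have ht0' : Tendsto (fun k => t (c (k + 1))) atTop (𝓝 0) := by
      apply squeeze_zero (fun k => ht0 _) (fun k => (hspec k).2.le)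
      apply Tendsto.const_div_atTop
      exact (tendsto_pow_atTop_atTop_of_one_lt (by norm_num : (1:ℝ) < 2)).comp
        (tendsto_add_atTop_nat 2)
    have hsum : Tendsto (fun k => t (c (k + 1)) + dist a (v k)) atTop (𝓝 0) := by
      simpa using ht0'.add hd0
    refine ge_of_tendsto' hsum fun k => ?_
    exact gW_le u ht0 a (c (k + 1))
  · -- dist (u n) a ≤ t n + 2 * ε
    have h0 := (hspec 0).1
    have hc0 : c 0 = n := rfl
    rw [hc0] at h0
    have h0v : dist (u n) (v 0) < t n + ε / 2 ^ (0 + 2) := h0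
    have hq : ε / 2 ^ (0 + 2) = ε / 4 := by norm_num
    rw [hq] at h0v
    calc dist (u n) a ≤ dist (u n) (v 0) + dist (v 0) a := dist_triangle _ _ _
      _ ≤ (t n + ε / 4) + ε := by linarith
      _ ≤ t n + 2 * ε := by linarith

end Aux

section Main
variable {X : Type*} [MetricSpace X] {u : ℕ → X}

/-- distance functional coordinates of a closed set recover `t` for `t ∈ SW u`. -/
lemma infDist_A_eq [CompleteSpace X] {t : ℕ → ℝ} (ht : t ∈ SW u) (n : ℕ) :
    infDist (u n) {x : X | gW u t x ≤ 0} = t n := by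
  obtain ⟨ht0, htL, htA⟩ := ht
  have hA_ne : {x : X | gW u t x ≤ 0}.Nonempty := by
    obtain ⟨a, ha, -⟩ := gW_key u ⟨ht0, htL, htA⟩ 0 one_pos
    exact ⟨a, ha⟩
  -- lower bound for distances to points of A
  have hlow : ∀ a ∈ {x : X | gW u t x ≤ 0}, t n ≤ dist (u n) a := by
    intro a ha
    refine le_of_forall_pos_le_add fun ε hε => ?_
    have : gW u t a < ε := lt_of_le_of_lt ha hε
    obtain ⟨m, hm⟩ := exists_lt_of_ciInf_lt this
    calc t n ≤ t m + dist (u n) (u m) := htL n m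
      _ ≤ t m + (dist (u n) a + dist a (u m)) := by
          have := dist_triangle (u n) a (u m); linarith
      _ = dist (u n) a + (t m + dist a (u m)) := by ring
      _ ≤ dist (u n) a + ε := by linarith
  refine le_antisymm ?_ ?_
  · refine le_of_forall_pos_le_add fun ε hε => ?_
    obtain ⟨a, haA, had⟩ := gW_key u ⟨ht0, htL, htA⟩ n (half_pos hε)
    calc infDist (u n) {x : X | gW u t x ≤ 0} ≤ dist (u n) a := infDist_le_dist_of_mem haA
      _ ≤ t n + 2 * (ε / 2) := had
      _ = t n + ε := by ring
  · by_contra h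
    push_neg at h
    obtain ⟨a, haA, hlt⟩ := (infDist_lt_iff hA_ne).1 h
    exact absurd (hlow a haA) (not_le.2 hlt)

/-- `F` maps into `SW u`. -/
lemma F_mem_SW (hu : DenseRange u) (A : Set X) (hA : A.Nonempty) :
    (fun n => infDist (u n) A) ∈ SW u := by
  refine ⟨fun n => infDist_nonneg, fun n m => infDist_le_infDist_add_dist, ?_⟩
  intro n ε hε
  obtain ⟨a, haA, hdist⟩ := (infDist_lt_iff hA).1
    (lt_add_of_pos_right (infDist (u n) A) (half_pos hε) :
      infDist (u n) A < infDist (u n) A + ε / 2)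
  obtain ⟨m, hm⟩ := Metric.denseRange_iff.1 hu a (ε / 2) (half_pos hε)
  refine ⟨m, ?_, ?_⟩
  · calc dist (u n) (u m) ≤ dist (u n) a + dist a (u m) := dist_triangle _ _ _
      _ < (infDist (u n) A + ε / 2) + ε / 2 := by linarith
      _ = infDist (u n) A + ε := by ring
  · calc infDist (u m) A ≤ dist (u m) a := infDist_le_dist_of_mem haA
      _ = dist a (u m) := dist_comm _ _
      _ < ε / 2 := hm
      _ < ε := by linarith

/-- Injectivity of the coordinate map. -/
lemma F_injective (hu : DenseRange u) (A B : Set X) (hA : A.Nonempty ∧ IsClosed A)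
    (hB : B.Nonempty ∧ IsClosed B)
    (h : ∀ n, infDist (u n) A = infDist (u n) B) : A = B := by
  have heq : (fun x : X => infDist x A) = fun x => infDist x B := by
    refine Continuous.ext_on hu (continuous_infDist_pt A) (continuous_infDist_pt B) ?_
    rintro x ⟨n, rfl⟩
    exact h n
  ext x
  rw [hA.2.mem_iff_infDist_zero hA.1, hB.2.mem_iff_infDist_zero hB.1,
    show infDist x A = infDist x B from congrFun heq x]

end Main

section Gdelta
variable {X : Type*} [MetricSpace X]

lemma SW_isGδ (u : ℕ → X) : IsGδ (SW u) := by
  have hrw : SW u = {t : ℕ → ℝ | ∀ n, 0 ≤ t n} ∩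
      ({t : ℕ → ℝ | ∀ n m, t n ≤ t m + dist (u n) (u m)} ∩
        ⋂ (n : ℕ) (k : ℕ), {t : ℕ → ℝ |
          ∃ m, dist (u n) (u m) < t n + 1 / (k + 1) ∧ t m < 1 / (k + 1)}) := by
    ext t
    simp only [SW, mem_setOf_eq, mem_inter_iff, mem_iInter]
    refine and_congr_right fun _ => and_congr_right fun _ => ?_
    constructor
    · intro h n k
      exact h n (1 / (k + 1)) (by positivity)
    · intro h n ε hε
      obtain ⟨k, hk⟩ := exists_nat_one_div_lt hε
      obtain ⟨m, hm1, hm2⟩ := h n k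
      exact ⟨m, by linarith, by linarith⟩
  rw [hrw]
  have hc1 : IsClosed {t : ℕ → ℝ | ∀ n, 0 ≤ t n} := by
    have : {t : ℕ → ℝ | ∀ n, 0 ≤ t n} = ⋂ n, {t : ℕ → ℝ | 0 ≤ t n} := by
      ext t; simp [mem_iInter]
    rw [this]
    exact isClosed_iInter fun n => isClosed_le continuous_const (continuous_apply n)
  have hc2 : IsClosed {t : ℕ → ℝ | ∀ n m, t n ≤ t m + dist (u n) (u m)} := by
    have : {t : ℕ → ℝ | ∀ n m, t n ≤ t m + dist (u n) (u m)} =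
        ⋂ (n : ℕ) (m : ℕ), {t : ℕ → ℝ | t n ≤ t m + dist (u n) (u m)} := by
      ext t; simp [mem_iInter]
    rw [this]
    exact isClosed_iInter fun n => isClosed_iInter fun m =>
      isClosed_le (continuous_apply n) ((continuous_apply m).add continuous_const)
  have hopen : ∀ n k : ℕ, IsOpen {t : ℕ → ℝ |
      ∃ m, dist (u n) (u m) < t n + 1 / (k + 1) ∧ t m < 1 / (k + 1)} := by
    intro n k
    have : {t : ℕ → ℝ | ∃ m, dist (u n) (u m) < t n + 1 / (k + 1) ∧ t m < 1 / (k + 1)} =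
        ⋃ m, ({t : ℕ → ℝ | dist (u n) (u m) < t n + 1 / (k + 1)} ∩
          {t : ℕ → ℝ | t m < 1 / (k + 1)}) := by
      ext t; simp [mem_iUnion, mem_inter_iff]
    rw [this]
    exact isOpen_iUnion fun m => (isOpen_lt continuous_const
      ((continuous_apply n).add continuous_const)).inter
      (isOpen_lt (continuous_apply m) continuous_const)
  exact hc1.isGδ.inter (hc2.isGδ.inter
    (IsGδ.iInter fun n => IsGδ.iInter fun k => (hopen n k).isGδ))

end Gdelta

/-- Beer: the Wijsman hyperspace of a separable complete metric space is Polish. -/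
theorem stmt12 (X : Type*) [MetricSpace X] [TopologicalSpace.SeparableSpace X]
    [CompleteSpace X] :
    PolishSpace (WijsmanHyperspace X) := by
  cases isEmpty_or_nonempty X with
  | inl h =>
    haveI : IsEmpty (WijsmanHyperspace X) :=
      ⟨fun A => by obtain ⟨x, -⟩ := A.2.1; exact h.false x⟩
    haveI : DiscreteTopology (WijsmanHyperspace X) :=
      discreteTopology_iff_isOpen_singleton.2 fun a => isEmptyElim a
    infer_instance
  | inr h =>
    obtain ⟨u, hu⟩ := TopologicalSpace.exists_dense_seq X
    let F' : WijsmanHyperspace X → SW u := fun A =>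
      ⟨fun n => infDist (u n) A.1, F_mem_SW hu A.1 A.2.1⟩
    have hbij : Function.Bijective F' := by
      constructor
      · intro A B hAB
        exact Subtype.ext (F_injective hu A.1 B.1 A.2 B.2
          fun n => congrFun (congrArg Subtype.val hAB) n)
      · intro s
        have hs := s.2
        have hA_ne : {x : X | gW u s.1 x ≤ 0}.Nonempty := by
          obtain ⟨a, ha, -⟩ := gW_key u hs 0 one_pos
          exact ⟨a, ha⟩
        have hA_cl : IsClosed {x : X | gW u s.1 x ≤ 0} :=
          isClosed_le (gW_continuous u hs.1) continuous_const
        refine ⟨⟨{x : X | gW u s.1 x ≤ 0}, hA_ne, hA_cl⟩, ?_⟩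
        exact Subtype.ext (funext fun n => infDist_A_eq hs n)
    let e : WijsmanHyperspace X ≃ SW u := Equiv.ofBijective F' hbij
    have hkey : ∀ (s : SW u) (n : ℕ), infDist (u n) ((e.symm s).1 : Set X) = (s : ℕ → ℝ) n :=
      fun s n => congrFun (congrArg Subtype.val (e.apply_symm_apply s)) n
    have hcontF : Continuous F' := by
      apply Continuous.subtype_mk
      apply continuous_pi
      intro n
      have hG : Continuous (fun A : WijsmanHyperspace X => fun x : X => infDist x A.1) :=
        continuous_induced_dom
      exact (continuous_apply (u n)).comp hG
    have hconte : Continuous (e.symm : SW u → WijsmanHyperspace X) := by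
      apply continuous_induced_rng.2
      apply continuous_pi
      intro x
      have hφ : ∀ j : ℕ, ∃ m, dist x (u m) < 1 / (j + 1) :=
        fun j => Metric.denseRange_iff.1 hu x _ (by positivity)
      choose φ hφ using hφ
      have huc : TendstoUniformly (fun j (s : SW u) => (s : ℕ → ℝ) (φ j))
          (fun s => infDist x ((e.symm s).1 : Set X)) atTop := by
        rw [Metric.tendstoUniformly_iff]
        intro ε hε
        obtain ⟨J, hJ⟩ := exists_nat_one_div_lt hε
        filter_upwards [eventually_ge_atTop J] with j hj s
        have key := hkey s (φ j)
        rw [← key]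
        set B : Set X := ((e.symm s).1 : Set X)
        have h1 : dist (infDist x B) (infDist (u (φ j)) B) ≤ dist x (u (φ j)) := by
          rw [Real.dist_eq, abs_sub_le_iff]
          constructor
          · have := infDist_le_infDist_add_dist (x := x) (y := u (φ j)) (s := B)
            linarith
          · have := infDist_le_infDist_add_dist (x := u (φ j)) (y := x) (s := B)
            rw [dist_comm] at this
            linarith
        have h2 : (1 : ℝ) / (j + 1) ≤ 1 / (J + 1) := by
          apply one_div_le_one_div_of_le
          · positivity
          · exact_mod_cast add_le_add_left (Nat.cast_le.2 hj) 1
        calc dist (infDist x B) (infDist (u (φ j)) B) ≤ dist x (u (φ j)) := h1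
          _ < 1 / (j + 1) := hφ j
          _ ≤ 1 / (J + 1) := h2
          _ < ε := hJ
      exact huc.continuous (Filter.Frequently.of_forall fun j =>
        (continuous_apply (φ j)).comp continuous_subtype_val)
    let hom : WijsmanHyperspace X ≃ₜ SW u :=
      { e with continuous_toFun := hcontF, continuous_invFun := hconte }
    haveI : PolishSpace (SW u : Set (ℕ → ℝ)) := myGdeltaPolish (SW_isGδ u)
    exact hom.isClosedEmbedding.polishSpace
end

section
/- For every Tychonoff (completely regular Hausdorff) topological space Y, there exist a complete metric space (X,d) in which every point has an open neighbourhood homeomorphic to the real line ℝ, and a closed embedding of Y into the Wijsman hyperspace (2^X, T_{W(d)}). -/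
universe u
namespace S14
variable (Y : Type u) [TopologicalSpace Y]

def CW : Type u := {w : Y → ℝ // Continuous w ∧ ∀ y, 0 ≤ w y ∧ w y ≤ 1}

def SN : Type u := {N : Set (CW Y) // ∀ y : Y, ∀ ε : ℝ, 0 < ε → ∃ w ∈ N, w.1 y < ε}

def Idx : Type u := (CW Y ⊕ CW Y) ⊕ SN Y

@[ext]
structure XX : Type u where
  idx : Idx Y
  ht : ℝ

def hgt : Idx Y → Y → ℝ
  | .inl (.inl g) => fun y => 7 + g.1 y
  | .inl (.inr w) => fun y => 3 * w.1 y
  | .inr _        => fun _ => 7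

def kap : Idx Y → ℝ
  | .inl _ => 2
  | .inr _ => 1

def rel : Idx Y → Idx Y → Prop
  | .inl (.inr w), .inr N => w ∈ N.1
  | .inr N, .inl (.inr w) => w ∈ N.1
  | _, _ => False

open Classical in
noncomputable def rho : Idx Y → Idx Y → ℝ := fun a b =>
  if a = b then 0 else if rel Y a b then 1 else 2

open Classical in
noncomputable def dd : XX Y → XX Y → ℝ := fun p q =>
  if p.idx = q.idx then |p.ht - q.ht| else |p.ht| + rho Y p.idx q.idx + |q.ht|


variable {Y}

lemma rel_symm (a b : Idx Y) : rel Y a b → rel Y b a := by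
  intro h
  rcases a with (g|w)|N <;> rcases b with (g'|w')|N' <;> simp [rel] at h ⊢ <;> exact h

lemma rho_self (a : Idx Y) : rho Y a a = 0 := by simp [rho]

lemma rho_comm (a b : Idx Y) : rho Y a b = rho Y b a := by
  classical
  rcases eq_or_ne a b with rfl | h
  · rfl
  · have h' : b ≠ a := h.symm
    by_cases hr : rel Y a b
    · have hr' : rel Y b a := rel_symm _ _ hr
      simp [rho, h, h', hr, hr']
    · have hr' : ¬ rel Y b a := fun hh => hr (rel_symm _ _ hh)
      simp [rho, h, h', hr, hr']

lemma rho_nonneg (a b : Idx Y) : 0 ≤ rho Y a b := by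
  unfold rho; split
  · exact le_refl 0
  · split <;> norm_num

lemma one_le_rho {a b : Idx Y} (h : a ≠ b) : 1 ≤ rho Y a b := by
  unfold rho; rw [if_neg h]; split <;> norm_num

lemma rho_le_two (a b : Idx Y) : rho Y a b ≤ 2 := by
  unfold rho; split
  · norm_num
  · split <;> norm_num


lemma rho_triangle (a b c : Idx Y) : rho Y a b ≤ rho Y a c + rho Y c b := by
  rcases eq_or_ne a b with rfl | hab
  · rw [rho_self]
    have h1 := rho_nonneg (Y := Y) a c
    have h2 := rho_nonneg (Y := Y) c a
    linarith
  · rcases eq_or_ne c a with rfl | hca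
    · rw [rho_self]; linarith
    · rcases eq_or_ne c b with rfl | hcb
      · rw [rho_self]; linarith
      · have h1 : 1 ≤ rho Y a c := one_le_rho (fun h => hca h.symm)
        have h2 : 1 ≤ rho Y c b := one_le_rho hcb
        have h3 := rho_le_two (Y := Y) a b
        linarith

lemma abs_sub_le_abs_add_abs (s t : ℝ) : |s - t| ≤ |s| + |t| := by
  calc |s - t| = |s + -t| := by rw [sub_eq_add_neg]
  _ ≤ |s| + |-t| := abs_add_le _ _
  _ = |s| + |t| := by rw [abs_neg]

lemma abs_le_abs_sub_add_abs (s u : ℝ) : |s| ≤ |s - u| + |u| := by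
  have : s = (s - u) + u := by ring
  calc |s| = |(s - u) + u| := by rw [← this]
  _ ≤ |s - u| + |u| := abs_add_le _ _

noncomputable instance : MetricSpace (XX Y) where
  dist := dd Y
  dist_self p := by
    show dd Y p p = 0
    simp [dd]
  dist_comm p q := by
    show dd Y p q = dd Y q p
    unfold dd
    rcases eq_or_ne p.idx q.idx with h | h
    · rw [if_pos h, if_pos h.symm, abs_sub_comm]
    · rw [if_neg h, if_neg h.symm, rho_comm]; ring
  dist_triangle p r q := by
    show dd Y p q ≤ dd Y p r + dd Y r q
    unfold dd
    rcases eq_or_ne p.idx q.idx with hpq | hpq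
    · rcases eq_or_ne p.idx r.idx with hpr | hpr
      · have hrq : r.idx = q.idx := hpr ▸ hpq
        rw [if_pos hpq, if_pos hpr, if_pos hrq]
        exact abs_sub_le _ _ _
      · have hrq : r.idx ≠ q.idx := fun h => hpr (hpq.trans h.symm)
        rw [if_pos hpq, if_neg hpr, if_neg hrq]
        have h1 := one_le_rho (Y := Y) hpr
        have h2 := one_le_rho (Y := Y) hrq
        have h3 := abs_sub_le_abs_add_abs p.ht q.ht
        have h4 := abs_nonneg r.ht
        linarith
    · rcases eq_or_ne p.idx r.idx with hpr | hpr
      · have hrq : r.idx ≠ q.idx := fun h => hpq (hpr.trans h)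
        rw [if_neg hpq, if_pos hpr, if_neg hrq]
        have h3 := abs_le_abs_sub_add_abs p.ht r.ht
        have : rho Y p.idx q.idx = rho Y r.idx q.idx := by rw [hpr]
        rw [this]; linarith
      · rcases eq_or_ne r.idx q.idx with hrq | hrq
        · rw [if_neg hpq, if_neg hpr, if_pos hrq]
          have h3 := abs_le_abs_sub_add_abs q.ht r.ht
          have : rho Y p.idx q.idx = rho Y p.idx r.idx := by rw [hrq]
          rw [this]
          have h4 := abs_sub_comm r.ht q.ht
          rw [← h4] at h3
          linarith
        · rw [if_neg hpq, if_neg hpr, if_neg hrq]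
          have h1 := rho_triangle (Y := Y) p.idx q.idx r.idx
          have h4 := abs_nonneg r.ht
          linarith
  eq_of_dist_eq_zero := by
    intro p q h
    replace h : dd Y p q = 0 := h
    unfold dd at h
    rcases eq_or_ne p.idx q.idx with hpq | hpq
    · rw [if_pos hpq] at h
      have : p.ht = q.ht := by
        have := abs_eq_zero.mp h
        linarith
      exact XX.ext hpq this
    · exfalso
      rw [if_neg hpq] at h
      have h1 := one_le_rho (Y := Y) hpq
      have h2 := abs_nonneg p.ht
      have h3 := abs_nonneg q.ht
      linarith

lemma dist_def (p q : XX Y) : dist p q = dd Y p q := rfl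

lemma one_le_dist_of_ne {p q : XX Y} (h : p.idx ≠ q.idx) : 1 ≤ dist p q := by
  rw [dist_def]
  unfold dd
  rw [if_neg h]
  have h1 := one_le_rho (Y := Y) h
  have h2 := abs_nonneg p.ht
  have h3 := abs_nonneg q.ht
  linarith

lemma dist_same_line {a : Idx Y} (s t : ℝ) : dist (XX.mk a s) (XX.mk a t) = |s - t| := by
  rw [dist_def]; unfold dd; rw [if_pos rfl]

lemma dist_cross {a b : Idx Y} (h : a ≠ b) (s t : ℝ) :
    dist (XX.mk a s) (XX.mk b t) = |s| + rho Y a b + |t| := by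
  rw [dist_def]; unfold dd; rw [if_neg h]


lemma ht_lipschitz (p q : XX Y) : |p.ht - q.ht| ≤ dist p q := by
  rw [dist_def]; unfold dd
  rcases eq_or_ne p.idx q.idx with h | h
  · rw [if_pos h]
  · rw [if_neg h]
    have h1 := rho_nonneg (Y := Y) p.idx q.idx
    have h2 := abs_sub_le_abs_add_abs p.ht q.ht
    linarith

instance : CompleteSpace (XX Y) := by
  apply Metric.complete_of_cauchySeq_tendsto
  intro u hu
  obtain ⟨N, hN⟩ := Metric.cauchySeq_iff.mp hu 1 one_pos
  have hline : ∀ n, N ≤ n → (u n).idx = (u N).idx := by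
    intro n hn
    by_contra h
    exact absurd (hN n hn N le_rfl) (not_lt.mpr (one_le_dist_of_ne h))
  have hw : CauchySeq (fun n => (u n).ht) := by
    rw [Metric.cauchySeq_iff]
    intro ε hε
    obtain ⟨M, hM⟩ := Metric.cauchySeq_iff.mp hu ε hε
    refine ⟨M, fun m hm n hn => ?_⟩
    calc dist (u m).ht (u n).ht = |(u m).ht - (u n).ht| := Real.dist_eq _ _
    _ ≤ dist (u m) (u n) := ht_lipschitz _ _
    _ < ε := hM m hm n hn
  obtain ⟨r, hr⟩ := cauchySeq_tendsto_of_complete hw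
  refine ⟨⟨(u N).idx, r⟩, ?_⟩
  rw [Metric.tendsto_atTop]
  intro ε hε
  obtain ⟨M, hM⟩ := (Metric.tendsto_atTop.mp hr) ε hε
  refine ⟨max N M, fun n hn => ?_⟩
  have h1 : (u n).idx = (u N).idx := hline n (le_trans (le_max_left _ _) hn)
  have : dist (u n) ⟨(u N).idx, r⟩ = |(u n).ht - r| := by
    rw [dist_def]; unfold dd; rw [if_pos h1]
  rw [this]
  have := hM n (le_trans (le_max_right _ _) hn)
  rwa [Real.dist_eq] at this

def line (a : Idx Y) : Set (XX Y) := {p | p.idx = a}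

lemma isOpen_line (a : Idx Y) : IsOpen (line (Y := Y) a) := by
  rw [Metric.isOpen_iff]
  intro p hp
  refine ⟨1, one_pos, fun q hq => ?_⟩
  rw [Metric.mem_ball] at hq
  by_contra h
  have hne : q.idx ≠ p.idx := by
    intro hh
    exact h (show q.idx = a from hh.trans hp)
  exact absurd hq (not_lt.mpr (one_le_dist_of_ne hne))

noncomputable def lineHomeo (a : Idx Y) : (line (Y := Y) a) ≃ₜ ℝ where
  toFun p := p.1.ht
  invFun t := ⟨⟨a, t⟩, rfl⟩
  left_inv p := by
    obtain ⟨⟨i, t⟩, hi⟩ := p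
    have : i = a := hi
    subst this
    rfl
  right_inv t := rfl
  continuous_toFun := by
    have hc : Continuous (fun p : XX Y => p.ht) := by
      apply LipschitzWith.continuous (K := 1)
      apply LipschitzWith.of_dist_le_mul
      intro p q
      rw [Real.dist_eq]
      calc |p.ht - q.ht| ≤ dist p q := ht_lipschitz p q
      _ = 1 * dist p q := (one_mul _).symm
    exact hc.comp continuous_subtype_val
  continuous_invFun := by
    apply Continuous.subtype_mk
    have : Isometry (fun t : ℝ => (⟨a, t⟩ : XX Y)) := by
      apply Isometry.of_dist_eq
      intro t s
      rw [dist_same_line, Real.dist_eq]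
    exact this.continuous


def cconst (k : ℝ) (h0 : 0 ≤ k) (h1 : k ≤ 1) : CW Y :=
  ⟨fun _ => k, continuous_const, fun _ => ⟨h0, h1⟩⟩

lemma hgt_nonneg (a : Idx Y) (y : Y) : 0 ≤ hgt Y a y := by
  rcases a with (g|w)|N
  · have := (g.2.2 y).1; simp only [hgt]; linarith
  · have := (w.2.2 y).1; simp only [hgt]; linarith
  · simp only [hgt]; norm_num

lemma one_le_kap (a : Idx Y) : 1 ≤ kap Y a := by
  rcases a with (g|w)|N <;> simp [kap]

lemma kap_le_two (a : Idx Y) : kap Y a ≤ 2 := by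
  rcases a with (g|w)|N <;> simp [kap]

lemma rho_eq_one {a b : Idx Y} (h : a ≠ b) (hr : rel Y a b) : rho Y a b = 1 := by
  unfold rho; rw [if_neg h, if_pos hr]

lemma rho_eq_two {a b : Idx Y} (h : a ≠ b) (hr : ¬ rel Y a b) : rho Y a b = 2 := by
  unfold rho; rw [if_neg h, if_neg hr]

lemma cross_lower (y : Y) {a b : Idx Y} (h : a ≠ b) :
    kap Y a ≤ rho Y a b + hgt Y b y := by
  have hb := hgt_nonneg b y
  rcases a with (g|w)|N
  · rcases b with (g'|w')|N'
    · have : ¬ rel Y (Sum.inl (Sum.inl g)) (Sum.inl (Sum.inl g')) := by simp [rel]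
      rw [rho_eq_two h this]; simp only [kap]; linarith
    · have : ¬ rel Y (Sum.inl (Sum.inl g)) (Sum.inl (Sum.inr w')) := by simp [rel]
      rw [rho_eq_two h this]; simp only [kap]; linarith
    · have : ¬ rel Y (Sum.inl (Sum.inl g)) (Sum.inr N') := by simp [rel]
      rw [rho_eq_two h this]; simp only [kap]; linarith
  · rcases b with (g'|w')|N'
    · have : ¬ rel Y (Sum.inl (Sum.inr w)) (Sum.inl (Sum.inl g')) := by simp [rel]
      rw [rho_eq_two h this]; simp only [kap]; linarith
    · have : ¬ rel Y (Sum.inl (Sum.inr w)) (Sum.inl (Sum.inr w')) := by simp [rel]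
      rw [rho_eq_two h this]; simp only [kap]; linarith
    · have h1 := one_le_rho (Y := Y) h
      have h7 : hgt Y (Sum.inr N') y = 7 := rfl
      rw [h7]; simp only [kap]; linarith
  · have h1 := one_le_rho (Y := Y) h
    simp only [kap]; linarith

lemma ne_inl_inl {g : CW Y} {b : Idx Y} (h : ∀ g', b ≠ Sum.inl (Sum.inl g')) :
    b ≠ Sum.inl (Sum.inl g) := h g

lemma cross_upper (y : Y) (a : Idx Y) {ε : ℝ} (hε : 0 < ε) :
    ∃ b : Idx Y, b ≠ a ∧ rho Y a b + hgt Y b y < kap Y a + ε := by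
  have hW : ∀ (w : CW Y) (c : CW Y), (Sum.inl (Sum.inr c) : Idx Y) ≠ Sum.inl (Sum.inr w) →
      rho Y (Sum.inl (Sum.inr w)) (Sum.inl (Sum.inr c)) = 2 := by
    intro w c hne
    have hne' : (Sum.inl (Sum.inr w) : Idx Y) ≠ Sum.inl (Sum.inr c) := fun h => hne h.symm
    have hnr : ¬ rel Y (Sum.inl (Sum.inr w)) (Sum.inl (Sum.inr c)) := by simp [rel]
    exact rho_eq_two hne' hnr
  set k := min (ε/6) 1 with hk
  have hk0' : 0 < k := lt_min (by linarith) one_pos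
  have hk0 : 0 ≤ k := le_of_lt hk0'
  have hk1 : k ≤ 1 := min_le_right _ _
  have hk2 : 3 * k < ε := by
    have : k ≤ ε/6 := min_le_left _ _
    linarith
  have hk0h : 0 ≤ k/2 := by linarith
  have hk1h : k/2 ≤ 1 := by linarith
  rcases a with (g|w)|N
  · -- graph line
    refine ⟨Sum.inl (Sum.inr (cconst k hk0 hk1)), ?_, ?_⟩
    · intro h
      injection h with h2
      injection h2
    · have hne : (Sum.inl (Sum.inl g) : Idx Y) ≠ Sum.inl (Sum.inr (cconst k hk0 hk1)) := by
        intro h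
        injection h with h2
        injection h2
      have hnr : ¬ rel Y (Sum.inl (Sum.inl g)) (Sum.inl (Sum.inr (cconst k hk0 hk1))) := by
        simp [rel]
      rw [rho_eq_two hne hnr]
      show 2 + 3 * k < 2 + ε
      linarith
  · -- witness line: pick a constant different from w
    have hdistinct : (cconst (Y := Y) k hk0 hk1) ≠ cconst (k/2) hk0h hk1h := by
      intro hcc
      have h2 := congrFun (congrArg (fun c : CW Y => c.1) hcc) y
      simp only [cconst] at h2
      linarith
    have hpick : ∃ c : CW Y, c ≠ w ∧ ∀ z, c.1 z ≤ k := by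
      by_cases hw : (cconst (Y := Y) k hk0 hk1) = w
      · exact ⟨cconst (k/2) hk0h hk1h, fun h => hdistinct (hw.symm ▸ h.symm ▸ rfl), fun z => by
          show k/2 ≤ k; linarith⟩
      · exact ⟨cconst k hk0 hk1, hw, fun z => le_refl k⟩
    obtain ⟨c, hc, hck⟩ := hpick
    have hbne : (Sum.inl (Sum.inr c) : Idx Y) ≠ Sum.inl (Sum.inr w) := by
      intro h
      injection h with h2
      injection h2 with h3
      exact hc h3
    refine ⟨Sum.inl (Sum.inr c), hbne, ?_⟩
    rw [hW w c hbne]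
    show 2 + 3 * c.1 y < 2 + ε
    have := hck y
    linarith
  · -- sensor line
    obtain ⟨w, hwN, hwy⟩ := N.2 y (ε/3) (by linarith)
    have hne : (Sum.inr N : Idx Y) ≠ Sum.inl (Sum.inr w) := by
      intro h
      injection h
    refine ⟨Sum.inl (Sum.inr w), fun h => hne h.symm, ?_⟩
    have hr : rel Y (Sum.inr N) (Sum.inl (Sum.inr w)) := hwN
    rw [rho_eq_one hne hr]
    show 1 + 3 * w.1 y < 1 + ε
    linarith


noncomputable def Aset (y : Y) : Set (XX Y) := Set.range fun a => XX.mk a (hgt Y a y)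

lemma Aset_nonempty (y : Y) : (Aset y).Nonempty :=
  ⟨XX.mk (Sum.inl (Sum.inl (cconst 0 le_rfl zero_le_one)))
      (hgt Y (Sum.inl (Sum.inl (cconst 0 le_rfl zero_le_one))) y), ⟨_, rfl⟩⟩

lemma Aset_closed (y : Y) : IsClosed (Aset y) := by
  rw [← isOpen_compl_iff, Metric.isOpen_iff]
  rintro ⟨a, t⟩ hp
  have hne : t ≠ hgt Y a y := by
    intro h
    exact hp ⟨a, by rw [h]⟩
  set r := min (|t - hgt Y a y|) 1 with hr
  have hr0 : 0 < r := by
    apply lt_min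
    · exact abs_pos.mpr (sub_ne_zero.mpr hne)
    · exact one_pos
  refine ⟨r, hr0, ?_⟩
  rintro q hq hmem
  obtain ⟨b, hb⟩ := hmem
  rw [Metric.mem_ball] at hq
  rcases eq_or_ne b a with rfl | hba
  · rw [← hb] at hq
    rw [dist_same_line] at hq
    have : r ≤ |hgt Y b y - t| := by
      rw [abs_sub_comm]
      exact min_le_left _ _
    linarith
  · rw [← hb] at hq
    have h1 : (1:ℝ) ≤ dist (XX.mk b (hgt Y b y)) (XX.mk a t) := one_le_dist_of_ne hba
    have h2 : r ≤ 1 := min_le_right _ _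
    linarith

lemma le_infDist_of_forall {s : Set (XX Y)} {x : XX Y} {b : ℝ} (hs : s.Nonempty)
    (h : ∀ p ∈ s, b ≤ dist x p) : b ≤ Metric.infDist x s := by
  by_contra hlt
  push_neg at hlt
  obtain ⟨p, hp, hd⟩ := (Metric.infDist_lt_iff hs).mp hlt
  exact absurd hd (not_lt.mpr (h p hp))

lemma infDist_Aset (y : Y) (a : Idx Y) (t : ℝ) :
    Metric.infDist (XX.mk a t) (Aset y) = min (|t - hgt Y a y|) (|t| + kap Y a) := by
  apply le_antisymm
  · apply le_min
    · have : XX.mk a (hgt Y a y) ∈ Aset y := ⟨a, rfl⟩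
      calc Metric.infDist (XX.mk a t) (Aset y) ≤ dist (XX.mk a t) (XX.mk a (hgt Y a y)) :=
            Metric.infDist_le_dist_of_mem this
      _ = |t - hgt Y a y| := dist_same_line _ _
    · apply le_of_forall_pos_le_add
      intro ε hε
      obtain ⟨b, hba, hbb⟩ := cross_upper y a hε
      have hmem : XX.mk b (hgt Y b y) ∈ Aset y := ⟨b, rfl⟩
      calc Metric.infDist (XX.mk a t) (Aset y) ≤ dist (XX.mk a t) (XX.mk b (hgt Y b y)) :=
            Metric.infDist_le_dist_of_mem hmem
      _ = |t| + rho Y a b + |hgt Y b y| := dist_cross (fun h => hba h.symm) _ _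
      _ = |t| + (rho Y a b + hgt Y b y) := by rw [abs_of_nonneg (hgt_nonneg b y)]; ring
      _ ≤ |t| + (kap Y a + ε) := by linarith
      _ = |t| + kap Y a + ε := by ring
  · apply le_infDist_of_forall (Aset_nonempty y)
    rintro p ⟨b, hb⟩
    rw [← hb]
    rcases eq_or_ne b a with rfl | hba
    · rw [dist_same_line]
      calc min (|t - hgt Y b y|) (|t| + kap Y b) ≤ |t - hgt Y b y| := min_le_left _ _
      _ = |t - hgt Y b y| := rfl
    · rw [dist_cross (fun h => hba h.symm)]
      have h1 := cross_lower y (fun h => hba h.symm)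
      have h2 : |hgt Y b y| = hgt Y b y := abs_of_nonneg (hgt_nonneg b y)
      calc min (|t - hgt Y a y|) (|t| + kap Y a) ≤ |t| + kap Y a := min_le_right _ _
      _ ≤ |t| + rho Y a b + |hgt Y b y| := by rw [h2]; linarith


noncomputable def femb (y : Y) : WijsmanHyperspace (XX Y) :=
  ⟨Aset y, Aset_nonempty y, Aset_closed y⟩

variable (Y) in
noncomputable def psi : WijsmanHyperspace (XX Y) → (XX Y → ℝ) :=
  fun A x => Metric.infDist x A.1

lemma continuous_psi : Continuous (psi Y) := continuous_induced_dom

lemma psi_femb (y : Y) (x : XX Y) :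
    psi Y (femb y) x = min (|x.ht - hgt Y x.idx y|) (|x.ht| + kap Y x.idx) := by
  show Metric.infDist x (Aset y) = _
  have hx : x = XX.mk x.idx x.ht := rfl
  rw [hx, infDist_Aset]

lemma continuous_hgt (a : Idx Y) : Continuous (fun y => hgt Y a y) := by
  rcases a with (g|w)|N
  · exact continuous_const.add g.2.1
  · exact continuous_const.mul w.2.1
  · exact continuous_const

lemma continuous_femb : Continuous (femb (Y := Y)) := by
  rw [continuous_induced_rng]
  apply continuous_pi
  intro x
  have heq : (fun y => ((fun A (x : XX Y) => Metric.infDist x A.1) ∘ femb) y x)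
      = fun y => min (|x.ht - hgt Y x.idx y|) (|x.ht| + kap Y x.idx) := by
    funext y
    exact psi_femb y x
  show Continuous (fun y => ((fun A (x : XX Y) => Metric.infDist x A.1) ∘ femb) y x)
  rw [heq]
  exact Continuous.min ((continuous_const.sub (continuous_hgt x.idx)).abs) continuous_const


lemma exists_sep [CompletelyRegularSpace Y] {y : Y} {U : Set Y} (hU : IsOpen U) (hy : y ∈ U) :
    ∃ g : CW Y, g.1 y = 1 ∧ ∀ z ∉ U, g.1 z = 0 := by
  obtain ⟨f, cf, hfy, hfK⟩ := CompletelyRegularSpace.completely_regular y Uᶜ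
    hU.isClosed_compl (by simp [hy])
  refine ⟨⟨fun z => 1 - (f z : ℝ), by
      exact continuous_const.sub (continuous_subtype_val.comp cf), fun z => ?_⟩, ?_, ?_⟩
  · constructor
    · have := (f z).2.2
      simp only []
      linarith
    · have := (f z).2.1
      simp only []
      linarith
  · show 1 - ((f y : ℝ)) = 1
    rw [hfy]
    norm_num
  · intro z hz
    show 1 - ((f z : ℝ)) = 0
    have : f z = 1 := hfK hz
    rw [this]
    norm_num

lemma hgt_eq_of_femb_eq {y y' : Y} (h : femb y = femb y') (a : Idx Y) :
    hgt Y a y = hgt Y a y' := by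
  have hA : Aset y = Aset y' := congrArg Subtype.val h
  have hm : XX.mk a (hgt Y a y) ∈ Aset y' := by
    rw [← hA]
    exact ⟨a, rfl⟩
  obtain ⟨b, hb⟩ := hm
  have hidx : b = a := congrArg XX.idx hb
  subst hidx
  exact (congrArg XX.ht hb).symm

lemma injective_femb [CompletelyRegularSpace Y] [T2Space Y] :
    Function.Injective (femb (Y := Y)) := by
  intro y y' h
  by_contra hne
  have hU : IsOpen ({y'}ᶜ : Set Y) := isOpen_compl_singleton
  obtain ⟨g, hg1, hg0⟩ := exists_sep hU (by simpa using hne)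
  have := hgt_eq_of_femb_eq h (Sum.inl (Sum.inl g))
  have h1 : hgt Y (Sum.inl (Sum.inl g)) y = 7 + g.1 y := rfl
  have h2 : hgt Y (Sum.inl (Sum.inl g)) y' = 7 + g.1 y' := rfl
  rw [h1, h2, hg1] at this
  have h3 : g.1 y' = 0 := hg0 y' (by simp)
  rw [h3] at this
  norm_num at this

lemma inducing_femb [CompletelyRegularSpace Y] : Topology.IsInducing (femb (Y := Y)) := by
  rw [Topology.isInducing_iff_nhds]
  intro y
  apply le_antisymm
  · exact (continuous_femb.tendsto y).le_comap
  · intro U hU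
    rw [Filter.mem_comap]
    obtain ⟨V, hVU, hVopen, hyV⟩ := mem_nhds_iff.mp hU
    obtain ⟨g, hg1, hg0⟩ := exists_sep hVopen hyV
    set x₀ : XX Y := XX.mk (Sum.inl (Sum.inl g)) 8 with hx₀
    refine ⟨{A | psi Y A x₀ < 1/2}, ?_, ?_⟩
    · apply IsOpen.mem_nhds
      · have hcont : Continuous (fun A : WijsmanHyperspace (XX Y) => psi Y A x₀) :=
          (continuous_apply x₀).comp continuous_psi
        exact isOpen_Iio.preimage hcont
      · show psi Y (femb y) x₀ < 1/2
        rw [psi_femb]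
        have : hgt Y x₀.idx y = 7 + g.1 y := rfl
        rw [this, hg1]
        norm_num
    · intro z hz
      simp only [Set.mem_preimage, Set.mem_setOf_eq] at hz
      rw [psi_femb] at hz
      have h7 : hgt Y x₀.idx z = 7 + g.1 z := rfl
      rw [h7] at hz
      apply hVU
      by_contra hzV
      rw [hg0 z hzV] at hz
      have hk : kap Y x₀.idx = 2 := rfl
      rw [hk] at hz
      norm_num at hz


section Closed
variable {B : WijsmanHyperspace (XX Y)} {U : Ultrafilter Y}

lemma closed_range_femb : IsClosed (Set.range (femb (Y := Y))) := by
  apply isClosed_of_closure_subset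
  intro B hB
  have hne : Filter.NeBot (Filter.comap femb (nhds B)) := by
    rw [Filter.comap_neBot_iff]
    intro V hV
    obtain ⟨x, hx1, hx2⟩ := mem_closure_iff_nhds.mp hB V hV
    obtain ⟨y, rfl⟩ := hx2
    exact ⟨y, hx1⟩
  set U := Ultrafilter.of (Filter.comap femb (nhds B)) with hU
  have hUtend : Filter.Tendsto femb (U : Filter Y) (nhds B) := by
    calc Filter.map femb ↑U ≤ Filter.map femb (Filter.comap femb (nhds B)) :=
          Filter.map_mono (Ultrafilter.of_le _)
    _ ≤ nhds B := Filter.map_comap_le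
  -- limits of witness functions along U
  have halpha : ∀ w : CW Y, ∃ r : ℝ, 0 ≤ r ∧ r ≤ 1 ∧
      Filter.Tendsto (fun y => w.1 y) ↑U (nhds r) := by
    intro w
    have hIccmem : Set.Icc (0:ℝ) 1 ∈ Ultrafilter.map w.1 U := by
      apply Filter.mem_map.mpr
      have hpre : (fun y => w.1 y) ⁻¹' (Set.Icc 0 1) = Set.univ := by
        ext z
        simp [Set.mem_preimage, (w.2.2 z).1, (w.2.2 z).2]
      rw [hpre]
      exact Filter.univ_mem
    obtain ⟨r, hrmem, hrle⟩ := isCompact_Icc.ultrafilter_le_nhds (Ultrafilter.map w.1 U)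
      (Filter.le_principal_iff.mpr hIccmem)
    refine ⟨r, hrmem.1, hrmem.2, ?_⟩
    have := hrle
    rw [Ultrafilter.coe_map] at this
    exact this
  choose alpha halpha0 halpha1 halphat using halpha
  set L : Idx Y → ℝ := fun a => match a with
    | .inl (.inl g) => 7 + alpha g
    | .inl (.inr w) => 3 * alpha w
    | .inr _ => 7
    with hL
  have hLt : ∀ a : Idx Y, Filter.Tendsto (fun y => hgt Y a y) ↑U (nhds (L a)) := by
    intro a
    rcases a with (g|w)|N
    · exact tendsto_const_nhds.add (halphat g)
    · exact tendsto_const_nhds.mul (halphat w)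
    · exact tendsto_const_nhds
  have hfun : ∀ x : XX Y, Metric.infDist x B.1 =
      min (|x.ht - L x.idx|) (|x.ht| + kap Y x.idx) := by
    intro x
    have h1 : Filter.Tendsto (fun y => psi Y (femb y) x) ↑U (nhds (Metric.infDist x B.1)) := by
      have hc : Continuous (fun A : WijsmanHyperspace (XX Y) => psi Y A x) :=
        (continuous_apply x).comp continuous_psi
      exact (hc.continuousAt.tendsto).comp hUtend
    have h2 : Filter.Tendsto (fun y => psi Y (femb y) x) ↑U
        (nhds (min (|x.ht - L x.idx|) (|x.ht| + kap Y x.idx))) := by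
      have heq : (fun y => psi Y (femb y) x)
          = fun y => min (|x.ht - hgt Y x.idx y|) (|x.ht| + kap Y x.idx) := by
        funext y
        exact psi_femb y x
      rw [heq]
      exact Filter.Tendsto.min ((tendsto_const_nhds.sub (hLt x.idx)).abs) tendsto_const_nhds
    exact tendsto_nhds_unique h1 h2
  have hmemB : ∀ a : Idx Y, XX.mk a (L a) ∈ B.1 := by
    intro a
    rw [B.2.2.mem_iff_infDist_zero B.2.1]
    rw [hfun]
    have h0 : |(XX.mk a (L a)).ht - L (XX.mk a (L a)).idx| = 0 := by
      show |L a - L a| = 0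
      simp
    rw [h0]
    apply min_eq_left
    have := abs_nonneg (XX.mk a (L a)).ht
    have := one_le_kap (Y := Y) (XX.mk a (L a)).idx
    linarith
  have honly : ∀ (a : Idx Y) (s : ℝ), XX.mk a s ∈ B.1 → s = L a := by
    intro a s hs
    have h0 : Metric.infDist (XX.mk a s) B.1 = 0 := Metric.infDist_zero_of_mem hs
    rw [hfun] at h0
    have h0' : min (|s - L a|) (|s| + kap Y a) = 0 := h0
    have hk := one_le_kap (Y := Y) a
    have habs := abs_nonneg s
    rcases min_eq_iff.mp h0' with ⟨h1, _⟩ | ⟨h1, _⟩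
    · have := abs_eq_zero.mp h1
      linarith
    · exfalso
      linarith
  by_cases hexists : ∃ y : Y, ∀ w : CW Y, alpha w = w.1 y
  · obtain ⟨y, hy⟩ := hexists
    refine ⟨y, ?_⟩
    apply Subtype.ext
    show Aset y = B.1
    have hLH : ∀ a : Idx Y, L a = hgt Y a y := by
      intro a
      rcases a with (g|w)|N
      · show 7 + alpha g = 7 + g.1 y
        rw [hy g]
      · show 3 * alpha w = 3 * w.1 y
        rw [hy w]
      · rfl
    ext p
    constructor
    · rintro ⟨a, rfl⟩
      have := hmemB a
      rwa [hLH a] at this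
    · intro hp
      have hpe : p.ht = L p.idx := honly p.idx p.ht hp
      refine ⟨p.idx, ?_⟩
      show XX.mk p.idx (hgt Y p.idx y) = p
      rw [← hLH p.idx, ← hpe]
  · exfalso
    push_neg at hexists
    choose wY hwY using hexists
    have hv : ∀ y : Y, ∃ vv : CW Y, vv.1 y = 0 ∧
        Filter.Tendsto (fun z => vv.1 z) ↑U (nhds 1) := by
      intro y
      have hac : alpha (wY y) ≠ (wY y).1 y := hwY y
      set w := wY y with hw
      set c := w.1 y with hc
      set D := |alpha w - c| with hD
      have hD0 : 0 < D := abs_pos.mpr (sub_ne_zero.mpr hac)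
      have hcont : Continuous (fun t : ℝ => min 1 (|t - c| / D)) := by
        apply continuous_const.min
        exact ((continuous_id.sub continuous_const).abs).div_const D
      refine ⟨⟨fun z => min 1 (|w.1 z - c| / D), hcont.comp w.2.1, fun z => ⟨?_, ?_⟩⟩, ?_, ?_⟩
      · apply le_min
        · norm_num
        · positivity
      · exact min_le_left _ _
      · show min 1 (|w.1 y - c| / D) = 0
        rw [← hc, sub_self, abs_zero, zero_div]
        simp
      · have h1 : Filter.Tendsto (fun z => min 1 (|w.1 z - c| / D)) ↑U
            (nhds (min 1 (|alpha w - c| / D))) :=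
          (hcont.continuousAt.tendsto).comp (halphat w)
        have h2 : min 1 (|alpha w - c| / D) = 1 := by
          rw [← hD, div_self (ne_of_gt hD0)]
          simp
        rwa [h2] at h1
    choose v hv0 hv1 using hv
    set NN : SN Y := ⟨Set.range v, by
      intro y ε hε
      exact ⟨v y, ⟨y, rfl⟩, by rw [hv0 y]; exact hε⟩⟩ with hNN
    have hval : ∀ w, w ∈ NN.1 → alpha w = 1 := by
      rintro w ⟨y, rfl⟩
      exact tendsto_nhds_unique (halphat (v y)) (hv1 y)
    set x₀ : XX Y := XX.mk (Sum.inr NN) (-1) with hx0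
    have hlow : (3:ℝ) ≤ Metric.infDist x₀ B.1 := by
      apply le_infDist_of_forall B.2.1
      intro p hp
      obtain ⟨b, t⟩ := p
      have hpl : t = L b := honly b t hp
      subst hpl
      rcases eq_or_ne (Sum.inr NN : Idx Y) b with he | he
      · subst he
        rw [hx0, dist_same_line (a := (Sum.inr NN : Idx Y))]
        show (3:ℝ) ≤ |(-1) - 7|
        norm_num
      · rw [hx0, dist_cross he]
        by_cases hr : rel Y (Sum.inr NN) b
        · rcases b with (g|w)|N'
          · exact absurd hr (by simp [rel])
          · have hwm : w ∈ NN.1 := hr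
            rw [rho_eq_one he hr]
            have hLw : L (Sum.inl (Sum.inr w)) = 3 * alpha w := rfl
            rw [hLw, hval w hwm]
            norm_num
          · exact absurd hr (by simp [rel])
        · rw [rho_eq_two he hr]
          have := abs_nonneg (L b)
          have : |(-1:ℝ)| = 1 := by norm_num
          rw [this]
          have := abs_nonneg (L b)
          linarith
    have hup : Metric.infDist x₀ B.1 = 2 := by
      rw [hfun]
      show min (|(-1:ℝ) - L (Sum.inr NN)|) (|(-1:ℝ)| + kap Y (Sum.inr NN)) = 2
      have h7 : L (Sum.inr NN) = 7 := rfl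
      have hk1 : kap Y (Sum.inr NN) = 1 := rfl
      rw [h7, hk1]
      norm_num
    linarith

end Closed
end S14

/-- Cao et al.: every Tychonoff (completely regular Hausdorff) space embeds as a
closed subspace in the Wijsman hyperspace of some complete metric space which is
locally `ℝ` (every point has an open neighbourhood homeomorphic to `ℝ`). -/
theorem stmt14 (Y : Type u) [TopologicalSpace Y] [CompletelyRegularSpace Y]
    [T2Space Y] :
    ∃ (X : Type u) (m : MetricSpace X),
      letI := m
      CompleteSpace X ∧
      (∀ x : X, ∃ u : Set X, IsOpen u ∧ x ∈ u ∧ Nonempty (u ≃ₜ ℝ)) ∧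
      ∃ f : Y → WijsmanHyperspace X, Topology.IsClosedEmbedding f := by
  refine ⟨S14.XX Y, inferInstance, inferInstance, ?_, ?_⟩
  · intro x
    exact ⟨S14.line x.idx, S14.isOpen_line x.idx, rfl, ⟨S14.lineHomeo x.idx⟩⟩
  · exact ⟨S14.femb, ⟨⟨S14.inducing_femb, S14.injective_femb⟩, S14.closed_range_femb⟩⟩
end
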